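/- arXiv:2410.03664 — 4 statements merged into one kernel-verified Lean document; each statement's English description precedes it below -/
import Mathlib

section
/- The set of affine rational points of the elliptic curve O_5 : y^2 = x^3 + 22x^2 + 125x over ℚ consists of exactly one point; that is, {(x, y) ∈ ℚ × ℚ : y^2 = x^3 + 22x^2 + 125x} = {(0, 0)}. -/
private lemma prime5 : Prime (5 : ℤ) :=
  Int.prime_iff_natAbs_prime.mpr (by norm_num)

private lemma prime2 : Prime (2 : ℤ) :=
  Int.prime_iff_natAbs_prime.mpr (by norm_num)

/-- If no prime divides both `a` and `b`, and not both are zero, then they are coprime. -/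
private lemma coprime_of_no_prime {a b : ℤ} (h0 : ¬(a = 0 ∧ b = 0))
    (H : ∀ p : ℤ, Prime p → p ∣ a → p ∣ b → False) : IsCoprime a b := by
  rw [Int.isCoprime_iff_gcd_eq_one]
  by_contra hne
  rcases Nat.eq_zero_or_pos (Int.gcd a b) with hz | hpos
  · exact h0 ⟨Int.natAbs_eq_zero.mp (Nat.eq_zero_of_gcd_eq_zero_left hz),
      Int.natAbs_eq_zero.mp (Nat.eq_zero_of_gcd_eq_zero_right hz)⟩
  · obtain ⟨p, hp, hpd⟩ := Nat.exists_prime_and_dvd hne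
    have hdp : ((p : ℤ)) ∣ a := dvd_trans (Int.natCast_dvd_natCast.mpr hpd) (Int.gcd_dvd_left _ _)
    have hdp' : ((p : ℤ)) ∣ b := dvd_trans (Int.natCast_dvd_natCast.mpr hpd) (Int.gcd_dvd_right _ _)
    exact H p (Nat.prime_iff_prime_int.mp hp) hdp hdp'

/-- A prime dividing 5 is ±5; transfer divisibility. -/
private lemma five_dvd_of_prime_dvd {r x : ℤ} (hr : Prime r) (h5 : r ∣ (5:ℤ)) (hx : r ∣ x) :
    (5:ℤ) ∣ x := by
  have h1 : r.natAbs ∣ (5:ℤ).natAbs := Int.natAbs_dvd_natAbs.mpr h5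
  have h2 : r.natAbs = 5 :=
    (Nat.prime_dvd_prime_iff_eq (Int.prime_iff_natAbs_prime.mp hr) (by norm_num)).mp h1
  rcases Int.natAbs_eq r with h | h
  · rw [h2] at h; rw [h] at hx; exact_mod_cast hx
  · rw [h2] at h; rw [h] at hx
    have : -(5:ℤ) ∣ x := hx
    exact (neg_dvd).mp this

private lemma two_dvd_of_prime_dvd {r x : ℤ} (hr : Prime r) (h5 : r ∣ (2:ℤ)) (hx : r ∣ x) :
    (2:ℤ) ∣ x := by
  have h1 : r.natAbs ∣ (2:ℤ).natAbs := Int.natAbs_dvd_natAbs.mpr h5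
  have h2 : r.natAbs = 2 :=
    (Nat.prime_dvd_prime_iff_eq (Int.prime_iff_natAbs_prime.mp hr) (by norm_num)).mp h1
  rcases Int.natAbs_eq r with h | h
  · rw [h2] at h; rw [h] at hx; exact_mod_cast hx
  · rw [h2] at h; rw [h] at hx
    have : -(2:ℤ) ∣ x := hx
    exact (neg_dvd).mp this

/-- positive coprime factors of a square are squares -/
private lemma sq_sq {X Y c : ℤ} (hX : 0 < X) (hY : 0 < Y) (cop : IsCoprime X Y)
    (h : X * Y = c ^ 2) : ∃ p q : ℤ, 0 < p ∧ 0 < q ∧ X = p ^ 2 ∧ Y = q ^ 2 ∧ IsCoprime p q := by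
  obtain ⟨p0, hp0⟩ := Int.sq_of_isCoprime cop h
  obtain ⟨q0, hq0⟩ := Int.sq_of_isCoprime cop.symm (by rw [mul_comm]; exact h)
  have hpX : X = p0 ^ 2 := by
    rcases hp0 with h1 | h1
    · exact h1
    · exfalso; nlinarith [sq_nonneg p0]
  have hqY : Y = q0 ^ 2 := by
    rcases hq0 with h1 | h1
    · exact h1
    · exfalso; nlinarith [sq_nonneg q0]
  refine ⟨|p0|, |q0|, ?_, ?_, ?_, ?_, ?_⟩
  · rcases abs_pos.mpr (show p0 ≠ 0 by rintro rfl; simp at hpX; omega) with h; exact h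
  · rcases abs_pos.mpr (show q0 ≠ 0 by rintro rfl; simp at hqY; omega) with h; exact h
  · rw [← sq_abs] at hpX; exact hpX
  · rw [← sq_abs] at hqY; exact hqY
  · have cop' : IsCoprime (|p0| ^ 2) (|q0| ^ 2) := by
      rw [← sq_abs] at hpX hqY; rw [← hpX, ← hqY]; exact cop
    exact (IsCoprime.pow_iff (by norm_num) (by norm_num)).mp cop'

/-- positive coprime factors of a fourth power are fourth powers -/
private lemma quart_of_coprime {a b c : ℤ} (h : IsCoprime a b) (heq : a * b = c ^ 4)
    (ha : 0 < a) : ∃ d : ℤ, 0 < d ∧ a = d ^ 4 := by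
  have h' : IsUnit (gcd a b) := by
    rw [Int.isCoprime_iff_gcd_eq_one] at h
    rw [Int.isUnit_iff, ← Int.coe_gcd, h]
    left; rfl
  obtain ⟨d, u, hu⟩ := exists_associated_pow_of_mul_eq_pow h' heq
  rcases Int.units_eq_one_or u with h1 | h1 <;> rw [h1] at hu
  · simp only [Units.val_one, mul_one] at hu
    refine ⟨|d|, ?_, ?_⟩
    · rcases abs_pos.mpr (show d ≠ 0 by rintro rfl; simp at hu; omega) with h2; exact h2
    · have : |d| ^ 4 = |d ^ 4| := (abs_pow d 4).symm
      rw [this, hu, abs_of_pos ha]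
  · exfalso
    simp only [Units.val_neg, Units.val_one, mul_neg, mul_one] at hu
    nlinarith [sq_nonneg (d^2), sq_nonneg d]

private lemma T_split {g h2 P n : ℤ} (hg : 0 < g) (hh : 0 < h2) (cop : IsCoprime g h2)
    (h5 : ¬ (5:ℤ) ∣ g) (hprod : g * h2 = 125 * P ^ 4) (hP : 0 < P)
    (hsum : g + h2 = n ^ 2 - 22 * P ^ 2) :
    ∃ G K t : ℤ, 0 < G ∧ 0 < K ∧ IsCoprime G K ∧
      t ^ 2 = G ^ 4 + 22 * G ^ 2 * K ^ 2 + 125 * K ^ 4 ∧ P = G * K := by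
  have key : g * (5 * h2) = (5 * P) ^ 4 := by linear_combination 5 * hprod
  have cop_g5 : IsCoprime g (5:ℤ) := by
    apply coprime_of_no_prime (by rintro ⟨rfl, -⟩; exact lt_irrefl 0 hg)
    intro r hr hrg hr5
    exact h5 (five_dvd_of_prime_dvd hr hr5 hrg)
  have cop5 : IsCoprime g (5 * h2) := IsCoprime.mul_right cop_g5 cop
  obtain ⟨G, hGpos, hgG⟩ := quart_of_coprime cop5 key hg
  obtain ⟨K, hKpos, hKe⟩ := quart_of_coprime cop5.symm (by rw [mul_comm]; exact key)
    (by positivity)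
  have h5K : (5:ℤ) ∣ K := by
    apply prime5.dvd_of_dvd_pow (n := 4)
    rw [← hKe]; exact ⟨h2, rfl⟩
  obtain ⟨K₁, hK₁⟩ := h5K
  have hh2 : h2 = 125 * K₁ ^ 4 := by
    have h625 : 5 * h2 = 625 * K₁ ^ 4 := by rw [hKe, hK₁]; ring
    linarith
  have hK₁pos : 0 < K₁ := by nlinarith [pow_pos hh 1]
  have hGK4 : (G * K₁) ^ 4 = P ^ 4 := by
    have h125 : 125 * (G ^ 4 * (K₁ ^ 4)) = 125 * P ^ 4 := by
      rw [← hprod, hgG, hh2]; ring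
    have : G ^ 4 * K₁ ^ 4 = P ^ 4 := by linarith
    linear_combination this
  have hPGK : P = G * K₁ := by
    have h1 : 0 < G * K₁ := by positivity
    have h2' : (G * K₁).natAbs ^ 4 = P.natAbs ^ 4 := by
      rw [← Int.natAbs_pow, ← Int.natAbs_pow, hGK4]
    have h3 : (G * K₁).natAbs = P.natAbs := Nat.pow_left_injective (by norm_num) h2'
    omega
  have copGK : IsCoprime G K₁ := by
    have c1 : IsCoprime G h2 := cop.of_isCoprime_of_dvd_left (by rw [hgG]; exact dvd_pow_self G (by norm_num))
    exact c1.of_isCoprime_of_dvd_right (by rw [hh2]; exact Dvd.dvd.mul_left (dvd_pow_self K₁ (by norm_num)) 125)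
  refine ⟨G, K₁, n, hGpos, hK₁pos, copGK, ?_, hPGK⟩
  have hn2 : n ^ 2 = g + h2 + 22 * P ^ 2 := by linarith
  rw [hgG, hh2, hPGK] at hn2
  linear_combination hn2

private lemma T_core (m n s : ℤ) (hm : 0 < m) (hn : 0 < n) (cop : IsCoprime m n)
    (h : s ^ 2 = n ^ 4 - 11 * m ^ 2 * n ^ 2 - m ^ 4) :
    ∃ G K t : ℤ, 0 < G ∧ 0 < K ∧ IsCoprime G K ∧
      t ^ 2 = G ^ 4 + 22 * G ^ 2 * K ^ 2 + 125 * K ^ 4 ∧ m = 2 * (G * K) := by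
  rcases Int.even_or_odd m with ⟨P, hP⟩ | ⟨a, ha⟩
  · -- m even
    have hm2 : m = 2 * P := by omega
    rcases Int.even_or_odd n with ⟨b, hbe⟩ | ⟨b, hb⟩
    · -- n even: contradicts coprimality
      exfalso
      have h2m : (2:ℤ) ∣ m := ⟨P, hm2⟩
      have h2n : (2:ℤ) ∣ n := ⟨b, by omega⟩
      have := cop.isUnit_of_dvd' h2m h2n
      rw [Int.isUnit_iff] at this; omega
    · rcases Int.even_or_odd s with ⟨c, hc⟩ | ⟨c, hc⟩
      · -- s even: impossible mod 4
        exfalso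
        rw [hm2, hb, (show s = 2*c by omega)] at h
        have hz := congrArg (fun z : ℤ => (z : ZMod 4)) h
        push_cast at hz
        have hD : ∀ x y z : ZMod 4, (2*x)^2 ≠ (2*y+1)^4 - 11*(2*z)^2*(2*y+1)^2 - (2*z)^4 := by decide
        exact hD (c : ZMod 4) (b : ZMod 4) (P : ZMod 4) hz
      · -- s odd: the real case
        have hPpos : 0 < P := by omega
        set g : ℤ := 2*b^2 + 2*b - 11*P^2 - c with hgdef
        set h2 : ℤ := g + s with hh2def
        have hg : n ^ 2 - 22 * P ^ 2 - s = 2 * g := by rw [hb, hc, hgdef]; ring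
        have hp4 : s ^ 2 = n ^ 4 - 44 * P ^ 2 * n ^ 2 - 16 * P ^ 4 := by
          rw [hm2] at h; linear_combination h
        have hkey : g * h2 = 125 * P ^ 4 := by
          have h4 : 4 * (g * h2) = 500 * P ^ 4 := by
            rw [hh2def]
            linear_combination (-(2*g + s + n^2 - 22*P^2)) * hg - hp4
          linarith
        have hsum : g + h2 = n ^ 2 - 22 * P ^ 2 := by rw [hh2def]; linarith [hg]
        have hprodpos : 0 < g * h2 := by rw [hkey]; positivity
        rcases lt_trichotomy g 0 with hg0 | hg0 | hg0
        · -- both negative: impossible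
          exfalso
          have hh0 : h2 < 0 := by nlinarith
          have hA : (g + h2)^2 ≥ 500 * P^4 := by nlinarith [sq_nonneg (g - h2)]
          have hB : -(g + h2) ≤ 22 * P^2 := by nlinarith [sq_nonneg n]
          have hC : 0 < -(g + h2) := by linarith
          nlinarith [mul_le_mul hB hB (le_of_lt hC) (by positivity : (0:ℤ) ≤ 22*P^2),
            pow_pos hPpos 4]
        · exfalso; rw [hg0] at hprodpos; simp at hprodpos
        · have hh0 : 0 < h2 := by nlinarith
          -- coprimality of g and h2
          have cop_gh : IsCoprime g h2 := by
            apply coprime_of_no_prime (by rintro ⟨h0', -⟩; omega)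
            intro r hr hrg hrh
            have hrs : r ∣ s := by
              have := dvd_sub hrh hrg
              rwa [(show h2 - g = s by rw [hh2def]; ring)] at this
            have hrsum : r ∣ n^2 - 22*P^2 := by
              have := dvd_add hrg hrh
              rwa [hsum] at this
            have hr125 : r ∣ 125 * P^4 := by rw [← hkey]; exact Dvd.dvd.mul_right hrg h2
            by_cases hr5 : r ∣ (5:ℤ)
            · have h5d : (5:ℤ) ∣ n^2 - 22*P^2 := five_dvd_of_prime_dvd hr hr5 hrsum
              have hz : ((n : ZMod 5))^2 = 22*((P : ZMod 5))^2 := by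
                have := (ZMod.intCast_zmod_eq_zero_iff_dvd _ 5).mpr h5d
                push_cast at this
                linear_combination this
              have hD : ∀ x y : ZMod 5, x^2 = 22*y^2 → x = 0 ∧ y = 0 := by decide
              obtain ⟨hn5, hP5⟩ := hD _ _ hz
              have hn5' : (5:ℤ) ∣ n := (ZMod.intCast_zmod_eq_zero_iff_dvd n 5).mp hn5
              have hP5' : (5:ℤ) ∣ P := (ZMod.intCast_zmod_eq_zero_iff_dvd P 5).mp hP5
              have hm5 : (5:ℤ) ∣ m := by rw [hm2]; exact Dvd.dvd.mul_left hP5' 2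
              have := cop.isUnit_of_dvd' hm5 hn5'
              rw [Int.isUnit_iff] at this; omega
            · have hrP : r ∣ P := by
                rcases (hr.2.2 _ _ hr125) with h' | h'
                · exact absurd (hr.dvd_of_dvd_pow (show r ∣ (5:ℤ)^3 by norm_num at h' ⊢; exact_mod_cast h')) hr5
                · exact hr.dvd_of_dvd_pow h'
              have hrm : r ∣ m := by rw [hm2]; exact Dvd.dvd.mul_left hrP 2
              have hrn : r ∣ n := by
                apply hr.dvd_of_dvd_pow (n := 2)
                have he : n^2 = (n^2 - 22*P^2) + 22*(P*P) := by ring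
                rw [he]
                exact dvd_add hrsum (Dvd.dvd.mul_left (Dvd.dvd.mul_right hrP P) 22)
              exact hr.not_unit (cop.isUnit_of_dvd' hrm hrn)
          -- split on which factor 5 divides
          by_cases h5g : (5:ℤ) ∣ g
          · have h5h : ¬ (5:ℤ) ∣ h2 := by
              intro h5h
              have := cop_gh.isUnit_of_dvd' h5g h5h
              rw [Int.isUnit_iff] at this; omega
            obtain ⟨G, K, t, hG, hK, copGK, ht, hPGK⟩ :=
              T_split hh0 hg0 cop_gh.symm h5h
                (by rw [mul_comm]; exact hkey) hPpos (by rw [add_comm]; exact hsum)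
            exact ⟨G, K, t, hG, hK, copGK, ht, by rw [hm2, hPGK]⟩
          · obtain ⟨G, K, t, hG, hK, copGK, ht, hPGK⟩ :=
              T_split hg0 hh0 cop_gh h5g hkey hPpos hsum
            exact ⟨G, K, t, hG, hK, copGK, ht, by rw [hm2, hPGK]⟩
  · -- m odd
    exfalso
    rcases Int.even_or_odd n with ⟨b, hbe⟩ | ⟨b, hb⟩
    · -- n even : mod 4
      rw [ha, (show n = 2*b by omega)] at h
      have hz := congrArg (fun z : ℤ => (z : ZMod 4)) h
      push_cast at hz
      have hD : ∀ x y z : ZMod 4, z^2 ≠ (2*y)^4 - 11*(2*x+1)^2*(2*y)^2 - (2*x+1)^4 := by decide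
      exact hD (a : ZMod 4) (b : ZMod 4) (s : ZMod 4) hz
    · -- n odd : mod 8
      rw [ha, hb] at h
      have hz := congrArg (fun z : ℤ => (z : ZMod 8)) h
      push_cast at hz
      have hD : ∀ x y z : ZMod 8, z^2 ≠ (2*y+1)^4 - 11*(2*x+1)^2*(2*y+1)^2 - (2*x+1)^4 := by decide
      exact hD (a : ZMod 8) (b : ZMod 8) (s : ZMod 8) hz

private lemma natAbs_eq_of_pow4 {x y : ℤ} (h : x ^ 4 = y ^ 4) : x.natAbs = y.natAbs := by
  have := congrArg Int.natAbs h
  rw [Int.natAbs_pow, Int.natAbs_pow] at this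
  exact Nat.pow_left_injective (by norm_num) this

private lemma eq_of_sq_eq_sq_pos {x y : ℤ} (hx : 0 < x) (hy : 0 < y) (h : x ^ 2 = y ^ 2) :
    x = y := by
  have := congrArg Int.natAbs h
  rw [Int.natAbs_pow, Int.natAbs_pow] at this
  have := Nat.pow_left_injective (by norm_num) this
  omega

private lemma Q1_finish (s e1 u k1 k2 : ℤ) (he1 : 0 < e1) (cop : IsCoprime s e1)
    (copk : IsCoprime k1 k2) (hk1 : 0 < k1) (hk2 : 0 < k2)
    (hprod : k1 * k2 = e1 ^ 4) (hdiff : k2 - k1 = u) (huval : u = s ^ 2 + 11 * e1 ^ 2)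
    (ih : ∀ K : ℤ, K.natAbs < e1.natAbs → ∀ s' t' : ℤ, K ≠ 0 → IsCoprime s' K →
      t' ^ 2 = s' ^ 4 + 22 * s' ^ 2 * K ^ 2 + 125 * K ^ 4 → False) : False := by
  obtain ⟨A, B, hA, hB, hk1A, hk2B, copAB⟩ :=
    sq_sq hk1 hk2 copk (show k1 * k2 = (e1 ^ 2) ^ 2 by rw [hprod]; ring)
  have hABe : A * B = e1 ^ 2 := by
    have h1 : (A * B) ^ 2 = (e1 ^ 2) ^ 2 := by
      rw [mul_pow, ← hk1A, ← hk2B, hprod]; ring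
    exact eq_of_sq_eq_sq_pos (mul_pos hA hB) (by positivity) h1
  obtain ⟨mm, nn, hmm, hnn, hAm, hBn, copmn⟩ := sq_sq hA hB copAB hABe
  have hk1m : k1 = mm ^ 4 := by rw [hk1A, hAm]; ring
  have hk2n : k2 = nn ^ 4 := by rw [hk2B, hBn]; ring
  have he1mn : e1 = mm * nn := by
    apply (eq_of_sq_eq_sq_pos he1 (mul_pos hmm hnn) ?_)
    rw [mul_pow, ← hAm, ← hBn, hABe]
  have hs2 : s ^ 2 = nn ^ 4 - 11 * mm ^ 2 * nn ^ 2 - mm ^ 4 := by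
    have h1 : nn ^ 4 - mm ^ 4 = s ^ 2 + 11 * e1 ^ 2 := by
      rw [← hk1m, ← hk2n, hdiff, huval]
    rw [he1mn] at h1
    linear_combination -h1
  obtain ⟨G, K, t', hG, hK, copGK, ht', hmGK⟩ := T_core mm nn s hmm hnn copmn hs2
  have hsize : K.natAbs < e1.natAbs := by
    have h2 : 2 * K ≤ e1 := by rw [he1mn, hmGK]; nlinarith
    omega
  exact ih K hsize G t' (by omega) copGK ht'

private lemma lemma_Q1 : ∀ (N : ℕ) (s t e : ℤ), e.natAbs = N → e ≠ 0 → IsCoprime s e →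
    t ^ 2 = s ^ 4 + 22 * s ^ 2 * e ^ 2 + 125 * e ^ 4 → False := by
  intro N
  induction N using Nat.strong_induction_on with
  | _ N ih =>
  intro s t e hN he cop heq
  -- normalize e and t to be positive
  have he1pos : 0 < |e| := abs_pos.mpr he
  have cop1 : IsCoprime s |e| := by
    rcases abs_choice e with h | h
    · rw [h]; exact cop
    · rw [h]; exact cop.neg_right
  have habs4 : |e| ^ 4 = e ^ 4 := by
    rw [show (4:ℕ) = 2*2 from rfl, pow_mul, pow_mul, sq_abs]
  have habs2 : |e| ^ 2 = e ^ 2 := sq_abs e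
  set e1 := |e| with he1def
  have heq1 : (|t|) ^ 2 = s ^ 4 + 22 * s ^ 2 * e1 ^ 2 + 125 * e1 ^ 4 := by
    rw [sq_abs, habs2, habs4]; exact heq
  have hNabs : e1.natAbs = N := by rw [he1def, Int.natAbs_abs]; exact hN
  set t1 := |t| with ht1def
  have ht1nn : 0 ≤ t1 := abs_nonneg t
  set u : ℤ := s ^ 2 + 11 * e1 ^ 2 with hudef
  have hu : t1 ^ 2 = u ^ 2 + 4 * e1 ^ 4 := by rw [hudef]; linear_combination heq1
  have hupos : 0 < u := by
    have := pow_pos he1pos 2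
    rw [hudef]; nlinarith [sq_nonneg s]
  have hlt : u < t1 := by
    by_contra hnot
    push_neg at hnot
    have h1 : t1 ^ 2 ≤ u ^ 2 := by nlinarith
    nlinarith [pow_pos he1pos 4]
  have ihQ : ∀ K : ℤ, K.natAbs < e1.natAbs → ∀ s' t' : ℤ, K ≠ 0 → IsCoprime s' K →
      t' ^ 2 = s' ^ 4 + 22 * s' ^ 2 * K ^ 2 + 125 * K ^ 4 → False := by
    intro K hKlt s' t' hK0 cop' heq'
    exact ih K.natAbs (by omega) s' t' K rfl hK0 cop' heq'
  rcases Int.even_or_odd u with ⟨u1, hu1⟩ | huodd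
  · -- u even : s, e1 both odd
    have hu2 : u = 2 * u1 := by omega
    have he1odd : Odd e1 := by
      by_contra hev
      rw [Int.not_odd_iff_even] at hev
      have hsodd : Odd s := by
        by_contra hsev
        rw [Int.not_odd_iff_even] at hsev
        have := cop1.isUnit_of_dvd' hsev.two_dvd hev.two_dvd
        rw [Int.isUnit_iff] at this; omega
      have : Odd u := by
        rw [hudef]
        obtain ⟨w, hw⟩ := hev
        exact (hsodd.pow).add_even ⟨22*w^2, by rw [hw]; ring⟩
      rw [Int.odd_iff, hu2] at this; omega
    have ht1even : Even t1 := by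
      have : Even (t1 ^ 2) := by
        rw [hu, hu2]
        exact ⟨2*u1^2 + 2*e1^4, by ring⟩
      exact (Int.even_pow.mp this).1
    obtain ⟨t2, ht2⟩ := ht1even
    have ht2eq : t2 ^ 2 = u1 ^ 2 + e1 ^ 4 := by
      have h4 : 4 * t2 ^ 2 = 4 * u1 ^ 2 + 4 * e1 ^ 4 := by
        rw [ht2, hu2] at hu; linear_combination hu
      linarith
    have hu1pos : 0 < u1 := by omega
    have ht2u1 : u1 < t2 := by omega
    set k1 := t2 - u1 with hk1def
    set k2 := t2 + u1 with hk2def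
    have hprod : k1 * k2 = e1 ^ 4 := by rw [hk1def, hk2def]; linear_combination ht2eq
    have hk1pos : 0 < k1 := by omega
    have hk2pos : 0 < k2 := by omega
    have copk : IsCoprime k1 k2 := by
      apply coprime_of_no_prime (by rintro ⟨h', -⟩; omega)
      intro r hr hr1 hr2
      have hre : r ∣ e1 := by
        have : r ∣ e1 ^ 4 := by rw [← hprod]; exact Dvd.dvd.mul_right hr1 k2
        exact hr.dvd_of_dvd_pow this
      have hru1 : r ∣ u1 := by
        have h2u : r ∣ 2 * u1 := by
          have := dvd_sub hr2 hr1
          rwa [show k2 - k1 = 2 * u1 by rw [hk1def, hk2def]; ring] at this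
        rcases hr.2.2 _ _ h2u with h' | h'
        · exfalso
          have h2e : (2:ℤ) ∣ e1 := two_dvd_of_prime_dvd hr h' hre
          rw [Int.odd_iff] at he1odd; omega
        · exact h'
      have hrs : r ∣ s := by
        apply hr.dvd_of_dvd_pow (n := 2)
        have hseq : s ^ 2 = 2 * u1 - 11 * e1 ^ 2 := by linarith [hudef, hu2]
        rw [hseq]
        exact dvd_sub (Dvd.dvd.mul_left hru1 2) ((dvd_pow hre two_ne_zero).mul_left 11)
      exact hr.not_unit (cop1.isUnit_of_dvd' hrs hre)
    exact Q1_finish s e1 u k1 k2 he1pos cop1 copk hk1pos hk2pos hprod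
      (by rw [hk1def, hk2def, hu2]; ring) hudef ihQ
  · -- u odd
    have ht1odd : Odd t1 := by
      by_contra hev
      rw [Int.not_odd_iff_even] at hev
      have h1 : Even (t1 ^ 2) := by
        obtain ⟨w, hw⟩ := hev
        exact ⟨2*w^2, by rw [hw]; ring⟩
      have h2 : Odd (t1 ^ 2) := by
        rw [hu]
        exact (huodd.pow).add_even ⟨2*e1^4, by ring⟩
      rw [Int.even_iff] at h1; rw [Int.odd_iff] at h2; omega
    obtain ⟨k1, hk1⟩ : ∃ k, t1 - u = 2 * k := by
      obtain ⟨a, hha⟩ := ht1odd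
      obtain ⟨b, hhb⟩ := huodd
      exact ⟨a - b, by omega⟩
    set k2 := k1 + u with hk2def
    have hprod : k1 * k2 = e1 ^ 4 := by
      have h4 : 4 * (k1 * k2) = 4 * e1 ^ 4 := by
        rw [hk2def]
        linear_combination (-(2*k1 + t1 + u)) * hk1 + hu
      linarith
    have hk1pos : 0 < k1 := by omega
    have hk2pos : 0 < k2 := by omega
    have copk : IsCoprime k1 k2 := by
      apply coprime_of_no_prime (by rintro ⟨h', -⟩; omega)
      intro r hr hr1 hr2
      have hre : r ∣ e1 := by
        have : r ∣ e1 ^ 4 := by rw [← hprod]; exact Dvd.dvd.mul_right hr1 k2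
        exact hr.dvd_of_dvd_pow this
      have hru : r ∣ u := by
        have := dvd_sub hr2 hr1
        rwa [show k2 - k1 = u by rw [hk2def]; ring] at this
      have hrs : r ∣ s := by
        apply hr.dvd_of_dvd_pow (n := 2)
        have hseq : s ^ 2 = u - 11 * e1 ^ 2 := by rw [hudef]; ring
        rw [hseq]
        exact dvd_sub hru ((dvd_pow hre two_ne_zero).mul_left 11)
      exact hr.not_unit (cop1.isUnit_of_dvd' hrs hre)
    exact Q1_finish s e1 u k1 k2 he1pos cop1 copk hk1pos hk2pos hprod
      (by rw [hk2def]; ring) hudef ihQ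

private lemma lemma_T (p q E : ℤ) (hp : p ≠ 0) (cop : IsCoprime p q)
    (h : E ^ 2 = q ^ 4 - 11 * p ^ 2 * q ^ 2 - p ^ 4) : False := by
  have habs4p : |p| ^ 4 = p ^ 4 := by
    rw [show (4:ℕ) = 2*2 from rfl, pow_mul, pow_mul, sq_abs]
  have habs4q : |q| ^ 4 = q ^ 4 := by
    rw [show (4:ℕ) = 2*2 from rfl, pow_mul, pow_mul, sq_abs]
  have hq : q ≠ 0 := by
    rintro rfl
    have h4 : (0:ℤ) < p ^ 4 := by
      have := abs_pos.mpr hp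
      calc (0:ℤ) < |p| ^ 4 := by positivity
        _ = p ^ 4 := habs4p
    nlinarith [sq_nonneg E]
  have cop' : IsCoprime |p| |q| := by
    rcases abs_choice p with h1 | h1 <;> rcases abs_choice q with h2 | h2 <;> rw [h1, h2]
    exacts [cop, cop.neg_right, cop.neg_left, cop.neg_left.neg_right]
  have habs : E ^ 2 = |q| ^ 4 - 11 * |p| ^ 2 * |q| ^ 2 - |p| ^ 4 := by
    rw [habs4p, habs4q, sq_abs, sq_abs]; exact h
  obtain ⟨G, K, t, hG, hK, copGK, ht, -⟩ :=
    T_core |p| |q| E (abs_pos.mpr hp) (abs_pos.mpr hq) cop' habs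
  exact lemma_Q1 K.natAbs G t K rfl (by omega) copGK ht

private lemma Q2_mixed (s e w : ℤ) (hs : 0 < s) (he : 0 < e) (cop : IsCoprime s e)
    (hmix : ¬(Odd s ∧ Odd e))
    (h : w ^ 2 = 5 * s ^ 4 + 22 * s ^ 2 * e ^ 2 + 25 * e ^ 4) : False := by
  have hBodd : Odd (s ^ 2 + 3 * e ^ 2) := by
    rcases Int.even_or_odd s with ⟨a, ha⟩ | ⟨a, ha⟩ <;>
      rcases Int.even_or_odd e with ⟨b, hb⟩ | ⟨b, hb⟩
    · exfalso
      have := cop.isUnit_of_dvd' (⟨a, by omega⟩ : (2:ℤ) ∣ s) (⟨b, by omega⟩ : (2:ℤ) ∣ e)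
      rw [Int.isUnit_iff] at this; omega
    · exact ⟨2*a^2 + 6*b^2 + 6*b + 1, by rw [ha, hb]; ring⟩
    · exact ⟨2*a^2 + 2*a + 6*b^2, by rw [ha, hb]; ring⟩
    · exact absurd ⟨⟨a, ha⟩, ⟨b, hb⟩⟩ hmix
  set A : ℤ := 2*s^2 + 4*e^2 with hAdef
  set B : ℤ := s^2 + 3*e^2 with hBdef
  have trip : PythagoreanTriple B A w := by
    show B * B + A * A = w * w
    rw [hAdef, hBdef]; linear_combination -h
  have copBA : IsCoprime B A := by
    apply coprime_of_no_prime
      (by rintro ⟨h', -⟩; rw [Int.odd_iff] at hBodd; rw [hBdef] at h'; omega)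
    intro r hr hrB hrA
    have hre2 : r ∣ 2 * e^2 := by
      have := dvd_sub (Dvd.dvd.mul_left hrB 2) hrA
      rwa [show 2*B - A = 2*e^2 by rw [hAdef, hBdef]; ring] at this
    have hre : r ∣ e := by
      rcases hr.2.2 _ _ hre2 with h' | h'
      · exfalso
        have h2B : (2:ℤ) ∣ B := two_dvd_of_prime_dvd hr h' hrB
        rw [Int.odd_iff] at hBodd; omega
      · exact hr.dvd_of_dvd_pow h'
    have hrs : r ∣ s := by
      apply hr.dvd_of_dvd_pow (n := 2)
      have : s^2 = B - 3*e^2 := by rw [hBdef]; ring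
      rw [this]
      exact dvd_sub hrB ((dvd_pow hre two_ne_zero).mul_left 3)
    exact hr.not_unit (cop.isUnit_of_dvd' hrs hre)
  obtain ⟨m, n, hmn, -, copmn, hpar⟩ := PythagoreanTriple.coprime_classification.mp
    ⟨trip, Int.isCoprime_iff_gcd_eq_one.mp copBA⟩
  rcases hmn with ⟨hB, hA⟩ | ⟨hB, hA⟩
  swap
  · have h2B : (2:ℤ) ∣ B := ⟨m*n, by rw [hB]; ring⟩
    rw [Int.odd_iff] at hBodd
    omega
  -- B = m² - n², A = 2mn
  have hmn_eq : m * n = s^2 + 2*e^2 := by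
    have : 2*(m*n) = 2*s^2 + 4*e^2 := by rw [← hAdef, hA]; ring
    linarith
  have he2 : e^2 = m^2 - n^2 - m*n := by
    have hBe : s^2 + 3*e^2 = m^2 - n^2 := by rw [← hBdef, hB]
    linarith
  have hs2 : s^2 = (2*n - m)*(2*m + n) := by
    linear_combination (-1)*hmn_eq + (-2)*he2
  have hmn_pos : 0 < m * n := by nlinarith [pow_pos hs 2, pow_pos he 2]
  obtain ⟨m1, n1, hm1, hn1, hmn_eq1, he21, hs21, copmn1⟩ :
      ∃ m1 n1 : ℤ, 0 < m1 ∧ 0 < n1 ∧ m1*n1 = s^2 + 2*e^2 ∧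
        e^2 = m1^2 - n1^2 - m1*n1 ∧ s^2 = (2*n1 - m1)*(2*m1 + n1) ∧ IsCoprime m1 n1 := by
    rcases lt_trichotomy m 0 with hm0 | hm0 | hm0
    · have hn0 : n < 0 := by nlinarith
      exact ⟨-m, -n, by omega, by omega, by linear_combination hmn_eq,
        by linear_combination he2, by linear_combination hs2,
        (Int.isCoprime_iff_gcd_eq_one.mpr copmn).neg_left.neg_right⟩
    · exfalso; rw [hm0] at hmn_pos; simp at hmn_pos
    · have hn0 : 0 < n := by nlinarith
      exact ⟨m, n, hm0, hn0, hmn_eq, he2, hs2, Int.isCoprime_iff_gcd_eq_one.mpr copmn⟩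
  set X : ℤ := 2*n1 - m1 with hXdef
  set Y : ℤ := 2*m1 + n1 with hYdef
  have hYpos : 0 < Y := by rw [hYdef]; linarith
  have hXpos : 0 < X := by
    rcases le_or_gt X 0 with hX | hX
    · exfalso
      nlinarith [mul_nonneg (neg_nonneg.mpr hX) (le_of_lt hYpos), pow_pos hs 2]
    · exact hX
  have h5n : 2*X + Y = 5*n1 := by rw [hXdef, hYdef]; ring
  have h5m : 2*Y - X = 5*m1 := by rw [hXdef, hYdef]; ring
  by_cases h5XY : (5:ℤ) ∣ X ∧ (5:ℤ) ∣ Y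
  · obtain ⟨⟨X1, hX1⟩, ⟨Y1, hY1⟩⟩ := h5XY
    have h25 : s^2 = 25*(X1*Y1) := by rw [hs21, hX1, hY1]; ring
    have h5s : (5:ℤ) ∣ s := by
      apply prime5.dvd_of_dvd_pow (n := 2)
      exact ⟨5*(X1*Y1), by linarith⟩
    obtain ⟨s1, hs1e⟩ := h5s
    have hprod1 : X1*Y1 = s1^2 := by
      have : s^2 = 25*s1^2 := by rw [hs1e]; ring
      linarith
    have hX1pos : 0 < X1 := by linarith
    have hY1pos : 0 < Y1 := by linarith
    have hm1E : m1 = 2*Y1 - X1 := by linarith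
    have hn1E : n1 = 2*X1 + Y1 := by linarith
    have copX1Y1 : IsCoprime X1 Y1 := by
      apply coprime_of_no_prime (by rintro ⟨h', -⟩; omega)
      intro r hr h1 h2
      have hrm : r ∣ m1 := by rw [hm1E]; exact dvd_sub (h2.mul_left 2) h1
      have hrn : r ∣ n1 := by rw [hn1E]; exact dvd_add (h1.mul_left 2) h2
      exact hr.not_unit (copmn1.isUnit_of_dvd' hrm hrn)
    obtain ⟨p, q, hp, hq, hX1p, hY1q, cpq⟩ := sq_sq hX1pos hY1pos copX1Y1 hprod1
    have hm1F : m1 = 2*q^2 - p^2 := by rw [hm1E, hX1p, hY1q]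
    have hn1F : n1 = 2*p^2 + q^2 := by rw [hn1E, hX1p, hY1q]
    have hfin : e^2 = q^4 - 11*p^2*q^2 - p^4 := by
      linear_combination he21 + (m1 + 2*q^2 - p^2 - (2*p^2 + q^2))*hm1F
        + (-m1 - n1 - (2*p^2 + q^2))*hn1F
    exact lemma_T p q e (ne_of_gt hp) cpq hfin
  · have copXY : IsCoprime X Y := by
      apply coprime_of_no_prime (by rintro ⟨h', -⟩; omega)
      intro r hr h1 h2
      have hr5n : r ∣ 5*n1 := by rw [← h5n]; exact dvd_add (h1.mul_left 2) h2
      have hr5m : r ∣ 5*m1 := by rw [← h5m]; exact dvd_sub (h2.mul_left 2) h1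
      by_cases hr5 : r ∣ 5
      · exact h5XY ⟨five_dvd_of_prime_dvd hr hr5 h1, five_dvd_of_prime_dvd hr hr5 h2⟩
      · have hrn : r ∣ n1 := (hr.2.2 5 n1 hr5n).resolve_left hr5
        have hrm : r ∣ m1 := (hr.2.2 5 m1 hr5m).resolve_left hr5
        exact hr.not_unit (copmn1.isUnit_of_dvd' hrm hrn)
    obtain ⟨p, q, hp, hq, hXp, hYq, cpq⟩ := sq_sq hXpos hYpos copXY hs21.symm
    have hm1F : 5*m1 = 2*q^2 - p^2 := by rw [← h5m, hXp, hYq]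
    have hn1F : 5*n1 = 2*p^2 + q^2 := by rw [← h5n, hXp, hYq]
    have hfin : (5*e)^2 = q^4 - 11*p^2*q^2 - p^4 := by
      linear_combination 25*he21 + (5*m1 + 2*q^2 - p^2 - (2*p^2 + q^2))*hm1F
        + (-5*m1 - 5*n1 - (2*p^2 + q^2))*hn1F
    exact lemma_T p q (5*e) (ne_of_gt hp) cpq hfin

private lemma Q2_bothodd (s e w : ℤ) (hs : 0 < s) (he : 0 < e) (cop : IsCoprime s e)
    (hso : Odd s) (heo : Odd e)
    (h : w ^ 2 = 5 * s ^ 4 + 22 * s ^ 2 * e ^ 2 + 25 * e ^ 4) : False := by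
  obtain ⟨a, ha⟩ := hso
  obtain ⟨b, hb⟩ := heo
  set A1 : ℤ := s^2 + 2*e^2 with hA1def
  have hA1odd : Odd A1 := ⟨2*a^2 + 2*a + 4*b^2 + 4*b + 1, by rw [hA1def, ha, hb]; ring⟩
  obtain ⟨B1, hB1⟩ : ∃ B1 : ℤ, s^2 + 3*e^2 = 2*B1 :=
    ⟨2*a^2 + 2*a + 6*b^2 + 6*b + 2, by rw [ha, hb]; ring⟩
  have h2w : (2:ℤ) ∣ w := by
    apply prime2.dvd_of_dvd_pow (n := 2)
    refine ⟨2*A1^2 + 2*B1^2, ?_⟩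
    rw [hA1def]
    linear_combination h + (s^2 + 3*e^2 + 2*B1)*hB1
  obtain ⟨w1, hw1⟩ := h2w
  have hPyth : w1^2 = A1^2 + B1^2 := by
    have h4 : 4*w1^2 = 4*A1^2 + 4*B1^2 := by
      rw [hw1] at h
      rw [hA1def]
      linear_combination h + (s^2 + 3*e^2 + 2*B1)*hB1
    linarith
  have trip : PythagoreanTriple A1 B1 w1 := by
    show A1*A1 + B1*B1 = w1*w1
    linear_combination -hPyth
  have copAB : IsCoprime A1 B1 := by
    apply coprime_of_no_prime
      (by rintro ⟨h', -⟩; rw [Int.odd_iff] at hA1odd; omega)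
    intro r hr hrA hrB
    have hre : r ∣ e := by
      apply hr.dvd_of_dvd_pow (n := 2)
      have : e^2 = 2*B1 - A1 := by rw [hA1def]; linarith
      rw [this]
      exact dvd_sub (hrB.mul_left 2) hrA
    have hrs : r ∣ s := by
      apply hr.dvd_of_dvd_pow (n := 2)
      have : s^2 = A1 - 2*e^2 := by rw [hA1def]; ring
      rw [this]
      exact dvd_sub hrA ((dvd_pow hre two_ne_zero).mul_left 2)
    exact hr.not_unit (cop.isUnit_of_dvd' hrs hre)
  obtain ⟨m, n, hmn, -, copmn, hpar⟩ := PythagoreanTriple.coprime_classification.mp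
    ⟨trip, Int.isCoprime_iff_gcd_eq_one.mp copAB⟩
  rcases hmn with ⟨hAc, hBc⟩ | ⟨hAc, hBc⟩
  swap
  · have h2A : (2:ℤ) ∣ A1 := ⟨m*n, by rw [hAc]; ring⟩
    rw [Int.odd_iff] at hA1odd
    omega
  -- A1 = m² - n², B1 = 2mn
  have hA1e : s^2 + 2*e^2 = m^2 - n^2 := by rw [← hA1def, hAc]
  have h4mn : s^2 + 3*e^2 = 4*(m*n) := by rw [hB1, hBc]; ring
  have he2 : e^2 = 4*(m*n) - m^2 + n^2 := by linarith
  have hs2 : s^2 = (3*m + n)*(m - 3*n) := by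
    linear_combination hA1e + (-2)*he2
  have hmn_pos : 0 < m*n := by nlinarith [pow_pos hs 2, pow_pos he 2]
  obtain ⟨m1, n1, hm1, hn1, he21, hs21, copmn1, hpar1⟩ :
      ∃ m1 n1 : ℤ, 0 < m1 ∧ 0 < n1 ∧ e^2 = 4*(m1*n1) - m1^2 + n1^2 ∧
        s^2 = (3*m1 + n1)*(m1 - 3*n1) ∧ IsCoprime m1 n1 ∧
        (m1 % 2 = 0 ∧ n1 % 2 = 1 ∨ m1 % 2 = 1 ∧ n1 % 2 = 0) := by
    rcases lt_trichotomy m 0 with hm0 | hm0 | hm0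
    · have hn0 : n < 0 := by nlinarith
      exact ⟨-m, -n, by omega, by omega, by linear_combination he2,
        by linear_combination hs2,
        (Int.isCoprime_iff_gcd_eq_one.mpr copmn).neg_left.neg_right, by omega⟩
    · exfalso; rw [hm0] at hmn_pos; simp at hmn_pos
    · have hn0 : 0 < n := by nlinarith
      exact ⟨m, n, hm0, hn0, he2, hs2, Int.isCoprime_iff_gcd_eq_one.mpr copmn, hpar⟩
  set X : ℤ := 3*m1 + n1 with hXdef
  set Y : ℤ := m1 - 3*n1 with hYdef
  have hXpos : 0 < X := by rw [hXdef]; linarith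
  have hYpos : 0 < Y := by
    rcases le_or_gt Y 0 with hY | hY
    · exfalso
      nlinarith [mul_nonneg (le_of_lt hXpos) (neg_nonneg.mpr hY), pow_pos hs 2]
    · exact hY
  have hXodd : Odd X := by
    rw [hXdef, Int.odd_iff]
    omega
  have h10m : 3*X + Y = 10*m1 := by rw [hXdef, hYdef]; ring
  have h10n : X - 3*Y = 10*n1 := by rw [hXdef, hYdef]; ring
  by_cases h5XY : (5:ℤ) ∣ X ∧ (5:ℤ) ∣ Y
  · obtain ⟨⟨X1, hX1⟩, ⟨Y1, hY1⟩⟩ := h5XY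
    have h25 : s^2 = 25*(X1*Y1) := by rw [hs21, hX1, hY1]; ring
    have h5s : (5:ℤ) ∣ s := by
      apply prime5.dvd_of_dvd_pow (n := 2)
      exact ⟨5*(X1*Y1), by linarith⟩
    obtain ⟨s1, hs1e⟩ := h5s
    have hprod1 : X1*Y1 = s1^2 := by
      have : s^2 = 25*s1^2 := by rw [hs1e]; ring
      linarith
    have hX1pos : 0 < X1 := by linarith
    have hY1pos : 0 < Y1 := by linarith
    have hX1odd : Odd X1 := by
      rw [Int.odd_iff] at hXodd ⊢
      omega
    have h2m1 : 2*m1 = 3*X1 + Y1 := by linarith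
    have h2n1 : 2*n1 = X1 - 3*Y1 := by linarith
    have copX1Y1 : IsCoprime X1 Y1 := by
      apply coprime_of_no_prime (by rintro ⟨h', -⟩; omega)
      intro r hr h1 h2
      have hr2m : r ∣ 2*m1 := by rw [h2m1]; exact dvd_add (h1.mul_left 3) h2
      have hr2n : r ∣ 2*n1 := by rw [h2n1]; exact dvd_sub h1 (h2.mul_left 3)
      have hrm : r ∣ m1 := by
        rcases hr.2.2 _ _ hr2m with h' | h'
        · exfalso
          have := two_dvd_of_prime_dvd hr h' h1
          rw [Int.odd_iff] at hX1odd; omega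
        · exact h'
      have hrn : r ∣ n1 := by
        rcases hr.2.2 _ _ hr2n with h' | h'
        · exfalso
          have := two_dvd_of_prime_dvd hr h' h1
          rw [Int.odd_iff] at hX1odd; omega
        · exact h'
      exact hr.not_unit (copmn1.isUnit_of_dvd' hrm hrn)
    obtain ⟨p, q, hp, hq, hX1p, hY1q, cpq⟩ := sq_sq hX1pos hY1pos copX1Y1 hprod1
    have hm1F : 2*m1 = 3*p^2 + q^2 := by rw [h2m1, hX1p, hY1q]
    have hn1F : 2*n1 = p^2 - 3*q^2 := by rw [h2n1, hX1p, hY1q]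
    have hfin4 : 4*e^2 = 4*(p^4 - 11*p^2*q^2 - q^4) := by
      linear_combination 4*he21 + (-2*m1 + p^2 - 13*q^2)*hm1F
        + (8*m1 + 2*n1 + p^2 - 3*q^2)*hn1F
    have hfin : e^2 = p^4 - 11*q^2*p^2 - q^4 := by linarith
    exact lemma_T q p e (ne_of_gt hq) cpq.symm hfin
  · have copXY : IsCoprime X Y := by
      apply coprime_of_no_prime (by rintro ⟨h', -⟩; omega)
      intro r hr h1 h2
      have hr10m : r ∣ (2:ℤ)*(5*m1) := by
        rw [show (2:ℤ)*(5*m1) = 3*X + Y by rw [h10m]; ring]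
        exact dvd_add (h1.mul_left 3) h2
      have hr10n : r ∣ (2:ℤ)*(5*n1) := by
        rw [show (2:ℤ)*(5*n1) = X - 3*Y by rw [h10n]; ring]
        exact dvd_sub h1 (h2.mul_left 3)
      have hr5m : r ∣ 5*m1 := by
        rcases hr.2.2 _ _ hr10m with h' | h'
        · exfalso
          have := two_dvd_of_prime_dvd hr h' h1
          rw [Int.odd_iff] at hXodd; omega
        · exact h'
      have hr5n : r ∣ 5*n1 := by
        rcases hr.2.2 _ _ hr10n with h' | h'
        · exfalso
          have := two_dvd_of_prime_dvd hr h' h1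
          rw [Int.odd_iff] at hXodd; omega
        · exact h'
      by_cases hr5 : r ∣ 5
      · exact h5XY ⟨five_dvd_of_prime_dvd hr hr5 h1, five_dvd_of_prime_dvd hr hr5 h2⟩
      · have hrm : r ∣ m1 := (hr.2.2 5 m1 hr5m).resolve_left hr5
        have hrn : r ∣ n1 := (hr.2.2 5 n1 hr5n).resolve_left hr5
        exact hr.not_unit (copmn1.isUnit_of_dvd' hrm hrn)
    obtain ⟨p, q, hp, hq, hXp, hYq, cpq⟩ := sq_sq hXpos hYpos copXY hs21.symm
    have hm1F : 10*m1 = 3*p^2 + q^2 := by rw [← h10m, hXp, hYq]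
    have hn1F : 10*n1 = p^2 - 3*q^2 := by rw [← h10n, hXp, hYq]
    have hfin4 : 100*e^2 = 4*(p^4 - 11*p^2*q^2 - q^4) := by
      linear_combination 100*he21 + (-10*m1 + p^2 - 13*q^2)*hm1F
        + (40*m1 + 10*n1 + p^2 - 3*q^2)*hn1F
    have hfin : (5*e)^2 = p^4 - 11*q^2*p^2 - q^4 := by linarith [sq_nonneg e] 
    exact lemma_T q p (5*e) (ne_of_gt hq) cpq.symm hfin

private lemma lemma_Q2 (s e w : ℤ) (hs : s ≠ 0) (he : e ≠ 0) (cop : IsCoprime s e)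
    (h : w ^ 2 = 5 * s ^ 4 + 22 * s ^ 2 * e ^ 2 + 25 * e ^ 4) : False := by
  by_cases h5e : (5:ℤ) ∣ e
  · obtain ⟨e1, he1⟩ := h5e
    have h5w : (5:ℤ) ∣ w := by
      apply prime5.dvd_of_dvd_pow (n := 2)
      refine ⟨s^4 + 110*s^2*e1^2 + 3125*e1^4, ?_⟩
      rw [h, he1]; ring
    obtain ⟨w1, hw1⟩ := h5w
    have h5s : (5:ℤ) ∣ s := by
      apply prime5.dvd_of_dvd_pow (n := 4)
      refine ⟨w1^2 - 22*s^2*e1^2 - 625*e1^4, ?_⟩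
      have h25 : 25*w1^2 = 5*s^4 + 550*s^2*e1^2 + 15625*e1^4 := by
        rw [he1, hw1] at h; linear_combination h
      linarith
    exact absurd (cop.isUnit_of_dvd' h5s ⟨e1, he1⟩)
      (by rw [Int.isUnit_iff]; omega)
  · -- normalize signs
    have habs4 : ∀ x : ℤ, |x| ^ 4 = x ^ 4 := fun x => by
      rw [show (4:ℕ) = 2*2 from rfl, pow_mul, pow_mul, sq_abs]
    have cop' : IsCoprime |s| |e| := by
      rcases abs_choice s with h1 | h1 <;> rcases abs_choice e with h2 | h2 <;> rw [h1, h2]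
      exacts [cop, cop.neg_right, cop.neg_left, cop.neg_left.neg_right]
    have heq' : w ^ 2 = 5 * |s| ^ 4 + 22 * |s| ^ 2 * |e| ^ 2 + 25 * |e| ^ 4 := by
      rw [habs4, habs4, sq_abs, sq_abs]; exact h
    have hspos : 0 < |s| := abs_pos.mpr hs
    have hepos : 0 < |e| := abs_pos.mpr he
    by_cases hodd : Odd |s| ∧ Odd |e|
    · exact Q2_bothodd |s| |e| w hspos hepos cop' hodd.1 hodd.2 heq'
    · exact Q2_mixed |s| |e| w hspos hepos cop' hodd heq'

/-- The descent cascade: no positive `a` with `c² = a(a²+22ae²+125e⁴)`. -/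
private lemma cascade (a e c : ℤ) (ha : 0 < a) (he : e ≠ 0) (cop : IsCoprime a e)
    (h : c ^ 2 = a * (a ^ 2 + 22 * a * e ^ 2 + 125 * e ^ 4)) : False := by
  have hcme : ∀ x : ℤ, 0 < x → ∀ M : ℤ, IsCoprime x M → 0 < M → ∀ cc : ℤ,
      cc^2 = x * M → ∃ st tt : ℤ, 0 < st ∧ x = st^2 ∧ M = tt^2 := by
    intro x hx M copxM hM cc hcc
    obtain ⟨s0, hs0⟩ := Int.sq_of_isCoprime copxM hcc.symm
    have hxs : x = s0^2 := by
      rcases hs0 with h' | h'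
      · exact h'
      · exfalso; nlinarith [sq_nonneg s0]
    obtain ⟨t0, ht0⟩ := Int.sq_of_isCoprime copxM.symm (by rw [mul_comm]; exact hcc.symm)
    have hMt : M = t0^2 := by
      rcases ht0 with h' | h'
      · exact h'
      · exfalso; nlinarith [sq_nonneg t0]
    have hs0ne : s0 ≠ 0 := by rintro rfl; simp at hxs; omega
    exact ⟨|s0|, t0, abs_pos.mpr hs0ne, by rw [sq_abs]; exact hxs, hMt⟩
  have hep2 : 0 < e^2 := by positivity
  have hep4 : 0 < e^4 := by positivity
  by_cases h5 : (5:ℤ) ∣ a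
  · obtain ⟨a1, ha1⟩ := h5
    have ha1pos : 0 < a1 := by nlinarith
    have cop1 : IsCoprime a1 e := cop.of_isCoprime_of_dvd_left ⟨5, by rw [ha1]; ring⟩
    have hc25 : c^2 = 25*(a1 * (5*a1^2 + 22*a1*e^2 + 25*e^4)) := by
      rw [ha1] at h; linear_combination h
    have h5c : (5:ℤ) ∣ c := by
      have : (5:ℤ)^2 ∣ c^2 := ⟨a1 * (5*a1^2 + 22*a1*e^2 + 25*e^4), by linarith⟩
      exact (Int.pow_dvd_pow_iff (by norm_num)).mp this
    obtain ⟨c1, hc1⟩ := h5c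
    have hc1eq : c1^2 = a1 * (5*a1^2 + 22*a1*e^2 + 25*e^4) := by
      have : 25*c1^2 = 25*(a1 * (5*a1^2 + 22*a1*e^2 + 25*e^4)) := by
        rw [hc1] at hc25; linear_combination hc25
      linarith
    by_cases h5' : (5:ℤ) ∣ a1
    · obtain ⟨a2, ha2⟩ := h5'
      have ha2pos : 0 < a2 := by nlinarith
      have cop2 : IsCoprime a2 e := cop1.of_isCoprime_of_dvd_left ⟨5, by rw [ha2]; ring⟩
      have hc25' : c1^2 = 25*(a2 * (25*a2^2 + 22*a2*e^2 + 5*e^4)) := by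
        rw [ha2] at hc1eq; linear_combination hc1eq
      have h5c' : (5:ℤ) ∣ c1 := by
        have : (5:ℤ)^2 ∣ c1^2 := ⟨a2 * (25*a2^2 + 22*a2*e^2 + 5*e^4), by linarith⟩
        exact (Int.pow_dvd_pow_iff (by norm_num)).mp this
      obtain ⟨c2, hc2⟩ := h5c'
      have hc2eq : c2^2 = a2 * (25*a2^2 + 22*a2*e^2 + 5*e^4) := by
        have : 25*c2^2 = 25*(a2 * (25*a2^2 + 22*a2*e^2 + 5*e^4)) := by
          rw [hc2] at hc25'; linear_combination hc25'
        linarith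
      by_cases h5'' : (5:ℤ) ∣ a2
      · obtain ⟨a3, ha3⟩ := h5''
        have ha3pos : 0 < a3 := by nlinarith
        have cop3 : IsCoprime a3 e := cop2.of_isCoprime_of_dvd_left ⟨5, by rw [ha3]; ring⟩
        have hc25'' : c2^2 = 25*(a3 * (125*a3^2 + 22*a3*e^2 + e^4)) := by
          rw [ha3] at hc2eq; linear_combination hc2eq
        have h5c'' : (5:ℤ) ∣ c2 := by
          have : (5:ℤ)^2 ∣ c2^2 := ⟨a3 * (125*a3^2 + 22*a3*e^2 + e^4), by linarith⟩
          exact (Int.pow_dvd_pow_iff (by norm_num)).mp this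
        obtain ⟨c3, hc3⟩ := h5c''
        have hc3eq : c3^2 = a3 * (125*a3^2 + 22*a3*e^2 + e^4) := by
          have : 25*c3^2 = 25*(a3 * (125*a3^2 + 22*a3*e^2 + e^4)) := by
            rw [hc3] at hc25''; linear_combination hc25''
          linarith
        -- a3 coprime to M3 (no 5-condition needed)
        have copM : IsCoprime a3 (125*a3^2 + 22*a3*e^2 + e^4) := by
          have h1 : IsCoprime a3 (e^4) := IsCoprime.pow_right cop3
          have h2 : IsCoprime a3 (e^4 + a3*(125*a3 + 22*e^2)) := h1.add_mul_left_right _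
          rwa [show e^4 + a3*(125*a3 + 22*e^2) = 125*a3^2 + 22*a3*e^2 + e^4 by ring] at h2
        obtain ⟨st, tt, hstpos, hsteq, htteq⟩ := hcme a3 ha3pos _ copM (by nlinarith) c3 hc3eq
        -- Q1 with roles swapped : tt² = e⁴ + 22 e² st² + 125 st⁴
        have hfin : tt^2 = e^4 + 22*e^2*st^2 + 125*st^4 := by
          rw [← htteq, hsteq]; ring
        have copE : IsCoprime e st :=
          cop3.symm.of_isCoprime_of_dvd_right (by rw [hsteq]; exact dvd_pow_self st two_ne_zero)
        exact lemma_Q1 st.natAbs e tt st rfl (by omega) copE (by linear_combination hfin)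
      · -- 5 ∤ a2 : Q2 swapped
        have copM : IsCoprime a2 (25*a2^2 + 22*a2*e^2 + 5*e^4) := by
          have h5a : IsCoprime a2 (5:ℤ) := by
            apply coprime_of_no_prime (by rintro ⟨h', -⟩; omega)
            intro r hr h1 h2
            exact h5'' (five_dvd_of_prime_dvd hr h2 h1)
          have h1 : IsCoprime a2 (5*e^4) := h5a.mul_right (IsCoprime.pow_right cop2)
          have h2 : IsCoprime a2 (5*e^4 + a2*(25*a2 + 22*e^2)) := h1.add_mul_left_right _
          rwa [show 5*e^4 + a2*(25*a2 + 22*e^2) = 25*a2^2 + 22*a2*e^2 + 5*e^4 by ring] at h2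
        obtain ⟨st, tt, hstpos, hsteq, htteq⟩ := hcme a2 ha2pos _ copM (by nlinarith) c2 hc2eq
        have hfin : tt^2 = 5*e^4 + 22*e^2*st^2 + 25*st^4 := by
          rw [← htteq, hsteq]; ring
        have copE : IsCoprime e st :=
          cop2.symm.of_isCoprime_of_dvd_right (by rw [hsteq]; exact dvd_pow_self st two_ne_zero)
        exact lemma_Q2 e st tt he (by omega) copE (by linear_combination hfin)
    · -- 5 ∤ a1 : Q2
      have copM : IsCoprime a1 (5*a1^2 + 22*a1*e^2 + 25*e^4) := by
        have h5a : IsCoprime a1 (5:ℤ) := by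
          apply coprime_of_no_prime (by rintro ⟨h', -⟩; omega)
          intro r hr h1 h2
          exact h5' (five_dvd_of_prime_dvd hr h2 h1)
        have h1 : IsCoprime a1 (25*e^4) := (h5a.mul_right h5a).mul_right (IsCoprime.pow_right cop1)
        have h2 : IsCoprime a1 (25*e^4 + a1*(5*a1 + 22*e^2)) := h1.add_mul_left_right _
        rwa [show 25*e^4 + a1*(5*a1 + 22*e^2) = 5*a1^2 + 22*a1*e^2 + 25*e^4 by ring] at h2
      obtain ⟨st, tt, hstpos, hsteq, htteq⟩ := hcme a1 ha1pos _ copM (by nlinarith) c1 hc1eq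
      have hfin : tt^2 = 5*st^4 + 22*st^2*e^2 + 25*e^4 := by
        rw [← htteq, hsteq]; ring
      have copS : IsCoprime st e :=
        cop1.of_isCoprime_of_dvd_left (by rw [hsteq]; exact dvd_pow_self st two_ne_zero)
      exact lemma_Q2 st e tt (by omega) he copS hfin
  · -- 5 ∤ a : Q1
    have copM : IsCoprime a (a^2 + 22*a*e^2 + 125*e^4) := by
      have h5a : IsCoprime a (5:ℤ) := by
        apply coprime_of_no_prime (by rintro ⟨h', -⟩; omega)
        intro r hr h1 h2
        exact h5 (five_dvd_of_prime_dvd hr h2 h1)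
      have h1 : IsCoprime a (125*e^4) :=
        ((h5a.mul_right h5a).mul_right h5a).mul_right (IsCoprime.pow_right cop)
      have h2 : IsCoprime a (125*e^4 + a*(a + 22*e^2)) := h1.add_mul_left_right _
      rwa [show 125*e^4 + a*(a + 22*e^2) = a^2 + 22*a*e^2 + 125*e^4 by ring] at h2
    obtain ⟨st, tt, hstpos, hsteq, htteq⟩ := hcme a ha _ copM (by nlinarith) c h
    have hfin : tt^2 = st^4 + 22*st^2*e^2 + 125*e^4 := by
      rw [← htteq, hsteq]; ring
    have copS : IsCoprime st e :=
      cop.of_isCoprime_of_dvd_left (by rw [hsteq]; exact dvd_pow_self st two_ne_zero)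
    exact lemma_Q1 e.natAbs st tt e rfl he copS hfin

/-- The set of affine rational points of the elliptic curve
`O₅ : y² = x³ + 22x² + 125x` over `ℚ` consists of exactly one point, `(0, 0)`. -/
theorem stmt_0 :
    {p : ℚ × ℚ | p.2 ^ 2 = p.1 ^ 3 + 22 * p.1 ^ 2 + 125 * p.1} = {(0, 0)} := by
  ext ⟨x, y⟩
  simp only [Set.mem_setOf_eq, Set.mem_singleton_iff, Prod.mk.injEq]
  constructor
  · intro hxy
    by_cases hx0 : x = 0
    · subst hx0
      refine ⟨rfl, ?_⟩
      have hy2 : y ^ 2 = 0 := by rw [hxy]; ring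
      exact pow_eq_zero_iff (two_ne_zero) |>.mp hy2
    · exfalso
      set a : ℤ := x.num with hadef
      set b : ℤ := (x.den : ℤ) with hbdef
      have hbpos : 0 < b := by rw [hbdef]; exact_mod_cast x.pos
      have hbneQ : (b : ℚ) ≠ 0 := by
        have : (0:ℤ) < b := hbpos
        positivity
      have cop_ab : IsCoprime a b := by
        rw [Int.isCoprime_iff_gcd_eq_one]
        show Int.gcd x.num (x.den : ℤ) = 1
        rw [Int.gcd]
        simp only [Int.natAbs_natCast]
        exact x.reduced
      have hxq : (x : ℚ) = (a : ℚ) / (b : ℚ) := (Rat.num_div_den x).symm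
      set N : ℤ := a * (a ^ 2 + 22 * a * b + 125 * b ^ 2) * b ^ 3 with hNdef
      set Y : ℚ := y * (b : ℚ) ^ 3 with hYdef
      have hYN : Y ^ 2 = (N : ℚ) := by
        rw [hYdef, hNdef]
        push_cast
        rw [mul_pow, hxy, hxq]
        field_simp
      have hYden : Y.den = 1 := by
        have h1 : (Y ^ 2).den = 1 := by rw [hYN]; exact Rat.den_intCast N
        rw [Rat.den_pow] at h1
        nlinarith [Y.pos]
      set c : ℤ := Y.num with hcdef
      have hYint : (c : ℚ) = Y := Rat.coe_int_num_of_den_eq_one hYden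
      have hcZ : c ^ 2 = N := by
        have : ((c ^ 2 : ℤ) : ℚ) = ((N : ℤ) : ℚ) := by
          push_cast
          rw [hYint, hYN]
        exact_mod_cast this
      -- the denominator is a square
      have copNb : IsCoprime (a * (a ^ 2 + 22 * a * b + 125 * b ^ 2)) (b ^ 3) := by
        have c2 : IsCoprime (a ^ 2 + 22 * a * b + 125 * b ^ 2) b := by
          have h1 : IsCoprime (a ^ 2) b := IsCoprime.pow_left cop_ab
          have h2 : IsCoprime (a ^ 2 + b * (22 * a + 125 * b)) b := h1.add_mul_left_left _
          rwa [show a ^ 2 + b * (22 * a + 125 * b) = a ^ 2 + 22 * a * b + 125 * b ^ 2 by ring]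
            at h2
        exact (cop_ab.mul_left c2).pow_right
      obtain ⟨f0, hf0⟩ := Int.sq_of_isCoprime copNb.symm
        (show b ^ 3 * (a * (a ^ 2 + 22 * a * b + 125 * b ^ 2)) = c ^ 2 by
          rw [hcZ, hNdef]; ring)
      have hb3 : b ^ 3 = f0 ^ 2 := by
        rcases hf0 with h' | h'
        · exact h'
        · exfalso; nlinarith [sq_nonneg f0, pow_pos hbpos 3]
      have hbf : b ∣ f0 := by
        apply (Int.pow_dvd_pow_iff two_ne_zero).mp
        exact ⟨b, by rw [← hb3]; ring⟩
      obtain ⟨e0, he0⟩ := hbf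
      have hbe : b = e0 ^ 2 := by
        have h1 : b ^ 2 * (b - e0 ^ 2) = 0 := by
          rw [he0] at hb3; linear_combination hb3
        rcases mul_eq_zero.mp h1 with h' | h'
        · exfalso; nlinarith [pow_pos hbpos 2]
        · linarith
      have he0ne : e0 ≠ 0 := by rintro rfl; simp at hbe; omega
      have he02 : 0 < e0 ^ 2 := lt_of_le_of_ne (sq_nonneg e0) (Ne.symm (pow_ne_zero 2 he0ne))
      have cop_ae : IsCoprime a e0 :=
        cop_ab.of_isCoprime_of_dvd_right (by rw [hbe]; exact dvd_pow_self e0 two_ne_zero)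
      have hNe : c ^ 2 = (a * (a ^ 2 + 22 * a * e0 ^ 2 + 125 * e0 ^ 4)) * (e0 ^ 3) ^ 2 := by
        rw [hcZ, hNdef, hbe]; ring
      have he3c : e0 ^ 3 ∣ c := by
        apply (Int.pow_dvd_pow_iff two_ne_zero).mp
        exact ⟨a * (a ^ 2 + 22 * a * e0 ^ 2 + 125 * e0 ^ 4), by rw [hNe]; ring⟩
      obtain ⟨c1, hcc1⟩ := he3c
      have hc1eq : c1 ^ 2 = a * (a ^ 2 + 22 * a * e0 ^ 2 + 125 * e0 ^ 4) := by
        have h1 : (e0 ^ 3) ^ 2 * (c1 ^ 2 - a * (a ^ 2 + 22 * a * e0 ^ 2 + 125 * e0 ^ 4)) = 0 := by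
          rw [hcc1] at hNe; linear_combination hNe
        rcases mul_eq_zero.mp h1 with h' | h'
        · exact absurd (pow_eq_zero_iff (by norm_num) |>.mp
            (pow_eq_zero_iff (by norm_num) |>.mp h' : e0 ^ 3 = 0) : e0 = 0) he0ne
        · linarith
      rcases lt_trichotomy a 0 with haneg | ha0 | hapos
      · have hM : 0 < a ^ 2 + 22 * a * e0 ^ 2 + 125 * e0 ^ 4 := by
          nlinarith [sq_nonneg (a + 11 * e0 ^ 2), he02]
        nlinarith [sq_nonneg c1]
      · exact hx0 (Rat.num_eq_zero.mp (hadef ▸ ha0))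
      · exact cascade a e0 c1 hapos he0ne cop_ae hc1eq
  · rintro ⟨rfl, rfl⟩
    norm_num
end

section
/- The set of affine rational points of the elliptic curve O_13 : y^2 = x^3 + 6x^2 + 13x over ℚ consists of exactly one point; that is, {(x, y) ∈ ℚ × ℚ : y^2 = x^3 + 6x^2 + 13x} = {(0, 0)}. -/
lemma aux_isCoprime_of_forall_unit {a b : ℤ}
    (H : ∀ d : ℤ, d ∣ a → d ∣ b → IsUnit d) : IsCoprime a b := by
  rw [Int.isCoprime_iff_gcd_eq_one]
  have h1 := H (Int.gcd a b) (Int.gcd_dvd_left a b) (Int.gcd_dvd_right a b)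
  rw [Int.isUnit_iff] at h1
  omega

lemma aux_sq_inj {x y : ℤ} (hx : 0 ≤ x) (hy : 0 ≤ y) (h : x ^ 2 = y ^ 2) : x = y := by
  nlinarith [sq_nonneg (x - y), sq_nonneg (x + y)]

lemma aux_odd_sq8 {u : ℤ} (h : u % 2 = 1) : ∃ k, u ^ 2 = 8 * k + 1 := by
  obtain ⟨i, hi⟩ : ∃ i, u = 2 * i + 1 := ⟨u / 2, by omega⟩
  subst hi
  rcases Int.even_or_odd i with ⟨j, hj⟩ | ⟨j, hj⟩
  · exact ⟨2 * j ^ 2 + j, by subst hj; ring⟩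
  · exact ⟨2 * j ^ 2 + 3 * j + 1, by subst hj; ring⟩

lemma aux_sq_of_coprime_pos {a b c : ℤ} (h : IsCoprime a b) (heq : a * b = c ^ 2)
    (ha : 0 < a) : ∃ d : ℤ, 0 ≤ d ∧ a = d ^ 2 := by
  obtain ⟨a0, h0 | h0⟩ := Int.sq_of_isCoprime h heq
  · exact ⟨|a0|, abs_nonneg _, by rw [sq_abs]; exact h0⟩
  · exfalso; nlinarith [sq_nonneg a0]

lemma aux_pow4_of_coprime_pos {a b c : ℤ} (h : IsCoprime a b) (heq : a * b = c ^ 4)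
    (ha : 0 < a) (hb : 0 < b) :
    ∃ g h' : ℤ, 0 ≤ g ∧ 0 ≤ h' ∧ a = g ^ 4 ∧ b = h' ^ 4 ∧ (g * h') ^ 2 = c ^ 2 := by
  have h1 : a * b = (c ^ 2) ^ 2 := by rw [heq]; ring
  obtain ⟨d, hd0, hd⟩ := aux_sq_of_coprime_pos h h1 ha
  obtain ⟨f, hf0, hf⟩ := aux_sq_of_coprime_pos h.symm (by rw [mul_comm]; exact h1) hb
  have hdf : IsCoprime d f := by
    have h2 := h
    rw [hd, hf] at h2
    exact IsCoprime.of_isCoprime_of_dvd_left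
      (IsCoprime.of_isCoprime_of_dvd_right h2 (dvd_pow_self f two_ne_zero))
      (dvd_pow_self d two_ne_zero)
  have hdpos : 0 < d := by nlinarith
  have hfpos : 0 < f := by nlinarith
  have hdfc : d * f = c ^ 2 := by
    have hsq : (d * f) ^ 2 = (c ^ 2) ^ 2 := by
      have h3 : d ^ 2 * f ^ 2 = (c ^ 2) ^ 2 := by rw [← hd, ← hf]; exact h1
      linear_combination h3
    exact aux_sq_inj (by positivity) (sq_nonneg c) hsq
  obtain ⟨g, hg0, hg⟩ := aux_sq_of_coprime_pos hdf hdfc hdpos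
  obtain ⟨h', hh0, hh⟩ := aux_sq_of_coprime_pos hdf.symm (by rw [mul_comm]; exact hdfc) hfpos
  refine ⟨g, h', hg0, hh0, by rw [hd, hg]; ring, by rw [hf, hh]; ring, ?_⟩
  have h4 : g ^ 2 * h' ^ 2 = c ^ 2 := by rw [← hg, ← hh]; exact hdfc
  linear_combination h4

lemma aux_coprime_two {t : ℤ} (h : t % 2 = 1) : IsCoprime t 2 := by
  obtain ⟨k, hk⟩ : ∃ k, t = 2 * k + 1 := ⟨t / 2, by omega⟩
  exact ⟨1, -k, by rw [hk]; ring⟩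

lemma aux_odd_of_dvd_odd {t D : ℤ} (ht : t ∣ D) (hD : D % 2 = 1) : t % 2 = 1 := by
  obtain ⟨w, hw⟩ := ht
  rcases Int.emod_two_eq t with h2 | h2
  · exfalso
    obtain ⟨s, hs⟩ : ∃ s, t = 2 * s := ⟨t / 2, by omega⟩
    obtain ⟨X, hX⟩ : ∃ X, D = 2 * X := ⟨s * w, by rw [hw, hs]; ring⟩
    omega
  · exact h2

/-- Coprime factorization of `r^4`: both factors are fourth powers up to a common sign. -/
lemma aux_factor4 {P Q r : ℤ} (hcop : IsCoprime P Q) (hPQ : P * Q = r ^ 4) (hr : 1 ≤ r) :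
    (∃ a b : ℤ, 1 ≤ a ∧ 1 ≤ b ∧ IsCoprime a b ∧ P = a ^ 4 ∧ Q = b ^ 4 ∧ a * b = r) ∨
    (∃ a b : ℤ, 1 ≤ a ∧ 1 ≤ b ∧ P = -(a ^ 2) ∧ Q = -(b ^ 2) ∧ a * b = r ^ 2) := by
  have hr4 : 0 < r ^ 4 := by positivity
  have hPne : P ≠ 0 := by rintro rfl; rw [zero_mul] at hPQ; omega
  have hQne : Q ≠ 0 := by rintro rfl; rw [mul_zero] at hPQ; omega
  rcases lt_or_gt_of_ne hPne with hPneg | hPpos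
  · -- P < 0, so Q < 0
    have hQneg : Q < 0 := by
      rcases lt_or_gt_of_ne hQne with h | h
      · exact h
      · exfalso; nlinarith
    right
    obtain ⟨a0, hP1 | hP1⟩ := Int.sq_of_isCoprime hcop (show P * Q = (r ^ 2) ^ 2 by rw [hPQ]; ring)
    · exfalso; nlinarith [sq_nonneg a0]
    obtain ⟨b0, hQ1 | hQ1⟩ := Int.sq_of_isCoprime hcop.symm
      (show Q * P = (r ^ 2) ^ 2 by rw [mul_comm, hPQ]; ring)
    · exfalso; nlinarith [sq_nonneg b0]
    refine ⟨|a0|, |b0|, ?_, ?_, by rw [sq_abs]; exact hP1, by rw [sq_abs]; exact hQ1, ?_⟩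
    · have : a0 ≠ 0 := by rintro rfl; simp at hP1; omega
      have := abs_pos.mpr this; omega
    · have : b0 ≠ 0 := by rintro rfl; simp at hQ1; omega
      have := abs_pos.mpr this; omega
    · refine aux_sq_inj (by positivity) (sq_nonneg r) ?_
      have h5 : (|a0| * |b0|) ^ 2 = P * Q := by
        rw [show (|a0| * |b0|) ^ 2 = |a0| ^ 2 * |b0| ^ 2 from by ring, sq_abs, sq_abs,
          show a0 ^ 2 * b0 ^ 2 = (-(a0 ^ 2)) * (-(b0 ^ 2)) from by ring, ← hP1, ← hQ1]
      rw [h5, hPQ]; ring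
  · -- P > 0, so Q > 0
    have hQpos : 0 < Q := by
      rcases lt_or_gt_of_ne hQne with h | h
      · exfalso; nlinarith
      · exact h
    left
    obtain ⟨g, h', hg0, hh0, hg, hh, hgh2⟩ := aux_pow4_of_coprime_pos hcop hPQ hPpos hQpos
    have hgh : g * h' = r := aux_sq_inj (by positivity) (by omega) hgh2
    have hg1 : 1 ≤ g := by
      have : g ≠ 0 := by rintro rfl; rw [zero_mul] at hgh; omega
      omega
    have hh1 : 1 ≤ h' := by
      have : h' ≠ 0 := by rintro rfl; rw [mul_zero] at hgh; omega
      omega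
    have hcopgh : IsCoprime g h' := by
      have h2 := hcop
      rw [hg, hh] at h2
      exact (h2.of_isCoprime_of_dvd_left (dvd_pow_self g (by norm_num))).of_isCoprime_of_dvd_right
        (dvd_pow_self h' (by norm_num))
    exact ⟨g, h', hg1, hh1, hcopgh, hg, hh, hgh⟩

lemma aux_one_le_pow4 {e : ℤ} (he : 1 ≤ e) : 1 ≤ e ^ 4 := by
  simpa using pow_le_pow_left₀ (by norm_num : (0:ℤ) ≤ 1) he 4

lemma aux_one_le_sq {e : ℤ} (he : 1 ≤ e) : 1 ≤ e ^ 2 := by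
  simpa using pow_le_pow_left₀ (by norm_num : (0:ℤ) ≤ 1) he 2

lemma aux_lt_of_sq {A v E : ℤ} (hA : 0 < A) (hv : 0 ≤ v) (hE : 1 ≤ E)
    (h : v ^ 2 = A ^ 2 + 4 * E) : A < v := by nlinarith

lemma aux_pos_contra {β aa bb : ℤ} (h1 : 1 ≤ β) (h : β ^ 2 + 4 * aa ^ 2 + (3 * aa - bb) ^ 2 = 0) :
    False := by nlinarith [sq_nonneg aa, sq_nonneg (3 * aa - bb), sq_nonneg β]

section main
variable {u e v : ℤ}

set_option maxHeartbeats 2000000 in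
lemma aux_case2 (he : 1 ≤ e) (hcop : IsCoprime u e) (hv0 : 0 ≤ v)
    (heq : v ^ 2 = u ^ 4 + 6 * u ^ 2 * e ^ 2 + 13 * e ^ 4)
    (hu2 : u % 2 = 1) (he2 : e % 2 = 1) : False := by
  have hv2 : v ^ 2 = (u ^ 2 + 3 * e ^ 2) ^ 2 + 4 * e ^ 4 := by linear_combination heq
  have hAe : IsCoprime (u ^ 2 + 3 * e ^ 2) e := by
    have h1 : IsCoprime (u ^ 2) e := hcop.pow_left
    have h2 := h1.add_mul_left_left (3 * e)
    rwa [show u ^ 2 + e * (3 * e) = u ^ 2 + 3 * e ^ 2 from by ring] at h2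
  obtain ⟨k, hk⟩ : ∃ k, u ^ 2 = 8 * k + 1 := by
    obtain ⟨i, hi⟩ : ∃ i, u = 2 * i + 1 := ⟨u / 2, by omega⟩
    subst hi
    rcases Int.even_or_odd i with ⟨j, hj⟩ | ⟨j, hj⟩
    · exact ⟨2 * j ^ 2 + j, by subst hj; ring⟩
    · exact ⟨2 * j ^ 2 + 3 * j + 1, by subst hj; ring⟩
  obtain ⟨l, hl⟩ : ∃ l, e ^ 2 = 8 * l + 1 := by
    obtain ⟨i, hi⟩ : ∃ i, e = 2 * i + 1 := ⟨e / 2, by omega⟩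
    subst hi
    rcases Int.even_or_odd i with ⟨j, hj⟩ | ⟨j, hj⟩
    · exact ⟨2 * j ^ 2 + j, by subst hj; ring⟩
    · exact ⟨2 * j ^ 2 + 3 * j + 1, by subst hj; ring⟩
  obtain ⟨A₂, hA4, hA₂odd⟩ : ∃ A₂, u ^ 2 + 3 * e ^ 2 = 4 * A₂ ∧ A₂ % 2 = 1 :=
    ⟨2 * (k + 3 * l) + 1, by rw [hk, hl]; ring, by omega⟩
  have hA₂pos : 1 ≤ A₂ := by
    have h3 : 3 ≤ 4 * A₂ := by rw [← hA4]; nlinarith [sq_nonneg u]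
    omega
  -- v even
  obtain ⟨v₁, hv₁⟩ : ∃ w, v = 2 * w := by
    rcases Int.emod_two_eq v with hve | hve
    · exact ⟨v / 2, by omega⟩
    · exfalso
      obtain ⟨w, hw⟩ : ∃ w, v = 2 * w + 1 := ⟨v / 2, by omega⟩
      obtain ⟨X, hX⟩ : ∃ X, (1 : ℤ) = 4 * X :=
        ⟨4 * A₂ ^ 2 + e ^ 4 - w ^ 2 - w, by
          linear_combination hv2 - (v + 2 * w + 1) * hw + (u ^ 2 + 3 * e ^ 2 + 4 * A₂) * hA4⟩
      omega
  have hv₁2 : v₁ ^ 2 = 4 * A₂ ^ 2 + e ^ 4 := by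
    have h4 : (4 : ℤ) * (v₁ ^ 2) = 4 * (4 * A₂ ^ 2 + e ^ 4) := by
      linear_combination hv2 - (v + 2 * v₁) * hv₁ + (u ^ 2 + 3 * e ^ 2 + 4 * A₂) * hA4
    exact mul_left_cancel₀ (by norm_num) h4
  have hv₁0 : 0 ≤ v₁ := by omega
  have hv₁gt : e ^ 2 < v₁ := by nlinarith [sq_nonneg e, sq_nonneg (e ^ 2)]
  obtain ⟨m, hm⟩ : ∃ m, e ^ 4 = 8 * m + 1 :=
    ⟨8 * l ^ 2 + 2 * l, by rw [show e ^ 4 = (e ^ 2) ^ 2 from by ring, hl]; ring⟩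
  have hv₁odd : v₁ % 2 = 1 := by
    rcases Int.emod_two_eq v₁ with h | h
    · exfalso
      obtain ⟨w, hw⟩ : ∃ w, v₁ = 2 * w := ⟨v₁ / 2, by omega⟩
      obtain ⟨X, hX⟩ : ∃ X, (1 : ℤ) = 4 * X :=
        ⟨w ^ 2 - A₂ ^ 2 - 2 * m, by linear_combination (v₁ + 2 * w) * hw - hv₁2 - hm⟩
      omega
    · exact h
  obtain ⟨s, hs⟩ : ∃ s, v₁ = 2 * s + 1 := ⟨v₁ / 2, by omega⟩
  obtain ⟨c, hc⟩ : ∃ c, v₁ - e ^ 2 = 2 * c := ⟨s - 4 * l, by rw [hs, hl]; ring⟩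
  obtain ⟨d, hd⟩ : ∃ d, v₁ + e ^ 2 = 2 * d := ⟨s + 4 * l + 1, by rw [hs, hl]; ring⟩
  have hc1 : 1 ≤ c := by
    have h5 : 0 < 2 * c := by rw [← hc]; linarith
    omega
  have hd1 : 1 ≤ d := by
    have h5 : 0 < 2 * d := by rw [← hd]; nlinarith [sq_nonneg e]
    omega
  have hcd : c * d = A₂ ^ 2 := by
    have h4 : (2 * c) * (2 * d) = 4 * A₂ ^ 2 := by rw [← hc, ← hd]; linear_combination hv₁2
    have h4' : (4 : ℤ) * (c * d) = 4 * A₂ ^ 2 := by linear_combination h4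
    exact mul_left_cancel₀ (by norm_num) h4'
  have hdiff : d - c = e ^ 2 := by linarith
  have hsum2 : c + d = v₁ := by linarith
  have hA₂e : IsCoprime A₂ e :=
    hAe.of_isCoprime_of_dvd_left ⟨4, by rw [hA4]; ring⟩
  have hcopcd : IsCoprime c d := aux_isCoprime_of_forall_unit fun t htc htd => by
    have hte : t ∣ e ^ 2 := hdiff ▸ dvd_sub htd htc
    have htA : t ∣ A₂ ^ 2 := hcd ▸ htc.mul_right d
    exact (hA₂e.pow).isUnit_of_dvd' htA hte
  obtain ⟨γ, hγ0, hγ⟩ := aux_sq_of_coprime_pos hcopcd hcd (by omega)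
  obtain ⟨δ, hδ0, hδ⟩ := aux_sq_of_coprime_pos hcopcd.symm (by rw [mul_comm]; exact hcd) (by omega)
  have hγδ : γ * δ = A₂ := by
    refine aux_sq_inj (by positivity) (by omega) ?_
    rw [show (γ * δ) ^ 2 = γ ^ 2 * δ ^ 2 from by ring, ← hγ, ← hδ, hcd]
  have hγ1 : 1 ≤ γ := by
    have : γ ≠ 0 := by rintro rfl; rw [zero_pow (by norm_num)] at hγ; omega
    omega
  have hδ1 : 1 ≤ δ := by
    have : δ ≠ 0 := by rintro rfl; rw [zero_pow (by norm_num)] at hδ; omega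
    omega
  have hcopγδ : IsCoprime γ δ := by
    have h2 := hcopcd
    rw [hγ, hδ] at h2
    exact (h2.of_isCoprime_of_dvd_left (dvd_pow_self γ two_ne_zero)).of_isCoprime_of_dvd_right
      (dvd_pow_self δ two_ne_zero)
  have hv₁' : γ ^ 2 + δ ^ 2 = v₁ := by
    rw [← hγ, ← hδ]; linarith
  have hpar : (δ - γ) % 2 = 1 := by
    rcases Int.emod_two_eq γ with h1 | h1 <;> rcases Int.emod_two_eq δ with h2 | h2
    · exfalso
      obtain ⟨a, ha⟩ : ∃ a, γ = 2 * a := ⟨γ / 2, by omega⟩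
      obtain ⟨b, hb⟩ : ∃ b, δ = 2 * b := ⟨δ / 2, by omega⟩
      obtain ⟨X, hX⟩ : ∃ X, v₁ = 2 * X :=
        ⟨2 * a ^ 2 + 2 * b ^ 2, by rw [← hv₁', ha, hb]; ring⟩
      omega
    · obtain ⟨a, ha⟩ : ∃ a, γ = 2 * a := ⟨γ / 2, by omega⟩
      obtain ⟨b, hb⟩ : ∃ b, δ = 2 * b + 1 := ⟨δ / 2, by omega⟩
      omega
    · obtain ⟨a, ha⟩ : ∃ a, γ = 2 * a + 1 := ⟨γ / 2, by omega⟩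
      obtain ⟨b, hb⟩ : ∃ b, δ = 2 * b := ⟨δ / 2, by omega⟩
      omega
    · exfalso
      obtain ⟨a, ha⟩ : ∃ a, γ = 2 * a + 1 := ⟨γ / 2, by omega⟩
      obtain ⟨b, hb⟩ : ∃ b, δ = 2 * b + 1 := ⟨δ / 2, by omega⟩
      obtain ⟨X, hX⟩ : ∃ X, v₁ = 2 * X :=
        ⟨2 * a ^ 2 + 2 * a + 2 * b ^ 2 + 2 * b + 1, by rw [← hv₁', ha, hb]; ring⟩
      omega
  have he2' : δ ^ 2 - γ ^ 2 = e ^ 2 := by rw [← hγ, ← hδ]; linarith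
  have hδγpos : 0 < δ - γ := by nlinarith [sq_nonneg e]
  have hcopmp : IsCoprime (δ - γ) (δ + γ) := aux_isCoprime_of_forall_unit fun t ht1 ht2 => by
    have htodd : t % 2 = 1 := aux_odd_of_dvd_odd ht1 hpar
    have ht2γ : t ∣ 2 * γ := by
      have h6 := dvd_sub ht2 ht1
      rwa [show δ + γ - (δ - γ) = 2 * γ from by ring] at h6
    have ht2δ : t ∣ 2 * δ := by
      have h6 := dvd_add ht1 ht2
      rwa [show δ - γ + (δ + γ) = 2 * δ from by ring] at h6
    have htγ : t ∣ γ := (aux_coprime_two htodd).dvd_of_dvd_mul_left ht2γ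
    have htδ : t ∣ δ := (aux_coprime_two htodd).dvd_of_dvd_mul_left ht2δ
    exact hcopγδ.isUnit_of_dvd' htγ htδ
  have he2'' : (δ - γ) * (δ + γ) = e ^ 2 := by linear_combination he2'
  obtain ⟨c₁, hc₁0, hc₁⟩ := aux_sq_of_coprime_pos hcopmp he2'' hδγpos
  obtain ⟨d₁, hd₁0, hd₁⟩ := aux_sq_of_coprime_pos hcopmp.symm (by rw [mul_comm]; exact he2'')
    (by linarith)
  have hc₁odd : c₁ % 2 = 1 := by
    refine aux_odd_of_dvd_odd ?_ hpar
    rw [hc₁]; exact dvd_pow_self c₁ two_ne_zero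
  have hd₁odd : d₁ % 2 = 1 := by
    have hpar2 : (δ + γ) % 2 = 1 := by omega
    refine aux_odd_of_dvd_odd ?_ hpar2
    rw [hd₁]; exact dvd_pow_self d₁ two_ne_zero
  have hγ2 : 2 * γ = d₁ ^ 2 - c₁ ^ 2 := by rw [← hc₁, ← hd₁]; ring
  have hδ2 : 2 * δ = d₁ ^ 2 + c₁ ^ 2 := by rw [← hc₁, ← hd₁]; ring
  have hee : e ^ 2 = c₁ ^ 2 * d₁ ^ 2 := by rw [← hc₁, ← hd₁]; linear_combination -he2'
  have h4γδ : 4 * (γ * δ) = d₁ ^ 4 - c₁ ^ 4 := by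
    linear_combination (2 * δ) * hγ2 + (d₁ ^ 2 - c₁ ^ 2) * hδ2
  have hfin : u ^ 2 = d₁ ^ 4 - c₁ ^ 4 - 3 * (c₁ ^ 2 * d₁ ^ 2) := by
    have h1 : u ^ 2 + 3 * e ^ 2 = 4 * (γ * δ) := by rw [hA4, ← hγδ]
    linear_combination h1 + h4γδ - 3 * hee
  obtain ⟨L, hL⟩ : ∃ L, c₁ ^ 2 = 8 * L + 1 := aux_odd_sq8 hc₁odd
  obtain ⟨M, hM⟩ : ∃ M, d₁ ^ 2 = 8 * M + 1 := aux_odd_sq8 hd₁odd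
  obtain ⟨L4, hL4⟩ : ∃ x, c₁ ^ 4 = 16 * x + 1 :=
    ⟨4 * L ^ 2 + L, by rw [show c₁ ^ 4 = (c₁ ^ 2) ^ 2 from by ring, hL]; ring⟩
  obtain ⟨M4, hM4⟩ : ∃ x, d₁ ^ 4 = 16 * x + 1 :=
    ⟨4 * M ^ 2 + M, by rw [show d₁ ^ 4 = (d₁ ^ 2) ^ 2 from by ring, hM]; ring⟩
  obtain ⟨P, hP'⟩ : ∃ x, c₁ ^ 2 * d₁ ^ 2 = 8 * x + 1 :=
    ⟨8 * L * M + L + M, by rw [hL, hM]; ring⟩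
  have hfin2 : 8 * k + 1 = (16 * M4 + 1) - (16 * L4 + 1) - 3 * (8 * P + 1) := by
    rw [← hk, ← hM4, ← hL4, ← hP']; exact hfin
  omega
end main

section main
variable {u e v : ℤ}

set_option maxHeartbeats 2000000 in
lemma aux_case1 (he : 1 ≤ e) (hcop : IsCoprime u e) (hv0 : 0 ≤ v)
    (heq : v ^ 2 = u ^ 4 + 6 * u ^ 2 * e ^ 2 + 13 * e ^ 4)
    (hpar : u % 2 + e % 2 = 1) :
    ∃ e' u' v' : ℤ, 1 ≤ e' ∧ e' < e ∧ IsCoprime u' e' ∧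
      v' ^ 2 = u' ^ 4 + 6 * u' ^ 2 * e' ^ 2 + 13 * e' ^ 4 := by
  have he4 : 1 ≤ e ^ 4 := aux_one_le_pow4 he
  have hApos : 0 < u ^ 2 + 3 * e ^ 2 := by
    have h1 : 1 ≤ e ^ 2 := aux_one_le_sq he
    linarith [sq_nonneg u]
  have hv2 : v ^ 2 = (u ^ 2 + 3 * e ^ 2) ^ 2 + 4 * e ^ 4 := by linear_combination heq
  have hAe : IsCoprime (u ^ 2 + 3 * e ^ 2) e := by
    have h1 : IsCoprime (u ^ 2) e := hcop.pow_left
    have h2 := h1.add_mul_left_left (3 * e)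
    rwa [show u ^ 2 + e * (3 * e) = u ^ 2 + 3 * e ^ 2 from by ring] at h2
  -- A is odd
  obtain ⟨A₀, hA₀⟩ : ∃ t, u ^ 2 + 3 * e ^ 2 = 2 * t + 1 := by
    rcases Int.emod_two_eq u with hu2 | hu2 <;> rcases Int.emod_two_eq e with he2 | he2
    · omega
    · obtain ⟨i, hi⟩ : ∃ i, u = 2 * i := ⟨u / 2, by omega⟩
      obtain ⟨j, hj⟩ : ∃ j, e = 2 * j + 1 := ⟨e / 2, by omega⟩
      exact ⟨2 * i ^ 2 + 6 * j ^ 2 + 6 * j + 1, by rw [hi, hj]; ring⟩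
    · obtain ⟨i, hi⟩ : ∃ i, u = 2 * i + 1 := ⟨u / 2, by omega⟩
      obtain ⟨j, hj⟩ : ∃ j, e = 2 * j := ⟨e / 2, by omega⟩
      exact ⟨2 * i ^ 2 + 2 * i + 6 * j ^ 2, by rw [hi, hj]; ring⟩
    · omega
  -- v is odd
  have hvodd : v % 2 = 1 := by
    rcases Int.emod_two_eq v with h | h
    · exfalso
      obtain ⟨w, hw⟩ : ∃ w, v = 2 * w := ⟨v / 2, by omega⟩
      obtain ⟨X, hX⟩ : ∃ X, (1 : ℤ) = 4 * X :=
        ⟨w ^ 2 - A₀ ^ 2 - A₀ - e ^ 4, by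
          linear_combination (v + 2 * w) * hw - hv2 -
            (u ^ 2 + 3 * e ^ 2 + 2 * A₀ + 1) * hA₀⟩
      omega
    · exact h
  obtain ⟨V, hV⟩ : ∃ V, v = 2 * V + 1 := ⟨v / 2, by omega⟩
  obtain ⟨a, ha⟩ : ∃ a, v - (u ^ 2 + 3 * e ^ 2) = 2 * a := ⟨V - A₀, by rw [hV, hA₀]; ring⟩
  obtain ⟨b, hb⟩ : ∃ b, v + (u ^ 2 + 3 * e ^ 2) = 2 * b := ⟨V + A₀ + 1, by rw [hV, hA₀]; ring⟩
  have hvA : u ^ 2 + 3 * e ^ 2 < v :=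
    aux_lt_of_sq hApos hv0 he4 (by linear_combination hv2)
  have hapos : 0 < a := by
    have h5 : 0 < 2 * a := by rw [← ha]; linarith
    omega
  have hbpos : 0 < b := by
    have h5 : 0 < 2 * b := by rw [← hb]; linarith
    omega
  have hab : a * b = e ^ 4 := by
    have h4 : (2 * a) * (2 * b) = 4 * e ^ 4 := by rw [← ha, ← hb]; linear_combination hv2
    have h4' : (4 : ℤ) * (a * b) = 4 * e ^ 4 := by linear_combination h4
    exact mul_left_cancel₀ (by norm_num) h4'
  have hbma : b - a = u ^ 2 + 3 * e ^ 2 := by linarith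
  have hvab : a + b = v := by linarith
  have hcopab : IsCoprime a b := aux_isCoprime_of_forall_unit fun d hda hdb => by
    have hdA : d ∣ u ^ 2 + 3 * e ^ 2 := hbma ▸ dvd_sub hdb hda
    have hde : d ∣ e ^ 4 := hab ▸ hda.mul_right b
    exact (hAe.pow_right).isUnit_of_dvd' hdA hde
  obtain ⟨α, β, hα0, hβ0, hαe, hβe, hαβ2⟩ :=
    aux_pow4_of_coprime_pos hcopab hab hapos hbpos
  have hαβ : α * β = e := aux_sq_inj (by positivity) (by omega) hαβ2
  have hα1 : 1 ≤ α := by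
    have : α ≠ 0 := by rintro rfl; rw [zero_mul] at hαβ; omega
    omega
  have hβ1 : 1 ≤ β := by
    have : β ≠ 0 := by rintro rfl; rw [mul_zero] at hαβ; omega
    omega
  have hcopαβ : IsCoprime α β := by
    have h2 := hcopab
    rw [hαe, hβe] at h2
    exact (h2.of_isCoprime_of_dvd_left (dvd_pow_self α (by norm_num))).of_isCoprime_of_dvd_right
      (dvd_pow_self β (by norm_num))
  have hv4 : v = α ^ 4 + β ^ 4 := by rw [← hαe, ← hβe]; linarith
  -- main quartic
  have hQ2 : u ^ 2 = β ^ 4 - 3 * (α ^ 2 * β ^ 2) - α ^ 4 := by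
    have hee : e ^ 2 = α ^ 2 * β ^ 2 := by rw [← hαβ]; ring
    have hbma' : β ^ 4 - α ^ 4 = u ^ 2 + 3 * e ^ 2 := by rw [← hαe, ← hβe]; linarith
    linear_combination (-1 : ℤ) * hbma' - 3 * hee
  -- parity of α, β
  rcases Int.emod_two_eq α with hα2 | hα2 <;> rcases Int.emod_two_eq β with hβ2 | hβ2
  · -- both even: impossible (coprime)
    exfalso
    have h2α : (2 : ℤ) ∣ α := by omega
    have h2β : (2 : ℤ) ∣ β := by omega
    have := hcopαβ.isUnit_of_dvd' h2α h2β
    rcases Int.isUnit_iff.mp this with h | h <;> norm_num at h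
  · -- α even, β odd : the descent
    have he2 : e % 2 = 0 := by
      obtain ⟨c, hc⟩ : ∃ c, α = 2 * c := ⟨α / 2, by omega⟩
      obtain ⟨X, hX⟩ : ∃ X, e = 2 * X := ⟨c * β, by rw [← hαβ, hc]; ring⟩
      omega
    have hu2 : u % 2 = 1 := by omega
    obtain ⟨r, hr⟩ : ∃ r, α = 2 * r := ⟨α / 2, by omega⟩
    subst hr
    have hr1 : 1 ≤ r := by omega
    obtain ⟨k, hk⟩ := aux_odd_sq8 hβ2
    obtain ⟨i, hi⟩ : ∃ i, u = 2 * i + 1 := ⟨u / 2, by omega⟩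
    obtain ⟨p₁, hp₁⟩ : ∃ p, β ^ 2 - 6 * r ^ 2 - u = 2 * p :=
      ⟨4 * k - 3 * r ^ 2 - i, by rw [hk, hi]; ring⟩
    obtain ⟨q₁, hq₁⟩ : ∃ q, β ^ 2 - 6 * r ^ 2 + u = 2 * q :=
      ⟨4 * k - 3 * r ^ 2 + i + 1, by rw [hk, hi]; ring⟩
    have hpq4 : (2 * p₁) * (2 * q₁) = 52 * r ^ 4 := by
      rw [← hp₁, ← hq₁]; linear_combination (-1 : ℤ) * hQ2
    have hP : p₁ * q₁ = 13 * r ^ 4 := by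
      have h4' : (4 : ℤ) * (p₁ * q₁) = 4 * (13 * r ^ 4) := by linear_combination hpq4
      exact mul_left_cancel₀ (by norm_num) h4'
    have hqp : q₁ - p₁ = u := by linarith
    have hsum : p₁ + q₁ = β ^ 2 - 6 * r ^ 2 := by linarith
    have hur : IsCoprime u r := hcop.of_isCoprime_of_dvd_right ⟨2 * β, by rw [← hαβ]; ring⟩
    have hcoppq : IsCoprime p₁ q₁ := aux_isCoprime_of_forall_unit fun d hdp hdq => by
      have hdu : d ∣ u := hqp ▸ dvd_sub hdq hdp
      have hd13 : d ∣ 13 := by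
        have hdr : IsCoprime d (r ^ 4) := (hur.of_isCoprime_of_dvd_left hdu).pow_right
        have hd' : d ∣ 13 * r ^ 4 := hP ▸ hdp.mul_right q₁
        exact hdr.dvd_of_dvd_mul_right hd'
      have h13 : d.natAbs ∣ 13 := by
        have := Int.natAbs_dvd_natAbs.mpr hd13
        simpa using this
      rcases (by norm_num : Nat.Prime 13).eq_one_or_self_of_dvd _ h13 with h1 | h1
      · exact Int.isUnit_iff_natAbs_eq.mpr h1
      · exfalso
        have hd13p : (13 : ℤ) ∣ p₁ := by
          have h2 := Int.natAbs_dvd.mpr hdp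
          rwa [h1] at h2
        have hd13q : (13 : ℤ) ∣ q₁ := by
          have h2 := Int.natAbs_dvd.mpr hdq
          rwa [h1] at h2
        obtain ⟨P2, hP2⟩ := hd13p
        obtain ⟨Q2, hQ2'⟩ := hd13q
        have h13r : (13 : ℤ) ∣ r ^ 4 := by
          have hv13 : (13 : ℤ) * (P2 * Q2 * 13) = 13 * r ^ 4 := by
            rw [← hP, hP2, hQ2']; ring
          have := mul_left_cancel₀ (show (13 : ℤ) ≠ 0 by norm_num) hv13
          exact ⟨P2 * Q2, by linarith⟩
        have h13rr : (13 : ℤ) ∣ r := (by norm_num : Prime (13 : ℤ)).dvd_of_dvd_pow h13r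
        have hd13u : (13 : ℤ) ∣ u := by
          have h2 := Int.natAbs_dvd.mpr hdu
          rwa [h1] at h2
        have := hur.isUnit_of_dvd' hd13u h13rr
        rcases Int.isUnit_iff.mp this with h | h <;> norm_num at h
    have h13pq : (13 : ℤ) ∣ p₁ * q₁ := by rw [hP]; exact ⟨r ^ 4, rfl⟩
    rcases ((by norm_num : Prime (13 : ℤ)).dvd_mul.mp h13pq) with hc13 | hc13
    · -- 13 ∣ p₁
      obtain ⟨p₂, hp₂⟩ := hc13
      have hPQ : p₂ * q₁ = r ^ 4 := by
        have h4' : (13 : ℤ) * (p₂ * q₁) = 13 * r ^ 4 := by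
          rw [show (13 : ℤ) * (p₂ * q₁) = (13 * p₂) * q₁ from by ring, ← hp₂, hP]
        exact mul_left_cancel₀ (by norm_num) h4'
      have hcop2 : IsCoprime p₂ q₁ :=
        hcoppq.of_isCoprime_of_dvd_left ⟨13, by rw [hp₂]; ring⟩
      rcases aux_factor4 hcop2 hPQ hr1 with ⟨aa, bb, ha1, hb1, hcopab2, hPa, hQb, habr⟩ |
        ⟨aa, bb, ha1, hb1, hPa, hQb, habr⟩
      · -- positive: new solution  β² = bb⁴ + 6 bb² aa² + 13 aa⁴ , with e' = aa
        refine ⟨aa, bb, β, ha1, ?_, hcopab2.symm, ?_⟩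
        · -- aa < e = 2 r β
          have h5 : aa ≤ r := by
            calc aa = aa * 1 := by ring
              _ ≤ aa * bb := mul_le_mul_of_nonneg_left hb1 (by linarith)
              _ = r := habr
          have h6 : 2 * r ≤ 2 * r * β := le_mul_of_one_le_right (by linarith) hβ1
          have h7 : 2 * r * β = e := hαβ
          linarith
        · have hp₁a : p₁ = 13 * aa ^ 4 := by rw [hp₂, hPa]
          have hq₁b : q₁ = bb ^ 4 := hQb
          have h6 : r ^ 2 = aa ^ 2 * bb ^ 2 := by rw [← habr]; ring
          linear_combination (-1 : ℤ) * hsum + hp₁a + hq₁b + 6 * h6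
      · -- negative: contradiction by positivity
        exfalso
        have hzero : β ^ 2 + 4 * aa ^ 2 + (3 * aa - bb) ^ 2 = 0 := by
          linear_combination (-1 : ℤ) * hsum + hp₂ + 13 * hPa + hQb - 6 * habr
        exact aux_pos_contra hβ1 hzero
    · -- 13 ∣ q₁
      obtain ⟨q₂, hq₂⟩ := hc13
      have hPQ : p₁ * q₂ = r ^ 4 := by
        have h4' : (13 : ℤ) * (p₁ * q₂) = 13 * r ^ 4 := by
          rw [show (13 : ℤ) * (p₁ * q₂) = p₁ * (13 * q₂) from by ring, ← hq₂, hP]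
        exact mul_left_cancel₀ (by norm_num) h4'
      have hcop2 : IsCoprime p₁ q₂ :=
        hcoppq.of_isCoprime_of_dvd_right ⟨13, by rw [hq₂]; ring⟩
      rcases aux_factor4 hcop2 hPQ hr1 with ⟨aa, bb, ha1, hb1, hcopab2, hPa, hQb, habr⟩ |
        ⟨aa, bb, ha1, hb1, hPa, hQb, habr⟩
      · refine ⟨bb, aa, β, hb1, ?_, hcopab2, ?_⟩
        · have h5 : bb ≤ r := by
            calc bb = 1 * bb := by ring
              _ ≤ aa * bb := mul_le_mul_of_nonneg_right ha1 (by linarith)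
              _ = r := habr
          have h6 : 2 * r ≤ 2 * r * β := le_mul_of_one_le_right (by linarith) hβ1
          have h7 : 2 * r * β = e := hαβ
          linarith
        · have hq₁b : q₁ = 13 * bb ^ 4 := by rw [hq₂, hQb]
          have h6 : r ^ 2 = aa ^ 2 * bb ^ 2 := by rw [← habr]; ring
          linear_combination (-1 : ℤ) * hsum + hPa + hq₁b + 6 * h6
      · exfalso
        have hzero2 : β ^ 2 + 4 * bb ^ 2 + (aa - 3 * bb) ^ 2 = 0 := by
          linear_combination (-1 : ℤ) * hsum + hq₂ + 13 * hQb + hPa - 6 * habr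
        exact aux_pos_contra (aa := bb) (bb := aa) hβ1 (by linear_combination hzero2)
  · -- α odd, β even : contradiction mod 4
    exfalso
    have he2 : e % 2 = 0 := by
      obtain ⟨c, hc⟩ : ∃ c, β = 2 * c := ⟨β / 2, by omega⟩
      obtain ⟨X, hX⟩ : ∃ X, e = 2 * X := ⟨α * c, by rw [← hαβ, hc]; ring⟩
      omega
    have hu2 : u % 2 = 1 := by omega
    obtain ⟨B, hB⟩ : ∃ c, β = 2 * c := ⟨β / 2, by omega⟩
    subst hB
    obtain ⟨k, hk⟩ := aux_odd_sq8 hu2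
    obtain ⟨j, hj⟩ := aux_odd_sq8 hα2
    obtain ⟨j4, hj4⟩ : ∃ x, α ^ 4 = 16 * x + 1 :=
      ⟨4 * j ^ 2 + j, by rw [show α ^ 4 = (α ^ 2) ^ 2 from by ring, hj]; ring⟩
    obtain ⟨X, Y, Z, W, hfin⟩ : ∃ X Y Z W : ℤ,
        8 * k + 1 = 16 * X - 12 * Y - 96 * Z - 16 * W - 1 :=
      ⟨B ^ 4, B ^ 2, j * B ^ 2, j4, by
        linear_combination (-1 : ℤ) * hk + hQ2 + (-12 * B ^ 2) * hj + (-1 : ℤ) * hj4⟩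
    omega
  · -- both odd : v even, contradiction with v odd
    exfalso
    obtain ⟨i, hi⟩ : ∃ i, α = 2 * i + 1 := ⟨α / 2, by omega⟩
    obtain ⟨j, hj⟩ : ∃ j, β = 2 * j + 1 := ⟨β / 2, by omega⟩
    obtain ⟨X, hX⟩ : ∃ X, v = 2 * X :=
      ⟨8 * i ^ 4 + 16 * i ^ 3 + 12 * i ^ 2 + 4 * i + 8 * j ^ 4 + 16 * j ^ 3 + 12 * j ^ 2 +
        4 * j + 1, by rw [hv4, hi, hj]; ring⟩
    omega

end main

lemma aux_descent : ∀ n : ℕ, ∀ e u v : ℤ, e.natAbs = n → 1 ≤ e → IsCoprime u e →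
    v ^ 2 = u ^ 4 + 6 * u ^ 2 * e ^ 2 + 13 * e ^ 4 → False := by
  intro n
  induction n using Nat.strong_induction_on with
  | _ n ih =>
    intro e u v hen he hcop heq
    have heq' : |v| ^ 2 = u ^ 4 + 6 * u ^ 2 * e ^ 2 + 13 * e ^ 4 := by rw [sq_abs]; exact heq
    rcases Int.emod_two_eq u with hu2 | hu2 <;> rcases Int.emod_two_eq e with he2 | he2
    · have h2u : (2 : ℤ) ∣ u := by omega
      have h2e : (2 : ℤ) ∣ e := by omega
      have hun := hcop.isUnit_of_dvd' h2u h2e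
      rcases Int.isUnit_iff.mp hun with h | h <;> norm_num at h
    · obtain ⟨e', u', v', he'1, he'lt, hcop', heq''⟩ :=
        aux_case1 he hcop (abs_nonneg v) heq' (by omega)
      exact ih e'.natAbs (by omega) e' u' v' rfl he'1 hcop' heq''
    · obtain ⟨e', u', v', he'1, he'lt, hcop', heq''⟩ :=
        aux_case1 he hcop (abs_nonneg v) heq' (by omega)
      exact ih e'.natAbs (by omega) e' u' v' rfl he'1 hcop' heq''
    · exact aux_case2 he hcop (abs_nonneg v) heq' hu2 he2

set_option maxHeartbeats 1000000 in
lemma aux_int_reduction {m n p q : ℤ} (hm : 0 < m) (hn : 0 < n) (hq : 0 < q)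
    (hmn : IsCoprime m n) (hpq : IsCoprime p q)
    (hZ : p ^ 2 * n ^ 3 = q ^ 2 * (m ^ 3 + 6 * m ^ 2 * n + 13 * m * n ^ 2)) : False := by
  have hq2n3 : q ^ 2 ∣ n ^ 3 := by
    have h1 : q ^ 2 ∣ p ^ 2 * n ^ 3 := ⟨m ^ 3 + 6 * m ^ 2 * n + 13 * m * n ^ 2, hZ⟩
    exact (hpq.symm.pow).dvd_of_dvd_mul_left h1
  have hMn : IsCoprime (m ^ 3 + 6 * m ^ 2 * n + 13 * m * n ^ 2) n := by
    have h3 : IsCoprime (m ^ 3) n := hmn.pow_left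
    have h4 := h3.add_mul_left_left (6 * m ^ 2 + 13 * m * n)
    rwa [show m ^ 3 + n * (6 * m ^ 2 + 13 * m * n) = m ^ 3 + 6 * m ^ 2 * n + 13 * m * n ^ 2
      from by ring] at h4
  have hn3q : n ^ 3 ∣ q ^ 2 := by
    have h1 : n ^ 3 ∣ q ^ 2 * (m ^ 3 + 6 * m ^ 2 * n + 13 * m * n ^ 2) :=
      ⟨p ^ 2, by linear_combination -hZ⟩
    exact (hMn.symm.pow_left).dvd_of_dvd_mul_right h1
  have hn3q2 : n ^ 3 = q ^ 2 := Int.dvd_antisymm (by positivity) (by positivity) hn3q hq2n3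
  obtain ⟨N, hN⟩ : ∃ N : ℕ, (N : ℤ) = n := ⟨n.toNat, by omega⟩
  obtain ⟨Q, hQ⟩ : ∃ Q : ℕ, (Q : ℤ) = q := ⟨q.toNat, by omega⟩
  have hNQ : N ^ 3 = Q ^ 2 := by
    have h1 : (N : ℤ) ^ 3 = (Q : ℤ) ^ 2 := by rw [hN, hQ]; exact hn3q2
    exact_mod_cast h1
  have hNd : N ∣ Q := by
    refine (Nat.pow_dvd_pow_iff two_ne_zero).mp ?_
    have h1 : N ^ 2 ∣ N ^ 3 := pow_dvd_pow N (by norm_num)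
    rwa [hNQ] at h1
  obtain ⟨t, ht⟩ := hNd
  have hNpos : 0 < N := by omega
  have hNt : N = t ^ 2 := by
    have h1 : N ^ 2 * N = N ^ 2 * t ^ 2 := by
      rw [show N ^ 2 * N = N ^ 3 from by ring, hNQ, ht]; ring
    exact Nat.eq_of_mul_eq_mul_left (by positivity) h1
  have htne : t ≠ 0 := by rintro rfl; simp at hNt; omega
  have ht1 : 1 ≤ (t : ℤ) := by exact_mod_cast Nat.one_le_iff_ne_zero.mpr htne
  have hn2 : n = (t : ℤ) ^ 2 := by rw [← hN, hNt]; push_cast; ring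
  have hq3 : q = (t : ℤ) ^ 3 := by
    have h1 : Q = t ^ 3 := by rw [ht, hNt]; ring
    rw [← hQ, h1]; push_cast; ring
  have ht6 : ((t : ℤ) ^ 6) ≠ 0 := by positivity
  have hmain : p ^ 2 = m * (m ^ 2 + 6 * m * (t : ℤ) ^ 2 + 13 * (t : ℤ) ^ 4) := by
    rw [hn2, hq3] at hZ
    have h1 : p ^ 2 * (t : ℤ) ^ 6 =
        (m * (m ^ 2 + 6 * m * (t : ℤ) ^ 2 + 13 * (t : ℤ) ^ 4)) * (t : ℤ) ^ 6 := by
      linear_combination hZ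
    exact mul_right_cancel₀ ht6 h1
  have hmT : IsCoprime m ((t : ℤ)) := hmn.of_isCoprime_of_dvd_right ⟨t, by rw [hn2]; ring⟩
  by_cases h13 : (13 : ℤ) ∣ m
  · -- 13 ∣ m
    obtain ⟨m', hm'⟩ := h13
    have hp169 : p ^ 2 = 169 * (m' * (13 * m' ^ 2 + 6 * m' * (t : ℤ) ^ 2 + (t : ℤ) ^ 4)) := by
      rw [hmain, hm']; ring
    have h13p : (13 : ℤ) ∣ p := by
      refine (by norm_num : Prime (13 : ℤ)).dvd_of_dvd_pow (n := 2) ?_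
      exact ⟨13 * (m' * (13 * m' ^ 2 + 6 * m' * (t : ℤ) ^ 2 + (t : ℤ) ^ 4)),
        by rw [hp169]; ring⟩
    obtain ⟨p₀, hp₀⟩ := h13p
    have hmain' : p₀ ^ 2 = m' * (13 * m' ^ 2 + 6 * m' * (t : ℤ) ^ 2 + (t : ℤ) ^ 4) := by
      have h1 : (169 : ℤ) * (p₀ ^ 2) =
          169 * (m' * (13 * m' ^ 2 + 6 * m' * (t : ℤ) ^ 2 + (t : ℤ) ^ 4)) := by
        rw [← hp169, hp₀]; ring
      exact mul_left_cancel₀ (by norm_num) h1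
    have hm'pos : 0 < m' := by omega
    have hm'T : IsCoprime m' ((t : ℤ)) := hmT.of_isCoprime_of_dvd_left ⟨13, by rw [hm']; ring⟩
    have hcopM'K : IsCoprime m' (13 * m' ^ 2 + 6 * m' * (t : ℤ) ^ 2 + (t : ℤ) ^ 4) :=
      aux_isCoprime_of_forall_unit fun d hdm hdK => by
        have hdT : d ∣ (t : ℤ) ^ 4 := by
          have hrw : (t : ℤ) ^ 4 = (13 * m' ^ 2 + 6 * m' * (t : ℤ) ^ 2 + (t : ℤ) ^ 4)
              - m' * (13 * m' + 6 * (t : ℤ) ^ 2) := by ring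
          rw [hrw]; exact dvd_sub hdK (hdm.mul_right _)
        exact ((hm'T.of_isCoprime_of_dvd_left hdm).pow_right).isUnit_of_dvd' dvd_rfl hdT
    have hK'pos : 0 < 13 * m' ^ 2 + 6 * m' * (t : ℤ) ^ 2 + (t : ℤ) ^ 4 := by
      nlinarith [sq_nonneg ((t : ℤ) ^ 2 + 3 * m'), sq_nonneg m']
    obtain ⟨a, ha0, ham⟩ := aux_sq_of_coprime_pos hcopM'K
      (show m' * (13 * m' ^ 2 + 6 * m' * (t : ℤ) ^ 2 + (t : ℤ) ^ 4) = p₀ ^ 2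
        from by linear_combination -hmain') hm'pos
    obtain ⟨b, hb0, hbK⟩ := aux_sq_of_coprime_pos hcopM'K.symm
      (show (13 * m' ^ 2 + 6 * m' * (t : ℤ) ^ 2 + (t : ℤ) ^ 4) * m' = p₀ ^ 2
        from by linear_combination -hmain') hK'pos
    have hbeq : b ^ 2 = (t : ℤ) ^ 4 + 6 * (t : ℤ) ^ 2 * a ^ 2 + 13 * a ^ 4 := by
      linear_combination (-1 : ℤ) * hbK + (13 * (m' + a ^ 2) + 6 * (t : ℤ) ^ 2) * ham
    have hane : a ≠ 0 := by rintro rfl; simp at ham; omega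
    have ha1 : 1 ≤ a := by omega
    have hcopTa : IsCoprime ((t : ℤ)) a :=
      (hm'T.of_isCoprime_of_dvd_left ⟨a, by rw [ham]; ring⟩).symm
    exact aux_descent a.natAbs a (t : ℤ) b rfl ha1 hcopTa hbeq
  · -- 13 ∤ m
    have hcopMK : IsCoprime m (m ^ 2 + 6 * m * (t : ℤ) ^ 2 + 13 * (t : ℤ) ^ 4) :=
      aux_isCoprime_of_forall_unit fun d hdm hdK => by
        have hdT : d ∣ 13 * (t : ℤ) ^ 4 := by
          have hrw : 13 * (t : ℤ) ^ 4 = (m ^ 2 + 6 * m * (t : ℤ) ^ 2 + 13 * (t : ℤ) ^ 4)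
              - m * (m + 6 * (t : ℤ) ^ 2) := by ring
          rw [hrw]; exact dvd_sub hdK (hdm.mul_right _)
        have hdcop : IsCoprime d ((t : ℤ) ^ 4) := (hmT.of_isCoprime_of_dvd_left hdm).pow_right
        have hd13 : d ∣ 13 := hdcop.dvd_of_dvd_mul_right hdT
        have h13' : d.natAbs ∣ 13 := by
          have := Int.natAbs_dvd_natAbs.mpr hd13
          simpa using this
        rcases (by norm_num : Nat.Prime 13).eq_one_or_self_of_dvd _ h13' with h1 | h1
        · exact Int.isUnit_iff_natAbs_eq.mpr h1
        · exfalso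
          apply h13
          have h2 := Int.natAbs_dvd.mpr hdm
          rwa [h1] at h2
    have hKpos : 0 < m ^ 2 + 6 * m * (t : ℤ) ^ 2 + 13 * (t : ℤ) ^ 4 := by
      nlinarith [sq_nonneg (m + 3 * (t : ℤ) ^ 2), aux_one_le_pow4 ht1]
    obtain ⟨a, ha0, ham⟩ := aux_sq_of_coprime_pos hcopMK
      (show m * (m ^ 2 + 6 * m * (t : ℤ) ^ 2 + 13 * (t : ℤ) ^ 4) = p ^ 2
        from by linear_combination -hmain) hm
    obtain ⟨b, hb0, hbK⟩ := aux_sq_of_coprime_pos hcopMK.symm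
      (show (m ^ 2 + 6 * m * (t : ℤ) ^ 2 + 13 * (t : ℤ) ^ 4) * m = p ^ 2
        from by linear_combination -hmain) hKpos
    have hbeq : b ^ 2 = a ^ 4 + 6 * a ^ 2 * (t : ℤ) ^ 2 + 13 * (t : ℤ) ^ 4 := by
      linear_combination (-1 : ℤ) * hbK + (m + a ^ 2 + 6 * (t : ℤ) ^ 2) * ham
    have hane : a ≠ 0 := by rintro rfl; simp at ham; omega
    have ha1 : 1 ≤ a := by omega
    have hcopaT : IsCoprime a ((t : ℤ)) :=
      (hmT.of_isCoprime_of_dvd_left ⟨a, by rw [ham]; ring⟩)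
    exact aux_descent (t : ℤ).natAbs (t : ℤ) a b rfl ht1 hcopaT hbeq

/-- The set of affine rational points of the elliptic curve
`O₁₃ : y² = x³ + 6x² + 13x` over `ℚ` consists of exactly one point, `(0, 0)`. -/
theorem stmt_2 :
    {p : ℚ × ℚ | p.2 ^ 2 = p.1 ^ 3 + 6 * p.1 ^ 2 + 13 * p.1} = {(0, 0)} := by
  ext ⟨x, y⟩
  simp only [Set.mem_setOf_eq, Set.mem_singleton_iff, Prod.mk.injEq]
  constructor
  · intro h
    have hx0 : 0 ≤ x := by nlinarith [sq_nonneg y, sq_nonneg (x + 3)]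
    rcases eq_or_lt_of_le hx0 with hx | hx
    · refine ⟨hx.symm, ?_⟩
      have h2 : y ^ 2 = 0 := by rw [← hx] at h; simpa using h
      exact pow_eq_zero_iff two_ne_zero |>.mp h2
    · exfalso
      have hxd : ((x.den : ℚ)) ≠ 0 := by
        have := x.pos
        positivity
      have hyd : ((y.den : ℚ)) ≠ 0 := by
        have := y.pos
        positivity
      have key : (y.num : ℚ) ^ 2 * (x.den : ℚ) ^ 3 =
          (y.den : ℚ) ^ 2 * ((x.num : ℚ) ^ 3 + 6 * (x.num : ℚ) ^ 2 * (x.den : ℚ)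
            + 13 * (x.num : ℚ) * (x.den : ℚ) ^ 2) := by
        have hx' := Rat.num_div_den x
        have hy' := Rat.num_div_den y
        rw [← hx', ← hy'] at h
        field_simp at h
        have h2 : ((y.num : ℚ) ^ 2 * (x.den : ℚ) ^ 3) * (x.den : ℚ) ^ 3 =
            ((y.den : ℚ) ^ 2 * ((x.num : ℚ) ^ 3 + 6 * (x.num : ℚ) ^ 2 * (x.den : ℚ)
              + 13 * (x.num : ℚ) * (x.den : ℚ) ^ 2)) * (x.den : ℚ) ^ 3 := by
          linear_combination (x.den : ℚ) ^ 3 * h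
        exact mul_right_cancel₀ (pow_ne_zero 3 hxd) h2
      have keyZ : y.num ^ 2 * (x.den : ℤ) ^ 3 =
          (y.den : ℤ) ^ 2 * (x.num ^ 3 + 6 * x.num ^ 2 * (x.den : ℤ)
            + 13 * x.num * (x.den : ℤ) ^ 2) := by exact_mod_cast key
      have hmn : IsCoprime x.num ((x.den : ℤ)) := by
        rw [Int.isCoprime_iff_gcd_eq_one]
        simpa [Int.gcd] using x.reduced
      have hpq : IsCoprime y.num ((y.den : ℤ)) := by
        rw [Int.isCoprime_iff_gcd_eq_one]
        simpa [Int.gcd] using y.reduced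
      exact aux_int_reduction (Rat.num_pos.mpr hx) (by exact_mod_cast x.pos)
        (by exact_mod_cast y.pos) hmn hpq keyZ
  · rintro ⟨rfl, rfl⟩
    norm_num
end

section
/- The set of affine rational points of the elliptic curve O_8 : y^2 = x^3 + 12x^2 + 32x over ℚ consists of exactly three points; that is, {(x, y) ∈ ℚ × ℚ : y^2 = x^3 + 12x^2 + 32x} = {(0, 0), (−4, 0), (−8, 0)}. -/
set_option maxHeartbeats 1000000


private lemma sq_pos_of_coprime' {a b c : ℤ} (h : IsCoprime a b) (heq : a * b = c ^ 2)
    (ha : 0 < a) : ∃ d : ℤ, a = d ^ 2 := by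
  obtain ⟨d, hd | hd⟩ := Int.sq_of_isCoprime h heq
  · exact ⟨d, hd⟩
  · exfalso; nlinarith [sq_nonneg d]

private lemma pow4_pos_of_coprime {a b c : ℤ} (h : IsCoprime a b) (heq : a * b = c ^ 4)
    (ha : 0 < a) : ∃ d : ℤ, a = d ^ 4 := by
  obtain ⟨d, hd⟩ := exists_associated_pow_of_mul_eq_pow' h heq
  rw [Int.associated_iff] at hd
  obtain hd | hd := hd
  · exact ⟨d, hd.symm⟩
  · exfalso
    have h1 : (0:ℤ) ≤ d ^ 4 := by positivity
    have h2 : d ^ 4 = -a := hd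
    omega

private lemma natAbs_lt_of_pow4_lt {x y : ℤ} (h : x ^ 4 < y ^ 4) : x.natAbs < y.natAbs := by
  by_contra hc
  push_neg at hc
  have h1 : (y.natAbs : ℤ) ≤ (x.natAbs : ℤ) := by exact_mod_cast hc
  have h2 : |y| ≤ |x| := by rwa [Int.abs_eq_natAbs, Int.abs_eq_natAbs]
  have h3 : |y| ^ 4 ≤ |x| ^ 4 := pow_le_pow_left₀ (abs_nonneg y) h2 4
  rw [← abs_pow, ← abs_pow, abs_of_nonneg (by positivity : (0:ℤ) ≤ y ^ 4),
    abs_of_nonneg (by positivity : (0:ℤ) ≤ x ^ 4)] at h3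
  omega


private theorem fermat_m4 (n : ℕ) : ∀ a b c : ℤ, a.natAbs = n → b ≠ 0 → c ≠ 0 →
    a ^ 4 ≠ b ^ 4 + c ^ 2 := by
  induction n using Nat.strong_induction_on with
  | _ n IH =>
  intro a b c hn hb hc h
  -- reduce to positive a b c
  have hb4 : (0:ℤ) < b ^ 4 := by positivity
  have hc2 : (0:ℤ) < c ^ 2 := by positivity
  have ha0 : a ≠ 0 := by intro h0; rw [h0] at h; norm_num at h; nlinarith
  have e1 : |a| ^ 4 = a ^ 4 := by rw [← abs_pow]; exact abs_of_nonneg (by positivity)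
  have e2 : |b| ^ 4 = b ^ 4 := by rw [← abs_pow]; exact abs_of_nonneg (by positivity)
  have e3 : |c| ^ 2 = c ^ 2 := by rw [← abs_pow]; exact abs_of_nonneg (by positivity)
  set A := |a| with hA_def
  set B := |b| with hB_def
  set C := |c| with hC_def
  have hApos : 0 < A := abs_pos.mpr ha0
  have hBpos : 0 < B := abs_pos.mpr hb
  have hCpos : 0 < C := abs_pos.mpr hc
  have hnA : A.natAbs = n := by rw [hA_def, Int.natAbs_abs]; exact hn
  have hEq : A ^ 4 = B ^ 4 + C ^ 2 := by rw [e1, e2, e3]; exact h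
  clear h e1 e2 e3 hn hb hc ha0 hb4 hc2
  -- gcd reduction
  by_cases hg : Int.gcd A B = 1
  case neg =>
    have hgz : Int.gcd A B ≠ 0 := by
      intro h0
      rw [Int.gcd_eq_zero_iff] at h0
      omega
    set g : ℕ := Int.gcd A B with hg_def
    have hg2 : 2 ≤ g := by omega
    obtain ⟨a1, ha1⟩ : (g:ℤ) ∣ A := Int.gcd_dvd_left A B
    obtain ⟨b1, hb1⟩ : (g:ℤ) ∣ B := Int.gcd_dvd_right A B
    have hd2 : ((g:ℤ) ^ 2) ^ 2 ∣ C ^ 2 :=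
      ⟨a1 ^ 4 - b1 ^ 4, by rw [ha1, hb1] at hEq; linear_combination -hEq⟩
    obtain ⟨c1, hc1⟩ : (g:ℤ) ^ 2 ∣ C := (Int.pow_dvd_pow_iff two_ne_zero).mp hd2
    have hg0 : ((g:ℤ) ^ 4) ≠ 0 := by positivity
    have key : a1 ^ 4 = b1 ^ 4 + c1 ^ 2 := by
      apply mul_left_cancel₀ hg0
      rw [ha1, hb1, hc1] at hEq
      linear_combination hEq
    have ha10 : a1 ≠ 0 := by rintro rfl; simp at ha1; omega
    have hb10 : b1 ≠ 0 := by rintro rfl; simp at hb1; omega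
    have hlt : a1.natAbs < n := by
      have hfac : A.natAbs = g * a1.natAbs := by rw [ha1, Int.natAbs_mul, Int.natAbs_natCast]
      have h1 : 0 < a1.natAbs := Int.natAbs_pos.mpr ha10
      rw [← hnA, hfac]
      exact (lt_mul_iff_one_lt_left h1).mpr (by omega)
    have hc10 : c1 ≠ 0 := by rintro rfl; simp at hc1; omega
    exact IH a1.natAbs hlt a1 b1 c1 rfl hb10 hc10 key
  case pos =>
  have hab : IsCoprime A B := Int.isCoprime_iff_gcd_eq_one.mpr hg
  -- A must be odd
  have hAodd : Odd A := by
    rcases Int.even_or_odd A with hA2 | hA2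
    · exfalso
      have hBodd : Odd B := by
        rcases Int.even_or_odd B with hB2 | hB2
        · exfalso
          obtain ⟨k, hk⟩ := hA2
          obtain ⟨l, hl⟩ := hB2
          have h2A : (2:ℤ) ∣ A := ⟨k, by omega⟩
          have h2B : (2:ℤ) ∣ B := ⟨l, by omega⟩
          have := hab.isUnit_of_dvd' h2A h2B
          rw [Int.isUnit_iff] at this
          omega
        · exact hB2
      obtain ⟨k, hk⟩ := hA2
      obtain ⟨l, hl⟩ := hBodd
      have h3 : (4:ℤ) ∣ C ^ 2 + 1 :=
        ⟨4 * k ^ 4 - 4 * l ^ 4 - 8 * l ^ 3 - 6 * l ^ 2 - 2 * l, by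
          rw [hk, hl] at hEq; linear_combination -hEq⟩
      have h4 : ((C : ZMod 4) ^ 2 + 1 = 0) := by
        have := (ZMod.intCast_zmod_eq_zero_iff_dvd _ 4).mpr h3
        push_cast at this
        linear_combination this
      have h5 : ∀ x : ZMod 4, x ^ 2 + 1 ≠ 0 := by decide
      exact h5 _ h4
    · exact hA2
  obtain ⟨k, hk⟩ := hAodd
  rcases Int.even_or_odd B with hB2 | hB2
  · -- B even, C odd : the hard case
    have hCodd : Odd C := by
      rcases Int.even_or_odd C with h' | h'
      · exfalso
        obtain ⟨l0, hl0⟩ := hB2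
        obtain ⟨m2, hm2⟩ := h'
        rw [hk, hl0, hm2] at hEq
        have h2 : (2:ℤ) ∣ 1 :=
          ⟨8*l0^4+2*m2^2-8*k^4-16*k^3-12*k^2-4*k, by linear_combination hEq⟩
        norm_num at h2
      · exact h'
    obtain ⟨l, hl⟩ := hB2
    obtain ⟨m0, hm0⟩ := hCodd
    set u : ℤ := 2*k^2 + 2*k - m0 with hu_def
    set v : ℤ := 2*k^2 + 2*k + m0 + 1 with hv_def
    have hsum : u + v = A ^ 2 := by rw [hu_def, hv_def, hk]; ring
    have hdiff : v - u = C := by rw [hu_def, hv_def, hm0]; ring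
    have hprod : u * v = 4 * l ^ 4 := by
      have h4 : (4:ℤ) * (u * v) = 4 * (4 * l ^ 4) := by
        have h' := hEq
        rw [hk, hl, hm0] at h'
        rw [hu_def, hv_def]
        linear_combination h'
      exact mul_left_cancel₀ (by norm_num : (4:ℤ) ≠ 0) h4
    obtain ⟨x, y, hxy⟩ := hab.pow (n := 4) (m := 4)
    have hAC : IsCoprime (A ^ 4) (C ^ 2) := ⟨x + y, -y, by linear_combination hxy + y * hEq⟩
    obtain ⟨X, Y, hXY⟩ := hAC
    have hUV : IsCoprime u v :=
      ⟨X*(u+v) - Y*(v-u), X*(u+v) + Y*(v-u), by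
        linear_combination hXY + X*(u+v+A^2)*hsum + Y*(v-u+C)*hdiff⟩
    have hl0 : l ≠ 0 := by rintro rfl; simp at hl; omega
    have hl4pos : (0:ℤ) < l ^ 4 := by positivity
    have hA1 : 1 ≤ A := hApos
    have hA2odd : A ^ 2 = 2*(2*k^2+2*k) + 1 := by rw [hk]; ring
    have huvpos : 0 < u * v := by rw [hprod]; positivity
    have hsumpos : 0 < u + v := by rw [hsum]; positivity
    have hvpos : 0 < v := by nlinarith
    have hupos : 0 < u := by nlinarith
    have step : ∃ m1 n1 : ℤ, IsCoprime m1 n1 ∧ A ^ 2 = m1 ^ 4 + 4 * n1 ^ 4 ∧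
        m1 ≠ 0 ∧ n1 ≠ 0 := by
      rcases Int.even_or_odd u with hue | huo
      · -- u even, v odd
        have hvodd : Odd v := by
          rcases Int.even_or_odd v with h' | h'
          · exfalso
            obtain ⟨r1, hr1⟩ := hue
            obtain ⟨r2, hr2⟩ := h'
            omega
          · exact h'
        obtain ⟨t, ht⟩ := hvodd
        have hc4v : IsCoprime (4:ℤ) v := ⟨t^2 - t*v, v, by rw [ht]; ring⟩
        obtain ⟨u1, hu1⟩ : (4:ℤ) ∣ u := hc4v.dvd_of_dvd_mul_right ⟨l^4, hprod⟩
        have hu1v : u1 * v = l ^ 4 := by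
          apply mul_left_cancel₀ (by norm_num : (4:ℤ) ≠ 0)
          linear_combination hprod - v * hu1
        have hu1pos : 0 < u1 := by omega
        have hUV' : IsCoprime u1 v := by rw [hu1] at hUV; exact hUV.of_mul_left_right
        obtain ⟨m1, hm1⟩ := pow4_pos_of_coprime (c := l) hUV'.symm
          (by linear_combination hu1v) hvpos
        obtain ⟨n1, hn1⟩ := pow4_pos_of_coprime (c := l) hUV' hu1v hu1pos
        have hcmn : IsCoprime m1 n1 := by
          rw [hm1, hn1] at hUV'
          exact ((IsCoprime.pow_left_iff (by norm_num)).mp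
            ((IsCoprime.pow_right_iff (by norm_num)).mp hUV')).symm
        refine ⟨m1, n1, hcmn, by linear_combination -hsum + hu1 + 4*hn1 + hm1, ?_, ?_⟩
        · intro h0; rw [h0] at hm1; simp at hm1; omega
        · intro h0; rw [h0] at hn1; simp at hn1; omega
      · -- u odd, v even
        obtain ⟨t, ht⟩ := huo
        have hc4u : IsCoprime (4:ℤ) u := ⟨t^2 - t*u, u, by rw [ht]; ring⟩
        obtain ⟨v1, hv1⟩ : (4:ℤ) ∣ v := hc4u.dvd_of_dvd_mul_left
          ⟨l^4, by linear_combination hprod⟩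
        have hv1u : v1 * u = l ^ 4 := by
          apply mul_left_cancel₀ (by norm_num : (4:ℤ) ≠ 0)
          linear_combination hprod - u * hv1
        have hv1pos : 0 < v1 := by omega
        have hUV' : IsCoprime u v1 := by rw [hv1] at hUV; exact hUV.of_mul_right_right
        obtain ⟨m1, hm1⟩ := pow4_pos_of_coprime (c := l) hUV'
          (by linear_combination hv1u) hupos
        obtain ⟨n1, hn1⟩ := pow4_pos_of_coprime (c := l) hUV'.symm
          (by linear_combination hv1u) hv1pos
        have hcmn : IsCoprime m1 n1 := by
          rw [hm1, hn1] at hUV'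
          exact (IsCoprime.pow_left_iff (by norm_num)).mp
            ((IsCoprime.pow_right_iff (by norm_num)).mp hUV')
        refine ⟨m1, n1, hcmn, by linear_combination -hsum + hv1 + 4*hn1 + hm1, ?_, ?_⟩
        · intro h0; rw [h0] at hm1; simp at hm1; omega
        · intro h0; rw [h0] at hn1; simp at hn1; omega
    clear hsum hdiff hprod hUV hxy hXY hupos hvpos huvpos hsumpos hu_def hv_def
    obtain ⟨m1, n1, hcmn, hA2eq, hm10, hn10⟩ := step
    have hm1odd : Odd m1 := by
      rcases Int.even_or_odd m1 with h' | h'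
      · exfalso
        obtain ⟨j0, hj0⟩ := h'
        have heven : A ^ 2 = 2*(8*j0^4 + 2*n1^4) := by rw [hA2eq, hj0]; ring
        omega
      · exact h'
    obtain ⟨j, hj⟩ := hm1odd
    set α : ℤ := k - 2*j^2 - 2*j with hα_def
    set β : ℤ := k - 2*j^2 - 2*j + m1^2 with hβ_def
    have hsumαβ : α + β = A := by rw [hα_def, hβ_def, hk, hj]; ring
    have hdiffαβ : β - α = m1 ^ 2 := by rw [hα_def, hβ_def]; ring
    have hαβ : α * β = n1 ^ 4 := by
      apply mul_left_cancel₀ (by norm_num : (4:ℤ) ≠ 0)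
      have h' := hA2eq
      rw [hk, hj] at h'
      rw [hα_def, hβ_def, hj]
      linear_combination h'
    have hm1_4 : IsCoprime m1 (4:ℤ) := ⟨m1, -(j^2+j), by rw [hj]; ring⟩
    have h44 : IsCoprime (m1 ^ 4) (4 * n1 ^ 4) := (hm1_4.mul_right hcmn.pow_right).pow_left
    obtain ⟨x2, y2, hxy2⟩ := h44
    have hMA : IsCoprime (m1 ^ 4) (A ^ 2) :=
      ⟨x2 - y2, y2, by linear_combination hxy2 + y2 * hA2eq⟩
    have hAm : IsCoprime A m1 := by
      have h5 := ((IsCoprime.pow_left_iff (by norm_num : 0 < 4)).mp hMA).symm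
      exact (IsCoprime.pow_left_iff (by norm_num : 0 < 2)).mp h5
    obtain ⟨X2, Y2, hXY2⟩ := hAm.pow_right (n := 2)
    have hcαβ : IsCoprime α β :=
      ⟨X2 - Y2, X2 + Y2, by linear_combination hXY2 + X2*hsumαβ + Y2*hdiffαβ⟩
    have hββ : 2 * β = A + m1 ^ 2 := by linarith
    have hβpos : 0 < β := by nlinarith [sq_nonneg m1]
    have hn14pos : (0:ℤ) < n1 ^ 4 := by positivity
    have hαβpos : 0 < α * β := hαβ ▸ hn14pos
    have hαpos : 0 < α := by nlinarith
    obtain ⟨g2, hg2⟩ := pow4_pos_of_coprime (c := n1) hcαβ hαβ hαpos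
    obtain ⟨h2, hh2⟩ := pow4_pos_of_coprime (c := n1) hcαβ.symm
      (by linear_combination hαβ) hβpos
    have heq2 : h2 ^ 4 = g2 ^ 4 + m1 ^ 2 := by linear_combination hdiffαβ - hh2 + hg2
    have hg20 : g2 ≠ 0 := by intro h0; rw [h0] at hg2; simp at hg2; omega
    have hm1ltA2 : m1 ^ 4 < A ^ 2 := by linarith
    have hm2ltA : m1 ^ 2 < A := by nlinarith
    have hβltA : β < A := by linarith [sq_nonneg m1]
    have hAleA4 : A ≤ A ^ 4 := by
      have := pow_le_pow_right₀ hA1 (show 1 ≤ 4 by norm_num)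
      simpa using this
    have hlt4 : h2 ^ 4 < A ^ 4 := by linarith
    have hlt : h2.natAbs < n := by rw [← hnA]; exact natAbs_lt_of_pow4_lt hlt4
    exact IH h2.natAbs hlt h2 g2 m1 rfl hg20 hm10 heq2
  · -- B odd, C even
    have hCeven : Even C := by
      have h1 : Even (C ^ 2) := by
        obtain ⟨l, hl⟩ := hB2
        refine ⟨8*k^4+16*k^3+12*k^2+4*k-8*l^4-16*l^3-12*l^2-4*l, ?_⟩
        rw [hk, hl] at hEq
        linear_combination -hEq
      rcases Int.even_or_odd C with h' | h'
      · exact h'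
      · exfalso
        obtain ⟨r, hr⟩ := h1
        obtain ⟨m1, hm1⟩ := h'
        have : C ^ 2 = 2*(2*m1^2+2*m1)+1 := by rw [hm1]; ring
        omega
    obtain ⟨d, hd⟩ := hCeven
    obtain ⟨l, hl⟩ := hB2
    -- u, v
    set u : ℤ := 2*k^2 + 2*k - 2*l^2 - 2*l with hu_def
    set v : ℤ := 2*k^2 + 2*k + 2*l^2 + 2*l + 1 with hv_def
    have hsum : u + v = A ^ 2 := by rw [hk]; ring
    have hdiff : v - u = B ^ 2 := by rw [hl]; ring
    have hprod : u * v = d ^ 2 := by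
      have h4 : (4:ℤ) * (u * v) = 4 * d ^ 2 := by
        have h' := hEq
        rw [hk, hl, hd] at h'
        linear_combination h'
      exact mul_left_cancel₀ (by norm_num : (4:ℤ) ≠ 0) h4
    obtain ⟨x, y, hxy⟩ := hab.pow (n := 2) (m := 2)
    have hUV : IsCoprime u v :=
      ⟨x - y, x + y, by linear_combination hxy + x * hsum + y * hdiff⟩
    have hA1 : 1 ≤ A := hApos
    have hB1 : 1 ≤ B := hBpos
    have hvpos : 0 < v := by nlinarith
    have hd0 : d ≠ 0 := by intro h0; rw [h0] at hd; simp at hd; omega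
    have hupos : 0 < u := by nlinarith [sq_nonneg d]
    obtain ⟨e, he⟩ := sq_pos_of_coprime' hUV hprod hupos
    obtain ⟨f, hf⟩ := sq_pos_of_coprime' (c := d) hUV.symm (by linear_combination hprod) hvpos
    rw [he, hf] at hsum hdiff
    have heq2 : f ^ 4 = e ^ 4 + (A * B) ^ 2 := by
      linear_combination (f^2 + e^2) * hdiff + B^2 * hsum
    have he0 : e ≠ 0 := by intro h0; rw [h0] at he; simp at he; omega
    have hAB0 : A * B ≠ 0 := by positivity
    have hB2ltA2 : B ^ 2 < A ^ 2 := by nlinarith [sq_nonneg (C)]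
    have hf4lt : f ^ 4 < A ^ 4 := by nlinarith [sq_nonneg f, sq_nonneg e]
    have hlt : f.natAbs < n := by rw [← hnA]; exact natAbs_lt_of_pow4_lt hf4lt
    exact IH f.natAbs hlt f e (A * B) rfl he0 hAB0 heq2

private theorem fermat_m4' (a b c : ℤ) (hb : b ≠ 0) (hc : c ≠ 0) : a ^ 4 ≠ b ^ 4 + c ^ 2 :=
  fermat_m4 a.natAbs a b c rfl hb hc


private lemma int_step {p q m : ℤ} (hq : 0 < q) (hcop : IsCoprime p q) (hm0 : m ≠ 0)
    (hm2 : m ^ 2 = p * q * (p + q) * (p - q)) : False := by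
  have hP : p * q * (p + q) * (p - q) ≠ 0 := hm2 ▸ pow_ne_zero 2 hm0
  have hp0 : p ≠ 0 := fun h0 => hP (by rw [h0]; ring)
  have hs0 : p + q ≠ 0 := fun h0 => hP (by rw [h0]; ring)
  have hd0 : p - q ≠ 0 := fun h0 => hP (by rw [h0]; ring)
  obtain ⟨x, y, hxy⟩ := hcop
  have hcop : IsCoprime p q := ⟨x, y, hxy⟩
  have c_q_p : IsCoprime q p := hcop.symm
  have c_q_s : IsCoprime q (p + q) := ⟨y - x, x, by linear_combination hxy⟩
  have c_q_d : IsCoprime q (p - q) := ⟨y + x, x, by linear_combination hxy⟩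
  have c_p_s : IsCoprime p (p + q) := ⟨x - y, y, by linear_combination hxy⟩
  have c_p_d : IsCoprime p (p - q) := ⟨x + y, -y, by linear_combination hxy⟩
  rcases Int.even_or_odd (p + q) with hpe | hpo
  · -- p, q both odd
    obtain ⟨r, hr⟩ := hpe
    have hs : p - q = 2 * (r - q) := by linear_combination hr
    set s : ℤ := r - q with hs_def
    have hme : Even (m ^ 2) :=
      ⟨2 * (p * q * r * s), by
        rw [hs_def]; linear_combination hm2 + (p*q*(p-q))*hr + (2*p*q*r)*hs⟩
    have hmeven : Even m := by
      rcases Int.even_or_odd m with h' | h'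
      · exact h'
      · exfalso
        obtain ⟨r1, hr1⟩ := hme
        obtain ⟨m1, hm1⟩ := h'
        have : m ^ 2 = 2*(2*m1^2+2*m1)+1 := by rw [hm1]; ring
        omega
    obtain ⟨m1, hm1⟩ := hmeven
    have hm12 : m1 ^ 2 = p * (q * (r * s)) := by
      apply mul_left_cancel₀ (by norm_num : (4:ℤ) ≠ 0)
      rw [hm1] at hm2
      rw [hs_def]
      linear_combination hm2 + (p*q*(p-q))*hr + (2*p*q*r)*hs
    have hr0 : r ≠ 0 := by intro h0; rw [h0] at hr; exact hs0 (by omega)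
    have hsz0 : s ≠ 0 := by
      intro h0; rw [hs_def] at h0; exact hd0 (by omega)
    have hm10 : m1 ≠ 0 := by rintro rfl; simp at hm1; exact hm0 hm1
    have c_p_r : IsCoprime p r := ⟨x - y, 2*y, by linear_combination hxy - y*hr⟩
    have c_p_s2 : IsCoprime p s := ⟨x + y, -2*y, by rw [hs_def]; linear_combination hxy + y*hr⟩
    have c_q_r : IsCoprime q r := ⟨y - x, 2*x, by linear_combination hxy - x*hr⟩
    have c_q_s2 : IsCoprime q s := ⟨y + x, 2*x, by rw [hs_def]; linear_combination hxy - x*hr⟩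
    have c_r_s : IsCoprime r s := ⟨x + y, x - y, by rw [hs_def]; linear_combination hxy - x*hr⟩
    obtain ⟨b, hbq⟩ := sq_pos_of_coprime' (c := m1)
      (c_q_p.mul_right (c_q_r.mul_right c_q_s2)) (by linear_combination -hm12) hq
    obtain ⟨a, ha⟩ := Int.sq_of_isCoprime (c := m1)
      (hcop.mul_right (c_p_r.mul_right c_p_s2)) (by linear_combination -hm12)
    obtain ⟨c2, hc2⟩ := Int.sq_of_isCoprime (c := m1)
      (c_p_r.symm.mul_right (c_q_r.symm.mul_right c_r_s)) (by linear_combination -hm12)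
    obtain ⟨d2, hd2⟩ := Int.sq_of_isCoprime (c := m1)
      (c_p_s2.symm.mul_right (c_q_s2.symm.mul_right c_r_s.symm)) (by linear_combination -hm12)
    have hP2 : p ^ 2 = a ^ 4 := by rcases ha with ha | ha <;> rw [ha] <;> ring
    have hQ2 : q ^ 2 = b ^ 4 := by rw [hbq]; ring
    have hRS : r * s = (c2*d2) ^ 2 ∨ r * s = -((c2*d2) ^ 2) := by
      rcases hc2 with h' | h' <;> rcases hd2 with h'' | h'' <;> rw [h', h'']
      · left; ring
      · right; ring
      · right; ring
      · left; ring
    have hpq2 : p ^ 2 - q ^ 2 = 4 * (r * s) := by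
      rw [hs_def]; linear_combination (p - q)*hr + 2*r*hs
    have ha0 : a ≠ 0 := by
      intro h0; apply hp0
      rw [h0] at hP2
      exact pow_eq_zero_iff (n := 2) (by norm_num) |>.mp (by simpa using hP2)
    have hb0 : b ≠ 0 := by intro h0; rw [h0] at hbq; simp at hbq; omega
    have hc20 : c2 ≠ 0 := by
      intro h0; apply hr0
      rcases hc2 with h' | h' <;> rw [h', h0] <;> ring
    have hd20 : d2 ≠ 0 := by
      intro h0; apply hsz0
      rcases hd2 with h' | h' <;> rw [h', h0] <;> ring
    have hcd0 : 2*c2*d2 ≠ 0 := by positivity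
    rcases hRS with hRS | hRS
    · exact fermat_m4' a b (2*c2*d2) hb0 hcd0 (by linear_combination -hP2 + hpq2 + hQ2 + 4*hRS)
    · exact fermat_m4' b a (2*c2*d2) ha0 hcd0 (by linear_combination hP2 - hpq2 - hQ2 - 4*hRS)
  · -- p + q odd
    obtain ⟨t, ht⟩ := hpo
    have c_s_2 : IsCoprime (p+q) (2:ℤ) := ⟨1, -t, by rw [ht]; ring⟩
    obtain ⟨X, Y, hXY⟩ := c_s_2.mul_right c_p_s.symm
    have c_s_d : IsCoprime (p+q) (p-q) := ⟨X + Y, Y, by linear_combination hXY⟩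
    obtain ⟨b, hbq⟩ := sq_pos_of_coprime' (c := m)
      (c_q_p.mul_right (c_q_s.mul_right c_q_d)) (by linear_combination -hm2) hq
    obtain ⟨a, ha⟩ := Int.sq_of_isCoprime (c := m)
      (hcop.mul_right (c_p_s.mul_right c_p_d)) (by linear_combination -hm2)
    obtain ⟨c2, hc2⟩ := Int.sq_of_isCoprime (c := m)
      (c_p_s.symm.mul_right (c_q_s.symm.mul_right c_s_d)) (by linear_combination -hm2)
    obtain ⟨d2, hd2⟩ := Int.sq_of_isCoprime (c := m)
      (c_p_d.symm.mul_right (c_q_d.symm.mul_right c_s_d.symm)) (by linear_combination -hm2)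
    have hP2 : p ^ 2 = a ^ 4 := by rcases ha with ha | ha <;> rw [ha] <;> ring
    have hQ2 : q ^ 2 = b ^ 4 := by rw [hbq]; ring
    have hSD : (p+q) * (p-q) = (c2*d2) ^ 2 ∨ (p+q) * (p-q) = -((c2*d2) ^ 2) := by
      rcases hc2 with h' | h' <;> rcases hd2 with h'' | h'' <;> rw [h', h'']
      · left; ring
      · right; ring
      · right; ring
      · left; ring
    have ha0 : a ≠ 0 := by
      intro h0; apply hp0
      rw [h0] at hP2
      exact pow_eq_zero_iff (n := 2) (by norm_num) |>.mp (by simpa using hP2)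
    have hb0 : b ≠ 0 := by intro h0; rw [h0] at hbq; simp at hbq; omega
    have hc20 : c2 ≠ 0 := by
      intro h0; apply hs0
      rcases hc2 with h' | h' <;> rw [h', h0] <;> ring
    have hd20 : d2 ≠ 0 := by
      intro h0; apply hd0
      rcases hd2 with h' | h' <;> rw [h', h0] <;> ring
    have hcd0 : c2*d2 ≠ 0 := mul_ne_zero hc20 hd20
    rcases hSD with hSD | hSD
    · exact fermat_m4' a b (c2*d2) hb0 hcd0 (by linear_combination -hP2 + hQ2 + hSD)
    · exact fermat_m4' b a (c2*d2) ha0 hcd0 (by linear_combination hP2 - hQ2 - hSD)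


private lemma rat_step {u v : ℚ} (h : v ^ 2 = u ^ 3 - u) : v = 0 := by
  by_contra hv
  set p : ℤ := u.num with hp_def
  set q : ℤ := (u.den : ℤ) with hq_def
  have hq : 0 < q := by positivity
  have hq0 : (q : ℚ) ≠ 0 := by exact_mod_cast hq.ne'
  have hcop : IsCoprime p q := by
    rw [Int.isCoprime_iff_gcd_eq_one]
    exact u.reduced
  have huq : (u * (q:ℚ)) = (p:ℚ) := by
    rw [hp_def, hq_def]
    push_cast
    exact Rat.mul_den_eq_num u
  set w : ℚ := v * (q:ℚ)^2 with hw_def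
  have hw2 : w ^ 2 = ((p * q * (p + q) * (p - q) : ℤ) : ℚ) := by
    have hp : (p : ℚ) = u * q := huq.symm
    push_cast
    rw [hp, hw_def]
    linear_combination (q:ℚ)^4 * h
  have hden : w.den = 1 := by
    have h1 := congrArg Rat.den hw2
    rw [Rat.den_pow] at h1
    rw [Rat.den_intCast] at h1
    exact ((pow_eq_one_iff (n := 2)).mp h1).resolve_right (by norm_num)
  have hwm : ((w.num : ℚ)) = w := by
    conv_rhs => rw [← Rat.num_div_den w, hden]
    simp
  have hm2 : w.num ^ 2 = p * q * (p + q) * (p - q) := by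
    have h2 : ((w.num ^ 2 : ℤ) : ℚ) = ((p * q * (p + q) * (p - q) : ℤ) : ℚ) := by
      push_cast
      rw [hwm]
      exact_mod_cast hw2
    exact_mod_cast h2
  have hw0 : w ≠ 0 := mul_ne_zero hv (pow_ne_zero _ hq0)
  have hm0 : w.num ≠ 0 := by
    intro h0
    apply hw0
    rw [← hwm, h0]
    simp
  exact int_step hq hcop hm0 hm2

/-- The set of affine rational points of the elliptic curve
`O₈ : y² = x³ + 12x² + 32x` over `ℚ` consists of exactly three points. -/
theorem stmt_4 :
    {p : ℚ × ℚ | p.2 ^ 2 = p.1 ^ 3 + 12 * p.1 ^ 2 + 32 * p.1} = {(0, 0), (-4, 0), (-8, 0)} := by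
  ext ⟨x, y⟩
  simp only [Set.mem_setOf_eq, Set.mem_insert_iff, Set.mem_singleton_iff, Prod.mk.injEq]
  constructor
  · intro h
    have hv : (y/8) ^ 2 = ((x+4)/4) ^ 3 - (x+4)/4 := by
      field_simp
      linear_combination 64 * h
    have h1 := rat_step hv
    have hy : y = 0 := by
      field_simp at h1
      simpa using h1
    rw [hy] at h
    have hx : x * (x+4) * (x+8) = 0 := by linear_combination -h
    rcases mul_eq_zero.mp hx with hx' | hx'
    · rcases mul_eq_zero.mp hx' with hx'' | hx''
      · exact Or.inl ⟨hx'', hy⟩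
      · exact Or.inr (Or.inl ⟨by linarith, hy⟩)
    · exact Or.inr (Or.inr ⟨by linarith, hy⟩)
  · rintro (⟨rfl, rfl⟩ | ⟨rfl, rfl⟩ | ⟨rfl, rfl⟩) <;> norm_num
end

section
/- The set of affine rational points of the elliptic curve O_10 : y^2 = x^3 + 9x^2 + 20x over ℚ consists of exactly three points; that is, {(x, y) ∈ ℚ × ℚ : y^2 = x^3 + 9x^2 + 20x} = {(0, 0), (−4, 0), (−5, 0)}. -/
-- assume helpers from h1 (copied here for testing)
lemma sq_decomp (z : ℤ) : ∃ q r, (r = 0 ∨ r = 1 ∨ r = 4 ∨ r = 9) ∧ z ^ 2 = 16 * q + r ∧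
    (z % 2 = 1 → (r = 1 ∨ r = 9)) ∧ (z % 2 = 0 → (r = 0 ∨ r = 4)) := by
  obtain ⟨q, r, h0, h8, rfl⟩ : ∃ q r, 0 ≤ r ∧ r < 8 ∧ z = 8 * q + r :=
    ⟨z / 8, z % 8, by omega, by omega, by omega⟩
  interval_cases r
  · exact ⟨4 * q ^ 2, 0, by norm_num, by ring, by omega, by omega⟩
  · exact ⟨4 * q ^ 2 + q, 1, by norm_num, by ring, by omega, by omega⟩
  · exact ⟨4 * q ^ 2 + 2 * q, 4, by norm_num, by ring, by omega, by omega⟩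
  · exact ⟨4 * q ^ 2 + 3 * q, 9, by norm_num, by ring, by omega, by omega⟩
  · exact ⟨4 * q ^ 2 + 4 * q + 1, 0, by norm_num, by ring, by omega, by omega⟩
  · exact ⟨4 * q ^ 2 + 5 * q + 1, 9, by norm_num, by ring, by omega, by omega⟩
  · exact ⟨4 * q ^ 2 + 6 * q + 2, 4, by norm_num, by ring, by omega, by omega⟩
  · exact ⟨4 * q ^ 2 + 7 * q + 3, 1, by norm_num, by ring, by omega, by omega⟩

lemma odd_sq_decomp (z : ℤ) (h : z % 2 = 1) : ∃ k, z ^ 2 = 8 * k + 1 := by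
  obtain ⟨q, r, _, hq, hodd, _⟩ := sq_decomp z
  rcases hodd h with rfl | rfl
  · exact ⟨2 * q, by omega⟩
  · exact ⟨2 * q + 1, by omega⟩

lemma gcd_one_of_no_prime {x y : ℤ}
    (h : ∀ p : ℕ, p.Prime → (p : ℤ) ∣ x → (p : ℤ) ∣ y → False) : Int.gcd x y = 1 := by
  by_contra hg
  obtain ⟨p, pp, hpd⟩ := Nat.exists_prime_and_dvd hg
  exact h p pp (dvd_trans (Int.natCast_dvd_natCast.mpr hpd) (Int.gcd_dvd_left _ _))
    (dvd_trans (Int.natCast_dvd_natCast.mpr hpd) (Int.gcd_dvd_right _ _))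

lemma gcd_one_of_dvd {a b c d : ℤ} (h1 : a ∣ c) (h2 : b ∣ d) (h : Int.gcd c d = 1) :
    Int.gcd a b = 1 := by
  have hd : (Int.gcd a b : ℤ) ∣ (Int.gcd c d : ℤ) :=
    Int.dvd_coe_gcd (dvd_trans (Int.gcd_dvd_left _ _) h1) (dvd_trans (Int.gcd_dvd_right _ _) h2)
  rw [h] at hd
  have h2 : Int.gcd a b ∣ 1 := by exact_mod_cast hd
  exact Nat.eq_one_of_dvd_one h2

lemma gcd_abs_left (u e : ℤ) : Int.gcd |u| e = Int.gcd u e := by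
  simp [Int.gcd, Int.natAbs_abs]

lemma gcd_abs_right (u e : ℤ) : Int.gcd u |e| = Int.gcd u e := by
  simp [Int.gcd, Int.natAbs_abs]

lemma pos_sq_of_coprime {a b c : ℤ} (h : IsCoprime a b) (heq : a * b = c ^ 2) (ha : 0 < a) :
    ∃ a0, 0 < a0 ∧ a = a0 ^ 2 := by
  obtain ⟨a0, h0 | h0⟩ := Int.sq_of_isCoprime h heq
  · have ha0 : a0 ≠ 0 := by rintro rfl; simp at h0; omega
    exact ⟨|a0|, abs_pos.mpr ha0, by rw [sq_abs]; exact h0⟩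
  · exfalso; nlinarith [sq_nonneg a0]

/-- The key local analysis: only the `δ = 1` class survives. -/
lemma inner_step (a1 a2 b1 b2 : ℤ)
    (ha1 : 0 < a1) (hb2 : 0 < b2)
    (hE : a1 ^ 2 * (a2 ^ 2 - 4 * b1 ^ 2) = b2 ^ 2 * (a2 ^ 2 + b1 ^ 2))
    (cop12 : Int.gcd a1 b2 = 1) (cop21 : Int.gcd a2 b1 = 1) (copaa : Int.gcd a1 a2 = 1)
    (ha2pos : 0 < a2)
    (hodd2 : a2 % 2 = 1) (hoddb2 : b2 % 2 = 1)
    (hpar : (a1 % 2 = 1 ∧ b1 % 2 = 0) ∨ (a1 % 2 = 0 ∧ b1 % 2 = 1)) :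
    a2 ^ 2 = b2 ^ 2 + 4 * b1 ^ 2 ∧ a1 ^ 2 = b2 ^ 2 + 5 * b1 ^ 2 := by
  have hcop : IsCoprime (b2 ^ 2) (a1 ^ 2) :=
    ((Int.isCoprime_iff_gcd_eq_one.mpr cop12).symm).pow
  have hdvd : b2 ^ 2 ∣ a2 ^ 2 - 4 * b1 ^ 2 := by
    refine hcop.dvd_of_dvd_mul_left ?_
    exact ⟨a2 ^ 2 + b1 ^ 2, by linarith [hE]⟩
  obtain ⟨k, hk⟩ := hdvd
  have hY : a2 ^ 2 + b1 ^ 2 = a1 ^ 2 * k := by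
    have h2 : b2 ^ 2 * (a1 ^ 2 * k) = b2 ^ 2 * (a2 ^ 2 + b1 ^ 2) := by
      rw [← hE, hk]; ring
    exact (mul_left_cancel₀ (pow_ne_zero 2 (ne_of_gt hb2)) h2).symm
  have hkpos : 0 < k := by nlinarith [sq_nonneg a2, sq_nonneg b1, sq_nonneg a1]
  have hk5 : k ∣ 5 := by
    obtain ⟨x, y, hxy⟩ := (Int.isCoprime_iff_gcd_eq_one.mpr cop21).pow (m := 2) (n := 2)
    have h1 : k ∣ 5 * b1 ^ 2 := ⟨a1 ^ 2 - b2 ^ 2, by linear_combination hY - hk⟩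
    have h2 : k ∣ 5 * a2 ^ 2 := ⟨4 * a1 ^ 2 + b2 ^ 2, by linear_combination 4 * hY + hk⟩
    have : k ∣ x * (5 * a2 ^ 2) + y * (5 * b1 ^ 2) :=
      dvd_add (Dvd.dvd.mul_left h2 x) (Dvd.dvd.mul_left h1 y)
    have h5 : x * (5 * a2 ^ 2) + y * (5 * b1 ^ 2) = 5 := by linear_combination 5 * hxy
    rwa [h5] at this
  have hk15 : k = 1 ∨ k = 5 := by
    have hk5' : k ≤ 5 := Int.le_of_dvd (by norm_num) hk5
    interval_cases k <;> first | (left; rfl) | (right; rfl) | (exfalso; norm_num at hk5)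
  rcases hk15 with rfl | rfl
  · constructor
    · linear_combination hk
    · linear_combination hk - hY
  · -- k = 5 : derive a contradiction
    exfalso
    have e1 : a1 ^ 2 = b1 ^ 2 + b2 ^ 2 := by linarith [hY, hk]
    rcases hpar with ⟨ho1, ho2⟩ | ⟨ho1, ho2⟩
    · -- a1 odd, b1 even : use the coprime factorization (a2-2a1)(a2+2a1) = b2²
      have key : (a2 - 2 * a1) * (a2 + 2 * a1) = b2 ^ 2 := by
        linear_combination hY + e1
      have hg : Int.gcd (a2 - 2 * a1) (a2 + 2 * a1) = 1 := by
        apply gcd_one_of_no_prime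
        intro p pp hp1 hp2
        have pI : Prime (p : ℤ) := Int.prime_iff_natAbs_prime.mpr (by simpa using pp)
        have hp2a2 : (p : ℤ) ∣ 2 * a2 := by
          have := dvd_add hp1 hp2; rw [show 2 * a2 = a2 - 2 * a1 + (a2 + 2 * a1) by ring]; exact this
        have hp4a1 : (p : ℤ) ∣ 4 * a1 := by
          have := dvd_sub hp2 hp1; rw [show 4 * a1 = a2 + 2 * a1 - (a2 - 2 * a1) by ring]; exact this
        have hpne2 : p ≠ 2 := by
          rintro rfl
          obtain ⟨c, hc⟩ := hp1
          omega
        have hpdvd2 : ¬ ((p : ℤ) ∣ 2) := by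
          intro h2
          have : p ∣ 2 := by exact_mod_cast h2
          have := Nat.le_of_dvd (by norm_num) this
          have := pp.two_le
          omega
        have hpa2 : (p : ℤ) ∣ a2 := (pI.dvd_mul.mp hp2a2).resolve_left hpdvd2
        have hpa1 : (p : ℤ) ∣ a1 := by
          rcases pI.dvd_mul.mp hp4a1 with h4 | h
          · exfalso
            rcases pI.dvd_mul.mp (show (p:ℤ) ∣ 2 * 2 by exact_mod_cast h4) with h | h <;>
              exact hpdvd2 h
          · exact h
        have : (p : ℤ) ∣ (Int.gcd a1 a2 : ℤ) := Int.dvd_coe_gcd hpa1 hpa2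
        rw [copaa] at this
        have : p ∣ 1 := by exact_mod_cast this
        simp at this
        exact pp.one_lt.ne' this
      have hpos1 : 0 < a2 + 2 * a1 := by linarith
      have hpos2 : 0 < a2 - 2 * a1 := by
        rcases lt_trichotomy (a2 - 2 * a1) 0 with h | h | h
        · exfalso; nlinarith [sq_nonneg b2]
        · exfalso; rw [h] at key; simp at key; nlinarith
        · exact h
      obtain ⟨p0, hp0pos, hp0⟩ := pos_sq_of_coprime
        (Int.isCoprime_iff_gcd_eq_one.mpr hg) key hpos2
      obtain ⟨q0, hq0pos, hq0⟩ := pos_sq_of_coprime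
        (Int.isCoprime_iff_gcd_eq_one.mpr (by rwa [Int.gcd_comm] at hg))
        (show (a2 + 2 * a1) * (a2 - 2 * a1) = b2 ^ 2 by linear_combination key) hpos1
      -- p0, q0 odd
      have hp0odd : p0 % 2 = 1 := by
        rcases Int.even_or_odd p0 with ⟨t, ht⟩ | ⟨t, ht⟩
        · exfalso
          have : a2 - 2 * a1 = 4 * t ^ 2 := by rw [hp0, ht]; ring
          omega
        · omega
      have hq0odd : q0 % 2 = 1 := by
        rcases Int.even_or_odd q0 with ⟨t, ht⟩ | ⟨t, ht⟩
        · exfalso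
          have : a2 + 2 * a1 = 4 * t ^ 2 := by rw [hq0, ht]; ring
          omega
        · omega
      obtain ⟨kp, hkp⟩ := odd_sq_decomp p0 hp0odd
      obtain ⟨kq, hkq⟩ := odd_sq_decomp q0 hq0odd
      rw [hkp] at hp0; rw [hkq] at hq0
      omega
    · -- a1 even, b1 odd : a1² = b1² + b2² ≡ 2 (mod 8), impossible
      obtain ⟨k1, hk1⟩ := odd_sq_decomp b1 ho2
      obtain ⟨k2, hk2⟩ := odd_sq_decomp b2 hoddb2
      obtain ⟨q, r, hr, hq, _, heven⟩ := sq_decomp a1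
      rw [hk1, hk2, hq] at e1
      rcases heven ho1 with rfl | rfl <;> omega


lemma odd_of_dvd_odd {a n : ℤ} (h : a ∣ n) (hn : n % 2 = 1) : a % 2 = 1 := by
  rcases Int.even_or_odd a with ⟨t, ht⟩ | ⟨t, ht⟩
  · exfalso
    obtain ⟨c, hc⟩ := h
    have : n = 2 * (t * c) := by rw [hc, ht]; ring
    omega
  · omega

lemma odd_right_of_mul_odd {a b : ℤ} (h : (a * b) % 2 = 1) : b % 2 = 1 := by
  rcases Int.even_or_odd b with ⟨t, ht⟩ | ⟨t, ht⟩
  · exfalso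
    have : a * b = 2 * (a * t) := by rw [ht]; ring
    omega
  · omega

lemma even_right_of_mul_even {a b : ℤ} (h : (a * b) % 2 = 0) (ha : a % 2 = 1) : b % 2 = 0 := by
  rcases Int.even_or_odd b with ⟨t, ht⟩ | ⟨t, ht⟩
  · omega
  · exfalso
    obtain ⟨s, hs⟩ : ∃ s, a = 2 * s + 1 := ⟨(a - 1) / 2, by omega⟩
    have : a * b = 2 * (2 * s * t + s + t) + 1 := by rw [hs, ht]; ring
    omega

lemma split_stage (α β M N : ℤ) (hα : 0 < α) (hβ : 0 < β) (hM : 0 < M) (hN : 0 < N)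
    (hαodd : α % 2 = 1) (hβeven : β % 2 = 0) (hcop : Int.gcd α β = 1)
    (hNodd : N % 2 = 1) (hMNcop : Int.gcd M N = 1)
    (hMN : M * N = 2 * (α * β))
    (hsum : α ^ 2 - β ^ 2 = M ^ 2 + N ^ 2 ∨ β ^ 2 - α ^ 2 = M ^ 2 + N ^ 2) :
    ∃ u' e' v' z' : ℤ, Int.gcd u' e' = 1 ∧ 0 < e' ∧ e' ≤ max α β ∧ u' ≠ 0 ∧
      v' ^ 2 = u' ^ 2 + 4 * e' ^ 2 ∧ z' ^ 2 = u' ^ 2 + 5 * e' ^ 2 := by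
  -- N divides α * β
  have hN2 : IsCoprime N 2 := by
    obtain ⟨w, hw⟩ : ∃ w, N = 2 * w + 1 := ⟨(N - 1) / 2, by omega⟩
    exact ⟨1, -w, by rw [hw]; ring⟩
  have hNαβ : N ∣ α * β := hN2.dvd_of_dvd_mul_left ⟨M, by linarith [hMN]⟩
  obtain ⟨a2', b2', ha2', hb2', hsplit⟩ := exists_dvd_and_dvd_of_dvd_mul hNαβ
  have ha2'0 : a2' ≠ 0 := by rintro rfl; rw [zero_mul] at hsplit; omega
  have hb2'0 : b2' ≠ 0 := by rintro rfl; rw [mul_zero] at hsplit; omega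
  have ha2 : |a2'| ∣ α := (abs_dvd _ _).mpr ha2'
  have hb2 : |b2'| ∣ β := (abs_dvd _ _).mpr hb2'
  have hNsplit : N = |a2'| * |b2'| := by
    rw [← abs_mul, ← hsplit, abs_of_pos hN]
  have ha2pos : 0 < |a2'| := abs_pos.mpr ha2'0
  have hb2pos : 0 < |b2'| := abs_pos.mpr hb2'0
  obtain ⟨a1, ha1⟩ := ha2   -- α = |a2'| * a1
  obtain ⟨b1, hb1⟩ := hb2   -- β = |b2'| * b1
  have ha1pos : 0 < a1 := by nlinarith
  have hb1pos : 0 < b1 := by nlinarith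
  have hM2 : M = 2 * a1 * b1 := by
    have hc : M * N = (2 * a1 * b1) * N := by
      rw [hMN, ha1, hb1, hNsplit]; ring
    exact mul_right_cancel₀ (ne_of_gt hN) hc
  -- parities
  have ha2odd : |a2'| % 2 = 1 := odd_of_dvd_odd ⟨|b2'|, hNsplit⟩ hNodd
  have hb2odd : |b2'| % 2 = 1 := odd_of_dvd_odd ⟨|a2'|, by rw [hNsplit]; ring⟩ hNodd
  have ha1odd : a1 % 2 = 1 := odd_right_of_mul_odd (a := |a2'|) (by rw [← ha1]; exact hαodd)
  have hb1even : b1 % 2 = 0 :=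
    even_right_of_mul_even (a := |b2'|) (by rw [← hb1]; exact hβeven) hb2odd
  -- coprimalities
  have g1 : Int.gcd a1 |b2'| = 1 := gcd_one_of_dvd ⟨|a2'|, by rw [ha1]; ring⟩ ⟨b1, hb1⟩ hcop
  have g2 : Int.gcd |a2'| b1 = 1 := gcd_one_of_dvd ⟨a1, ha1⟩ ⟨|b2'|, by rw [hb1]; ring⟩ hcop
  have g3 : Int.gcd a1 |a2'| = 1 :=
    gcd_one_of_dvd ⟨2 * b1, by rw [hM2]; ring⟩ ⟨|b2'|, hNsplit⟩ hMNcop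
  have g4 : Int.gcd |b2'| b1 = 1 := by
    rw [Int.gcd_comm]
    exact gcd_one_of_dvd ⟨2 * a1, by rw [hM2]; ring⟩ ⟨|a2'|, by rw [hNsplit]; ring⟩ hMNcop
  rcases hsum with hs | hs
  · -- α² - β² = M² + N² : positive class
    have hE : a1 ^ 2 * (|a2'| ^ 2 - 4 * b1 ^ 2) = |b2'| ^ 2 * (|a2'| ^ 2 + b1 ^ 2) := by
      rw [ha1, hb1, hM2, hNsplit] at hs
      linear_combination hs
    obtain ⟨hA, hB⟩ := inner_step a1 |a2'| b1 |b2'| ha1pos hb2pos hE g1 g2 g3 ha2pos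
      ha2odd hb2odd (Or.inl ⟨ha1odd, hb1even⟩)
    refine ⟨|b2'|, b1, |a2'|, a1, g4, hb1pos, ?_, ne_of_gt hb2pos,
      by linarith [hA], by linarith [hB]⟩
    exact le_trans (Int.le_of_dvd hβ ⟨|b2'|, by rw [hb1]; ring⟩) (le_max_right α β)
  · -- β² - α² = M² + N² : negative class
    have hE : b1 ^ 2 * (|b2'| ^ 2 - 4 * a1 ^ 2) = |a2'| ^ 2 * (|b2'| ^ 2 + a1 ^ 2) := by
      rw [ha1, hb1, hM2, hNsplit] at hs
      linear_combination hs
    obtain ⟨hA, hB⟩ := inner_step b1 |b2'| a1 |a2'| hb1pos ha2pos hE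
      (by rwa [Int.gcd_comm] at g2) (by rwa [Int.gcd_comm] at g1)
      (by rwa [Int.gcd_comm] at g4) hb2pos hb2odd ha2odd
      (Or.inr ⟨hb1even, ha1odd⟩)
    refine ⟨|a2'|, a1, |b2'|, b1, by rwa [Int.gcd_comm] at g3, ha1pos, ?_, ne_of_gt ha2pos,
      by linarith [hA], by linarith [hB]⟩
    exact le_trans (Int.le_of_dvd hα ⟨|a2'|, by rw [ha1]; ring⟩) (le_max_left α β)

lemma step_quartic (α β u : ℤ) (hα : 0 < α) (hβ : 0 < β)
    (hαodd : α % 2 = 1) (hβeven : β % 2 = 0) (hcop : Int.gcd α β = 1)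
    (hu : u ^ 2 = α ^ 4 - 18 * α ^ 2 * β ^ 2 + β ^ 4) :
    ∃ u' e' v' z' : ℤ, Int.gcd u' e' = 1 ∧ 0 < e' ∧ e' ≤ max α β ∧ u' ≠ 0 ∧
      v' ^ 2 = u' ^ 2 + 4 * e' ^ 2 ∧ z' ^ 2 = u' ^ 2 + 5 * e' ^ 2 := by
  -- u is odd
  have huodd : u % 2 = 1 := by
    rcases Int.even_or_odd u with ⟨t, ht⟩ | ⟨t, ht⟩
    · exfalso
      obtain ⟨sa, hsa⟩ : ∃ s, α = 2 * s + 1 := ⟨(α - 1) / 2, by omega⟩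
      obtain ⟨sb, hsb⟩ : ∃ s, β = 2 * s := ⟨β / 2, by omega⟩
      have : 2 * (2 * t * t) = 2 * (8 * sa ^ 4 + 16 * sa ^ 3 - 144 * sa ^ 2 * sb ^ 2 +
          12 * sa ^ 2 - 144 * sa * sb ^ 2 + 4 * sa + 8 * sb ^ 4 - 36 * sb ^ 2) + 1 := by
        rw [ht, hsa, hsb] at hu; linear_combination hu
      omega
    · omega
  have hPT : PythagoreanTriple u (4 * (α * β)) (α ^ 2 - β ^ 2) := by
    show u * u + (4 * (α * β)) * (4 * (α * β)) = (α ^ 2 - β ^ 2) * (α ^ 2 - β ^ 2)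
    linear_combination hu
  have hgcd : Int.gcd u (4 * (α * β)) = 1 := by
    apply gcd_one_of_no_prime
    intro p pp hp1 hp2
    have pI : Prime (p : ℤ) := Int.prime_iff_natAbs_prime.mpr (by simpa using pp)
    have hpdvd2 : ¬ ((p : ℤ) ∣ 2) := by
      intro h2
      have hp2' : p ∣ 2 := by exact_mod_cast h2
      have hp2e : p = 2 := (Nat.prime_dvd_prime_iff_eq pp Nat.prime_two).mp hp2'
      subst hp2e
      obtain ⟨d, hd⟩ := hp1
      push_cast at hd
      omega
    have hpαβ : (p : ℤ) ∣ α * β := by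
      rcases pI.dvd_mul.mp hp2 with h4 | h
      · exfalso
        rcases pI.dvd_mul.mp (show (p : ℤ) ∣ 2 * 2 by exact_mod_cast h4) with h | h <;>
          exact hpdvd2 h
      · exact h
    have hfin : (p : ℤ) ∣ α ∧ (p : ℤ) ∣ β := by
      rcases pI.dvd_mul.mp hpαβ with hpa | hpb
      · refine ⟨hpa, pI.dvd_of_dvd_pow (n := 4) ?_⟩
        have h1 : β ^ 4 = u * u + α * (18 * α * β ^ 2 - α ^ 3) := by linear_combination -hu
        rw [h1]
        exact dvd_add (hp1.mul_left u) (hpa.mul_right _)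
      · refine ⟨pI.dvd_of_dvd_pow (n := 4) ?_, hpb⟩
        have h1 : α ^ 4 = u * u + β * (18 * α ^ 2 * β - β ^ 3) := by linear_combination -hu
        rw [h1]
        exact dvd_add (hp1.mul_left u) (hpb.mul_right _)
    have : (p : ℤ) ∣ (Int.gcd α β : ℤ) := Int.dvd_coe_gcd hfin.1 hfin.2
    rw [hcop] at this
    have : p ∣ 1 := by exact_mod_cast this
    simp at this
    exact pp.one_lt.ne' this
  obtain ⟨m, n, hmn, hz, hmncop, hmnpar⟩ := PythagoreanTriple.coprime_classification.mp ⟨hPT, hgcd⟩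
  rcases hmn with ⟨hueq, h4ab⟩ | ⟨hueq, _⟩
  swap
  · exfalso
    have : u = 2 * (m * n) := by rw [hueq]; ring
    omega
  -- |m| * |n| = 2 * (α * β), |m|² + |n|² = ±(α² - β²)
  have hmn0 : m * n = 2 * (α * β) := by linarith [h4ab]
  have hαβpos : 0 < α * β := mul_pos hα hβ
  have hm0 : m ≠ 0 := by rintro rfl; rw [zero_mul] at hmn0; linarith
  have hn0 : n ≠ 0 := by rintro rfl; rw [mul_zero] at hmn0; linarith
  have habs : |m| * |n| = 2 * (α * β) := by
    rw [← abs_mul, hmn0, abs_of_pos (by linarith : (0:ℤ) < 2 * (α * β))]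
  have hsq : |m| ^ 2 = m ^ 2 := sq_abs m
  have hsq' : |n| ^ 2 = n ^ 2 := sq_abs n
  have habscop : Int.gcd |m| |n| = 1 := by
    rwa [Int.gcd_def, Int.natAbs_abs, Int.natAbs_abs, ← Int.gcd_def]
  have hsum : α ^ 2 - β ^ 2 = |m| ^ 2 + |n| ^ 2 ∨ β ^ 2 - α ^ 2 = |m| ^ 2 + |n| ^ 2 := by
    rw [hsq, hsq']
    rcases hz with h | h
    · left; linarith
    · right; linarith
  -- exactly one of |m|, |n| is even; apply split_stage with the odd one as N
  rcases hmnpar with ⟨hme, hno⟩ | ⟨hmo, hne⟩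
  · -- m even, n odd : take M = |m|, N = |n|
    have hModd : |n| % 2 = 1 := by rcases abs_choice n with h | h <;> omega
    exact split_stage α β |m| |n| hα hβ (abs_pos.mpr hm0) (abs_pos.mpr hn0)
      hαodd hβeven hcop hModd habscop habs hsum
  · -- m odd, n even : take M = |n|, N = |m|
    have hModd : |m| % 2 = 1 := by rcases abs_choice m with h | h <;> omega
    refine split_stage α β |n| |m| hα hβ (abs_pos.mpr hn0) (abs_pos.mpr hm0)
      hαodd hβeven hcop hModd (by rwa [Int.gcd_comm] at habscop)
      (by rw [mul_comm]; exact habs) ?_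
    rcases hsum with h | h
    · left; linarith
    · right; linarith

set_option maxHeartbeats 1600000 in
/-- The system `v² = u² + 4e²`, `z² = u² + 5e²` has no solutions with `u·e ≠ 0`. -/
lemma LS1 : ∀ nn : ℕ, ∀ u e v z : ℤ, e.natAbs ≤ nn → e ≠ 0 → u ≠ 0 → Int.gcd u e = 1 →
    v ^ 2 = u ^ 2 + 4 * e ^ 2 → z ^ 2 = u ^ 2 + 5 * e ^ 2 → False := by
  intro nn
  induction nn using Nat.strong_induction_on with
  | _ nn IH =>
    intro u e v z hle he0 hu0 hcop hv hz
    -- normalize everything to be positive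
    wlog hupos : 0 < u generalizing u
    · exact this |u| (by simpa using hu0) (by rw [gcd_abs_left]; exact hcop)
        (by rwa [sq_abs]) (by rwa [sq_abs]) (abs_pos.mpr hu0)
    wlog hepos : 0 < e generalizing e
    · exact this |e| (by rwa [Int.natAbs_abs]) (by simpa using he0)
        (by rw [gcd_abs_right]; exact hcop)
        (by rwa [sq_abs]) (by rwa [sq_abs]) (abs_pos.mpr he0)
    wlog hvpos : 0 < v generalizing v
    · refine this |v| (by rwa [sq_abs]) (abs_pos.mpr ?_)
      rintro rfl
      norm_num at hv
      linarith [pow_pos hupos 2, pow_pos hepos 2]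
    wlog hzpos : 0 < z generalizing z
    · refine this |z| (by rwa [sq_abs]) (abs_pos.mpr ?_)
      rintro rfl
      norm_num at hz
      linarith [pow_pos hupos 2, pow_pos hepos 2]
    -- parity : u odd, e even
    have hueodd : u % 2 = 1 ∧ e % 2 = 0 := by
      rcases Int.even_or_odd u with ⟨s, hs⟩ | ⟨s, hs⟩ <;>
        rcases Int.even_or_odd e with ⟨t, ht⟩ | ⟨t, ht⟩
      · -- both even : contradicts gcd = 1
        exfalso
        have h2 : (2 : ℤ) ∣ Int.gcd u e := Int.dvd_coe_gcd ⟨s, by omega⟩ ⟨t, by omega⟩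
        rw [hcop] at h2
        norm_num at h2
      · -- u even, e odd
        exfalso
        rcases Int.even_or_odd s with ⟨r, hr⟩ | ⟨r, hr⟩
        · -- u ≡ 0 mod 4 : z² ≡ 5·e² mod 16, impossible
          obtain ⟨q, c, hrc, hqz, _, _⟩ := sq_decomp z
          obtain ⟨q2, c2, _, hqe, hoe, _⟩ := sq_decomp e
          obtain ⟨R, hR⟩ : ∃ R, u ^ 2 = 16 * R := ⟨r * r, by rw [hs, hr]; ring⟩
          rw [hqz, hqe, hR] at hz
          rcases hoe (by omega) with rfl | rfl <;> rcases hrc with rfl | rfl | rfl | rfl <;> omega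
        · -- u ≡ 2 mod 4
          have hveven : v % 2 = 0 := by
            rcases Int.even_or_odd v with ⟨w, hw⟩ | ⟨w, hw⟩
            · omega
            · exfalso
              obtain ⟨k1, hk1⟩ := odd_sq_decomp v (by omega)
              obtain ⟨k2, hk2⟩ := odd_sq_decomp e (by omega)
              obtain ⟨R, hR⟩ : ∃ R, u ^ 2 = 8 * R + 4 :=
                ⟨2 * (r * r) + 2 * r, by rw [hs, hr]; ring⟩
              rw [hk1, hk2, hR] at hv
              omega
          obtain ⟨w, hw⟩ : ∃ w, v = 2 * w := ⟨v / 2, by omega⟩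
          have hv1 : w ^ 2 = (2 * r + 1) ^ 2 + e ^ 2 := by
            have h4 : 4 * w ^ 2 = 4 * ((2 * r + 1) ^ 2 + e ^ 2) := by
              rw [hw, hs, hr] at hv
              linear_combination hv
            linarith
          obtain ⟨k1, hk1⟩ := odd_sq_decomp (2 * r + 1) (by omega)
          obtain ⟨k2, hk2⟩ := odd_sq_decomp e (by omega)
          obtain ⟨q, c, hrc, hq, _, _⟩ := sq_decomp w
          rw [hk1, hk2, hq] at hv1
          rcases hrc with rfl | rfl | rfl | rfl <;> omega
      · exact ⟨by omega, by omega⟩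
      · -- both odd : z² ≡ 6 mod 8
        exfalso
        obtain ⟨k1, hk1⟩ := odd_sq_decomp u (by omega)
        obtain ⟨k2, hk2⟩ := odd_sq_decomp e (by omega)
        obtain ⟨q, c, hrc, hq, _, _⟩ := sq_decomp z
        rw [hk1, hk2, hq] at hz
        rcases hrc with rfl | rfl | rfl | rfl <;> omega
    obtain ⟨huodd, heeven⟩ := hueodd
    obtain ⟨f, hf⟩ : ∃ f, e = 2 * f := ⟨e / 2, by omega⟩
    have hfpos : 0 < f := by omega
    -- v, z are odd
    have hvodd : v % 2 = 1 := by
      rcases Int.even_or_odd v with ⟨w, hw⟩ | ⟨w, hw⟩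
      · exfalso
        obtain ⟨k1, hk1⟩ := odd_sq_decomp u huodd
        obtain ⟨W, hW⟩ : ∃ W, v ^ 2 = 4 * W := ⟨w * w, by rw [hw]; ring⟩
        obtain ⟨E, hE⟩ : ∃ E, e ^ 2 = 4 * E := ⟨f * f, by rw [hf]; ring⟩
        rw [hW, hk1, hE] at hv
        omega
      · omega
    have hzodd : z % 2 = 1 := by
      rcases Int.even_or_odd z with ⟨w, hw⟩ | ⟨w, hw⟩
      · exfalso
        obtain ⟨k1, hk1⟩ := odd_sq_decomp u huodd
        obtain ⟨W, hW⟩ : ∃ W, z ^ 2 = 4 * W := ⟨w * w, by rw [hw]; ring⟩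
        obtain ⟨E, hE⟩ : ∃ E, e ^ 2 = 4 * E := ⟨f * f, by rw [hf]; ring⟩
        rw [hW, hk1, hE] at hz
        omega
      · omega
    -- z > v
    have hzv : v < z := by
      rcases lt_or_ge v z with h | h
      · exact h
      · exfalso
        have h1 : z * z ≤ v * v :=
          mul_le_mul h h (le_of_lt hzpos) (le_of_lt hvpos)
        have h2 : z ^ 2 - v ^ 2 = e ^ 2 := by linear_combination hz - hv
        have h3 : z ^ 2 ≤ v ^ 2 := by rw [pow_two, pow_two]; exact h1
        linarith [pow_pos hepos 2]
    -- gcd(z, v) = 1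
    have hgzv : Int.gcd z v = 1 := by
      apply gcd_one_of_no_prime
      intro p pp hp1 hp2
      have pI : Prime (p : ℤ) := Int.prime_iff_natAbs_prime.mpr (by simpa using pp)
      have hpe : (p : ℤ) ∣ e := by
        refine pI.dvd_of_dvd_pow (n := 2) ?_
        have h1 : e ^ 2 = z * z - v * v := by linear_combination hv - hz
        rw [h1]
        exact dvd_sub (hp1.mul_left z) (hp2.mul_left v)
      have hpu : (p : ℤ) ∣ u := by
        refine pI.dvd_of_dvd_pow (n := 2) ?_
        have h1 : u ^ 2 = v * v - (4 * e) * e := by linear_combination -hv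
        rw [h1]
        exact dvd_sub (hp2.mul_left v) (hpe.mul_left (4 * e))
      have hdg : (p : ℤ) ∣ (Int.gcd u e : ℤ) := Int.dvd_coe_gcd hpu hpe
      rw [hcop] at hdg
      have : p ∣ 1 := by exact_mod_cast hdg
      simp at this
      exact pp.one_lt.ne' this
    -- factor (z - v)(z + v) = 4 f²
    obtain ⟨P, hP⟩ : ∃ P, z - v = 2 * P := ⟨(z - v) / 2, by omega⟩
    obtain ⟨Q, hQ⟩ : ∃ Q, z + v = 2 * Q := ⟨(z + v) / 2, by omega⟩
    have hPQ : P * Q = f ^ 2 := by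
      have h4 : 4 * (P * Q) = 4 * f ^ 2 := by
        have h1 : (2 * P) * (2 * Q) = z ^ 2 - v ^ 2 := by rw [← hP, ← hQ]; ring
        have h2 : z ^ 2 - v ^ 2 = (2 * f) ^ 2 := by rw [← hf]; linear_combination hz - hv
        rw [h2] at h1
        linear_combination h1
      linarith
    have hPpos : 0 < P := by omega
    have hQpos : 0 < Q := by omega
    have hPQcop : Int.gcd P Q = 1 := by
      apply gcd_one_of_no_prime
      intro p pp hp1 hp2
      have hpz : (p : ℤ) ∣ z := by
        have hzPQ : z = P + Q := by omega
        rw [hzPQ]; exact dvd_add hp1 hp2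
      have hpv : (p : ℤ) ∣ v := by
        have hvPQ : v = Q - P := by omega
        rw [hvPQ]; exact dvd_sub hp2 hp1
      have hdg : (p : ℤ) ∣ (Int.gcd z v : ℤ) := Int.dvd_coe_gcd hpz hpv
      rw [hgzv] at hdg
      have : p ∣ 1 := by exact_mod_cast hdg
      simp at this
      exact pp.one_lt.ne' this
    obtain ⟨s, hspos, hs⟩ := pos_sq_of_coprime (Int.isCoprime_iff_gcd_eq_one.mpr hPQcop) hPQ hPpos
    obtain ⟨t, htpos, ht⟩ := pos_sq_of_coprime
      (Int.isCoprime_iff_gcd_eq_one.mpr (by rwa [Int.gcd_comm] at hPQcop))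
      (show Q * P = f ^ 2 by rw [mul_comm]; exact hPQ) hQpos
    -- f = s t
    have hfst : f = s * t := by
      have h1 : f ^ 2 = (s * t) ^ 2 := by rw [← hPQ, hs, ht]; ring
      have h2 : (f - s * t) * (f + s * t) = 0 := by linear_combination h1
      rcases mul_eq_zero.mp h2 with h | h
      · linarith
      · exfalso; linarith [mul_pos hspos htpos]
    -- v = t² - s², u² = t⁴ - 18 t² s² + s⁴
    have hveq : v = t ^ 2 - s ^ 2 := by
      have hvPQ : v = Q - P := by omega
      rw [hvPQ, hs, ht]
    have hu2 : u ^ 2 = t ^ 4 - 18 * t ^ 2 * s ^ 2 + s ^ 4 := by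
      rw [hveq, hf, hfst] at hv
      linear_combination -hv
    have hstcop : Int.gcd t s = 1 := by
      rw [Int.gcd_comm]
      exact gcd_one_of_dvd ⟨s, by rw [hs]; ring⟩ ⟨t, by rw [ht]; ring⟩ hPQcop
    -- t, s have opposite parity (since v is odd)
    have hpar : (t % 2 = 1 ∧ s % 2 = 0) ∨ (t % 2 = 0 ∧ s % 2 = 1) := by
      rcases Int.even_or_odd t with ⟨a, ha⟩ | ⟨a, ha⟩ <;>
        rcases Int.even_or_odd s with ⟨b, hb⟩ | ⟨b, hb⟩
      · exfalso
        have h2 : (2 : ℤ) ∣ Int.gcd t s := Int.dvd_coe_gcd ⟨a, by omega⟩ ⟨b, by omega⟩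
        rw [hstcop] at h2
        norm_num at h2
      · right; exact ⟨by omega, by omega⟩
      · left; exact ⟨by omega, by omega⟩
      · exfalso
        obtain ⟨k1, hk1⟩ := odd_sq_decomp t (by omega)
        obtain ⟨k2, hk2⟩ := odd_sq_decomp s (by omega)
        rw [hk1, hk2] at hveq
        omega
    -- the new, smaller solution
    have hnew : ∃ u' e' v' z' : ℤ, Int.gcd u' e' = 1 ∧ 0 < e' ∧ e' ≤ max t s ∧ u' ≠ 0 ∧
        v' ^ 2 = u' ^ 2 + 4 * e' ^ 2 ∧ z' ^ 2 = u' ^ 2 + 5 * e' ^ 2 := by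
      rcases hpar with ⟨hto, hse⟩ | ⟨hte, hso⟩
      · exact step_quartic t s u htpos hspos hto hse hstcop hu2
      · obtain ⟨u', e', v', z', h1, h2, h3, h4, h5, h6⟩ :=
          step_quartic s t u hspos htpos hso hte
            (by rwa [Int.gcd_comm] at hstcop) (by linear_combination hu2)
        exact ⟨u', e', v', z', h1, h2, by rw [max_comm] at h3; exact h3, h4, h5, h6⟩
    obtain ⟨u', e', v', z', h1, h2, h3, h4, h5, h6⟩ := hnew
    -- size decrease : e' ≤ max t s ≤ s * t = f < e
    have hbound : e' < e := by
      have hmax : max t s ≤ s * t := by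
        rcases max_cases t s with ⟨hm, _⟩ | ⟨hm, _⟩ <;> rw [hm]
        · exact le_mul_of_one_le_left (le_of_lt htpos) (by omega)
        · exact le_mul_of_one_le_right (le_of_lt hspos) (by omega)
      have hstf : s * t = f := hfst.symm
      omega
    exact IH e'.natAbs (by omega) u' e' v' z' le_rfl (ne_of_gt h2) h4 h1 h5 h6

/-- The quartic `c² = a⁴ - 18a²b² + b⁴` has no coprime solutions with `a·b ≠ 0`. -/
lemma LA (a b c : ℤ) (ha : a ≠ 0) (hb : b ≠ 0) (hcop : Int.gcd a b = 1)
    (h : c ^ 2 = a ^ 4 - 18 * a ^ 2 * b ^ 2 + b ^ 4) : False := by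
  -- normalize to positive a, b
  have habs4 : ∀ x : ℤ, |x| ^ 4 = x ^ 4 := fun x => by
    rw [show (4 : ℕ) = 2 * 2 from rfl, pow_mul, pow_mul, sq_abs]
  have habs2 : ∀ x : ℤ, |x| ^ 2 = x ^ 2 := fun x => sq_abs x
  wlog hapos : 0 < a generalizing a
  · exact this |a| (by simpa using ha) (by rw [gcd_abs_left]; exact hcop)
      (by rw [habs4, habs2]; exact h) (abs_pos.mpr ha)
  wlog hbpos : 0 < b generalizing b
  · exact this |b| (by simpa using hb) (by rw [gcd_abs_right]; exact hcop)
      (by rw [habs4, habs2]; exact h) (abs_pos.mpr hb)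
  -- parity analysis
  rcases Int.even_or_odd a with ⟨sa, hsa⟩ | ⟨sa, hsa⟩ <;>
    rcases Int.even_or_odd b with ⟨sb, hsb⟩ | ⟨sb, hsb⟩
  · -- both even : contradicts coprimality
    have h2 : (2 : ℤ) ∣ Int.gcd a b := Int.dvd_coe_gcd ⟨sa, by omega⟩ ⟨sb, by omega⟩
    rw [hcop] at h2
    norm_num at h2
  · -- a even, b odd : use step_quartic with α = b, β = a
    obtain ⟨u', e', v', z', h1, h2, _, h4, h5, h6⟩ :=
      step_quartic b a |c| hbpos hapos (by omega) (by omega)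
        (by rwa [Int.gcd_comm] at hcop) (by rw [habs2]; linear_combination h)
    exact LS1 e'.natAbs u' e' v' z' le_rfl (ne_of_gt h2) h4 h1 h5 h6
  · -- a odd, b even : use step_quartic with α = a, β = b
    obtain ⟨u', e', v', z', h1, h2, _, h4, h5, h6⟩ :=
      step_quartic a b |c| hapos hbpos (by omega) (by omega) hcop
        (by rw [habs2]; exact h)
    exact LS1 e'.natAbs u' e' v' z' le_rfl (ne_of_gt h2) h4 h1 h5 h6
  · -- both odd : impossible mod 64
    have key : c ^ 2 = (a ^ 2 - b ^ 2) ^ 2 - (4 * (a * b)) ^ 2 := by linear_combination h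
    obtain ⟨k1, hk1⟩ := odd_sq_decomp a (by omega)
    obtain ⟨k2, hk2⟩ := odd_sq_decomp b (by omega)
    obtain ⟨k3, hk3⟩ := odd_sq_decomp (a * b)
      (by obtain ⟨l, hl⟩ : ∃ l, a * b = 2 * l + 1 :=
            ⟨2 * sa * sb + sa + sb, by rw [hsa, hsb]; ring⟩
          omega)
    have hd : a ^ 2 - b ^ 2 = 8 * (k1 - k2) := by omega
    have key2 : c ^ 2 = 64 * (k1 - k2) ^ 2 - 16 * (8 * k3 + 1) := by
      rw [key, hd, show (4 * (a * b)) ^ 2 = 16 * (a * b) ^ 2 from by ring, hk3]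
      ring
    -- now pure parity arithmetic on c
    obtain ⟨D, hD⟩ : ∃ D, c ^ 2 = 64 * D - 128 * k3 - 16 := ⟨(k1 - k2) ^ 2, by rw [key2]; ring⟩
    rcases Int.even_or_odd c with ⟨c1, hc1⟩ | ⟨c1, hc1⟩
    · obtain ⟨C1, hC1⟩ : ∃ C1, c ^ 2 = 4 * C1 ∧ True := ⟨c1 * c1, by rw [hc1]; ring, trivial⟩
      obtain ⟨hC1, -⟩ := hC1
      -- c1² = C1, and 4 C1 = 64 D - 128 k3 - 16, so C1 = 16 D - 32 k3 - 4
      have hC1eq : c1 * c1 = 16 * D - 32 * k3 - 4 := by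
        have : 4 * (c1 * c1) = 4 * (16 * D - 32 * k3 - 4) := by
          have hcc : c ^ 2 = 4 * (c1 * c1) := by rw [hc1]; ring
          omega
        omega
      rcases Int.even_or_odd c1 with ⟨c2, hc2⟩ | ⟨c2, hc2⟩
      · have h4 : 4 * (c2 * c2) = 16 * D - 32 * k3 - 4 := by rw [hc2] at hC1eq; linarith [hC1eq]
        have hc2eq : c2 * c2 = 4 * D - 8 * k3 - 1 := by omega
        rcases Int.even_or_odd c2 with ⟨c3, hc3⟩ | ⟨c3, hc3⟩
        · have : 4 * (c3 * c3) = 4 * D - 8 * k3 - 1 := by rw [hc3] at hc2eq; linarith [hc2eq]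
          omega
        · have : 4 * (c3 * c3 + c3) + 1 = 4 * D - 8 * k3 - 1 := by
            rw [hc3] at hc2eq; linarith [hc2eq]
          omega
      · have : 4 * (c2 * c2 + c2) + 1 = 16 * D - 32 * k3 - 4 := by
          rw [hc2] at hC1eq; linarith [hC1eq]
        omega
    · obtain ⟨k4, hk4⟩ := odd_sq_decomp c (by omega)
      omega

/-- No rational point on the curve has `y ≠ 0`. -/
lemma no_point (x y : ℚ) (h : y ^ 2 = x ^ 3 + 9 * x ^ 2 + 20 * x) (hy : y ≠ 0) : False := by
  have hx : x ≠ 0 := by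
    rintro rfl
    norm_num at h
    exact hy h
  have hx4 : x ≠ -4 := by
    rintro rfl
    norm_num at h
    exact hy h
  have hx5 : x ≠ -5 := by
    rintro rfl
    norm_num at h
    exact hy h
  set X : ℚ := (x ^ 2 + 9 * x + 20) / x with hXdef
  set Y : ℚ := y * (x ^ 2 - 20) / x ^ 2 with hYdef
  have hXnum : x ^ 2 + 9 * x + 20 ≠ 0 := by
    intro h0
    have : (x + 4) * (x + 5) = 0 := by linear_combination h0
    rcases mul_eq_zero.mp this with h1 | h1
    · exact hx4 (by linarith)
    · exact hx5 (by linarith)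
  have hX0 : X ≠ 0 := div_ne_zero hXnum hx
  have hE' : Y ^ 2 = X ^ 3 - 18 * X ^ 2 + X := by
    rw [hXdef, hYdef]
    field_simp
    linear_combination ((x ^ 2 - 20) ^ 2) * h
  -- pass to integers
  set p : ℤ := X.num with hpdef
  set qd : ℤ := (X.den : ℤ) with hqdef
  have hqpos : 0 < qd := by rw [hqdef]; exact_mod_cast X.pos
  have hdQ : ((X.den : ℤ) : ℚ) ≠ 0 := by
    simp [X.den_nz]
  have hX : (p : ℚ) / (qd : ℚ) = X := by
    rw [hpdef, hqdef]; push_cast; exact Rat.num_div_den X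
  have hgcdpq : Int.gcd p qd = 1 := by
    have := X.reduced
    simpa [Int.gcd, hpdef, hqdef] using this
  have hp0 : p ≠ 0 := Rat.num_ne_zero.mpr hX0
  set N : ℚ := Y * ((qd : ℚ)) ^ 2 with hNdef
  have key : N * N = ((p * qd * (p ^ 2 - 18 * p * qd + qd ^ 2) : ℤ) : ℚ) := by
    have h1 : N * N = Y ^ 2 * ((qd : ℚ)) ^ 4 := by rw [hNdef]; ring
    rw [h1, hE', ← hX]
    have hq0 : (qd : ℚ) ≠ 0 := by rw [hqdef]; exact hdQ
    field_simp
    push_cast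
    ring
  have hNden : N.den = 1 := by
    have h2 := Rat.mul_self_den N
    rw [key, Rat.den_intCast] at h2
    exact Nat.eq_one_of_mul_eq_one_right h2.symm
  have hNnum : ((N.num : ℚ)) = N := by rw [← Rat.num_div_den N, hNden]; simp
  have hZ : N.num * N.num = p * qd * (p ^ 2 - 18 * p * qd + qd ^ 2) := by
    have := key
    rw [← hNnum] at this
    exact_mod_cast this
  set M : ℤ := p ^ 2 - 18 * p * qd + qd ^ 2 with hMdef
  have hpq : IsCoprime p qd := Int.isCoprime_iff_gcd_eq_one.mpr hgcdpq
  have hM0 : M ≠ 0 := by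
    intro h0
    rw [hMdef] at h0
    have hdvd1 : p ∣ qd ^ 2 := ⟨18 * qd - p, by linear_combination h0⟩
    have hdvd2 : qd ∣ p ^ 2 := ⟨18 * p - qd, by linear_combination h0⟩
    have hup : IsUnit p := (hpq.pow_right (n := 2)).isUnit_of_dvd' (dvd_refl p) hdvd1
    have huq : IsUnit qd := (hpq.symm.pow_right (n := 2)).isUnit_of_dvd' (dvd_refl qd) hdvd2
    have hq1 : qd = 1 := by
      rcases Int.isUnit_iff.mp huq with h1 | h1
      · exact h1
      · omega
    rcases Int.isUnit_iff.mp hup with h1 | h1 <;> rw [h1, hq1] at h0 <;> norm_num at h0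
  have copPM : IsCoprime p M := by
    have h1 := (hpq.pow_right (n := 2)).add_mul_left_right (p - 18 * qd)
    have h2 : qd ^ 2 + p * (p - 18 * qd) = M := by rw [hMdef]; ring
    rwa [h2] at h1
  have copQM : IsCoprime qd M := by
    have h1 := (hpq.symm.pow_right (n := 2)).add_mul_left_right (qd - 18 * p)
    have h2 : p ^ 2 + qd * (qd - 18 * p) = M := by rw [hMdef]; ring
    rwa [h2] at h1
  -- extract squares
  obtain ⟨a, hpa | hpa⟩ := Int.sq_of_isCoprime (hpq.mul_right copPM)
    (show p * (qd * M) = N.num ^ 2 by rw [pow_two]; linear_combination -hZ)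
  swap
  · -- p = -a² : impossible by sign
    have ha0 : a ≠ 0 := by rintro rfl; simp at hpa; exact hp0 hpa
    have hpneg : p < 0 := by
      rcases lt_trichotomy p 0 with h1 | h1 | h1
      · exact h1
      · exact absurd h1 hp0
      · exfalso; nlinarith [sq_nonneg a]
    have hMpos : 0 < M := by
      rw [hMdef]
      nlinarith [mul_pos (neg_pos.mpr hpneg) hqpos, sq_nonneg p, mul_pos hqpos hqpos]
    have hneg : p * (qd * M) < 0 := mul_neg_of_neg_of_pos hpneg (mul_pos hqpos hMpos)
    nlinarith [mul_self_nonneg N.num]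
  have ha0 : a ≠ 0 := by rintro rfl; simp at hpa; exact hp0 hpa
  obtain ⟨b, hbpos, hqb⟩ := pos_sq_of_coprime (hpq.symm.mul_right copQM)
    (show qd * (p * M) = N.num ^ 2 by rw [pow_two]; linear_combination -hZ) hqpos
  obtain ⟨c, hMc | hMc⟩ := Int.sq_of_isCoprime ((copPM.symm.mul_right copQM.symm).symm.symm :
      IsCoprime M (p * qd))
    (show M * (p * qd) = N.num ^ 2 by rw [pow_two]; linear_combination -hZ)
  swap
  · -- M = -c² : impossible
    have habc : N.num * N.num = -((a * b * c) ^ 2) := by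
      rw [hZ, hpa, hqb, hMc]; ring
    have h1 : (a * b * c) ^ 2 = 0 := by
      nlinarith [mul_self_nonneg N.num, sq_nonneg (a * b * c)]
    have h2 : a * b * c = 0 := by
      exact pow_eq_zero_iff two_ne_zero |>.mp h1
    rcases mul_eq_zero.mp h2 with h3 | h3
    · rcases mul_eq_zero.mp h3 with h4 | h4
      · exact ha0 h4
      · exact (ne_of_gt hbpos) h4
    · rw [h3] at hMc; norm_num at hMc; exact hM0 hMc
  -- final contradiction via LA
  have hc0 : c ≠ 0 := by rintro rfl; simp at hMc; exact hM0 hMc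
  have hab : Int.gcd a b = 1 := by
    apply gcd_one_of_no_prime
    intro pr pp h1 h2
    have hpp : (pr : ℤ) ∣ p := by rw [hpa]; exact dvd_pow h1 two_ne_zero
    have hpq' : (pr : ℤ) ∣ qd := by rw [hqb]; exact dvd_pow h2 two_ne_zero
    have hdg : (pr : ℤ) ∣ (Int.gcd p qd : ℤ) := Int.dvd_coe_gcd hpp hpq'
    rw [hgcdpq] at hdg
    have : pr ∣ 1 := by exact_mod_cast hdg
    simp at this
    exact pp.one_lt.ne' this
  refine LA a b c ha0 (ne_of_gt hbpos) hab ?_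
  have h5 : p ^ 2 - 18 * p * qd + qd ^ 2 = c ^ 2 := by rw [← hMdef]; exact hMc
  rw [hpa, hqb] at h5
  linear_combination -h5

/-- The set of affine rational points of the elliptic curve
`O₁₀ : y² = x³ + 9x² + 20x` over `ℚ` consists of exactly three points. -/
theorem stmt_5 :
    {p : ℚ × ℚ | p.2 ^ 2 = p.1 ^ 3 + 9 * p.1 ^ 2 + 20 * p.1} = {(0, 0), (-4, 0), (-5, 0)} := by
  ext ⟨x, y⟩
  simp only [Set.mem_setOf_eq, Set.mem_insert_iff, Set.mem_singleton_iff, Prod.mk.injEq]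
  constructor
  · intro h
    by_cases hy : y = 0
    · subst hy
      have hz : x * (x + 4) * (x + 5) = 0 := by linear_combination -h
      rcases mul_eq_zero.mp hz with h1 | h1
      · rcases mul_eq_zero.mp h1 with h2 | h2
        · exact Or.inl ⟨h2, rfl⟩
        · exact Or.inr (Or.inl ⟨by linarith, rfl⟩)
      · exact Or.inr (Or.inr ⟨by linarith, rfl⟩)
    · exact absurd (no_point x y h hy) not_false
  · rintro (⟨rfl, rfl⟩ | ⟨rfl, rfl⟩ | ⟨rfl, rfl⟩) <;> norm_num
end
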